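/- arXiv:1011.3636 — 5 statements merged into one kernel-verified Lean document; each statement's English description precedes it below -/
import Mathlib

section
/- Let A, B be n×n Hermitian matrices and for a Hermitian matrix M let 1_{M,q} be 1 if M is nondegenerate of signature (n−q, q) and 0 otherwise. Then for every q, |1_{A,q} det A − 1_{B,q} det B| ≤ ‖A − B‖ · Σ_{i=0}^{n-1} ‖A‖^i ‖B‖^{n-1-i}. -/
open scoped Classical

/-- The Hermitian (L²) operator norm of a complex matrix. -/
noncomputable def hermOpNorm {n : ℕ} (A : Matrix (Fin n) (Fin n) ℂ) : ℝ :=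
  ‖Matrix.toEuclideanCLM (𝕜 := ℂ) A‖

/-- `1` if the Hermitian matrix is nondegenerate of signature `(n-q, q)`, i.e. has exactly `q`
negative eigenvalues, `n-q` positive ones and no zero eigenvalue; `0` otherwise. -/
noncomputable def indSig {n : ℕ} (q : ℕ) {A : Matrix (Fin n) (Fin n) ℂ}
    (hA : A.IsHermitian) : ℂ :=
  if (∀ i, hA.eigenvalues i ≠ 0) ∧
      (Finset.univ.filter (fun i => hA.eigenvalues i < 0)).card = q then 1 else 0

open scoped ComplexOrder
open Matrix Finset

noncomputable def colNorm {n : ℕ} (M : Matrix (Fin n) (Fin n) ℂ) (j : Fin n) : ℝ :=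
  ‖(Matrix.toEuclideanCLM (𝕜 := ℂ) M) (EuclideanSpace.single j 1)‖

lemma colNorm_nonneg {n : ℕ} (M : Matrix (Fin n) (Fin n) ℂ) (j : Fin n) : 0 ≤ colNorm M j :=
  norm_nonneg _

lemma colNorm_eq {n : ℕ} (M : Matrix (Fin n) (Fin n) ℂ) (j : Fin n) :
    colNorm M j = Real.sqrt (∑ i, Complex.normSq (M i j)) := by
  have h2 : ∀ x : EuclideanSpace ℂ (Fin n), ‖x‖ = Real.sqrt (∑ i, Complex.normSq (x i)) := by
    intro x; simp [EuclideanSpace.norm_eq, Complex.sq_norm]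
  rw [colNorm, h2]
  congr 1
  refine Finset.sum_congr rfl fun i _ => ?_
  congr 1
  have := congrFun (Matrix.ofLp_toEuclideanCLM (𝕜 := ℂ) M (EuclideanSpace.single j 1)) i
  rw [this]
  simp [Matrix.mulVec_single]

lemma colNorm_sq {n : ℕ} (M : Matrix (Fin n) (Fin n) ℂ) (j : Fin n) :
    colNorm M j ^ 2 = ∑ i, Complex.normSq (M i j) := by
  rw [colNorm_eq, Real.sq_sqrt (Finset.sum_nonneg fun i _ => Complex.normSq_nonneg _)]

lemma trace_eq_sum_eigs {n : ℕ} {A : Matrix (Fin n) (Fin n) ℂ} (hA : A.IsHermitian) :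
    A.trace = ∑ i, (hA.eigenvalues i : ℂ) := by
  conv_lhs => rw [hA.spectral_theorem]
  rw [Unitary.conjStarAlgAut_apply, Matrix.trace_mul_cycle, Unitary.coe_star_mul_self, one_mul, Matrix.trace_diagonal]
  simp

lemma amgm {n : ℕ} (hn : 0 < n) (μ : Fin n → ℝ) (hμ : ∀ i, 0 ≤ μ i)
    (htr : ∑ i, μ i = n) : ∏ i, μ i ≤ 1 := by
  have hw : ∑ _i : Fin n, (1 / n : ℝ) = 1 := by simp; field_simp
  have h := Real.geom_mean_le_arith_mean_weighted Finset.univ (fun _ => (1/n : ℝ)) μ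
    (fun i _ => by positivity) hw (fun i _ => hμ i)
  have hsum : ∑ i, (1/n : ℝ) * μ i = 1 := by rw [← Finset.mul_sum, htr]; field_simp
  rw [hsum] at h
  have hx : 0 ≤ ∏ i, μ i ^ (1/n : ℝ) := Finset.prod_nonneg fun i _ => Real.rpow_nonneg (hμ i) _
  calc ∏ i, μ i = (∏ i, μ i ^ (1/n : ℝ)) ^ n := by
        rw [← Finset.prod_pow]
        refine Finset.prod_congr rfl fun i _ => ?_
        rw [← Real.rpow_natCast (μ i ^ (1/n:ℝ)) n, ← Real.rpow_mul (hμ i),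
          one_div, inv_mul_cancel₀ (by exact_mod_cast hn.ne' : (n:ℝ) ≠ 0), Real.rpow_one]
    _ ≤ 1 ^ n := pow_le_pow_left₀ hx h n
    _ = 1 := one_pow n

lemma hadamard {n : ℕ} (M : Matrix (Fin n) (Fin n) ℂ) :
    ‖M.det‖ ≤ ∏ j, colNorm M j := by
  rcases Nat.eq_zero_or_pos n with hn | hn
  · subst hn; simp [Matrix.det_fin_zero]
  by_cases hzero : ∃ j, ∀ i, M i j = 0
  · obtain ⟨j, hj⟩ := hzero
    rw [Matrix.det_eq_zero_of_column_eq_zero j hj]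
    simpa using Finset.prod_nonneg fun j _ => colNorm_nonneg M j
  push_neg at hzero
  have hc : ∀ j, 0 < colNorm M j := by
    intro j
    obtain ⟨i, hi⟩ := hzero j
    rw [colNorm_eq]
    apply Real.sqrt_pos.2
    apply Finset.sum_pos' (fun i _ => Complex.normSq_nonneg _)
    exact ⟨i, Finset.mem_univ i, Complex.normSq_pos.2 hi⟩
  set c : Fin n → ℝ := fun j => colNorm M j with hcdef
  set G : Matrix (Fin n) (Fin n) ℂ := Mᴴ * M with hGdef
  have hG : G.PosSemidef := Matrix.posSemidef_conjTranspose_mul_self M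
  have hGjj : ∀ j, G j j = ((c j ^ 2 : ℝ) : ℂ) := by
    intro j
    rw [hGdef, Matrix.mul_apply]
    have : (c j ^ 2 : ℝ) = ∑ i, Complex.normSq (M i j) := colNorm_sq M j
    rw [this]
    push_cast
    refine Finset.sum_congr rfl fun i _ => ?_
    rw [Matrix.conjTranspose_apply, Complex.normSq_eq_conj_mul_self]
    rfl
  set D : Matrix (Fin n) (Fin n) ℂ := Matrix.diagonal (fun j => ((c j)⁻¹ : ℝ)) with hDdef
  have hstar : (star fun j => (((c j)⁻¹ : ℝ) : ℂ)) = fun j => (((c j)⁻¹ : ℝ) : ℂ) := by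
    funext j; simp [Complex.star_def, Complex.conj_ofReal]
  have hDH : Dᴴ = D := by rw [hDdef, Matrix.diagonal_conjTranspose, hstar]
  have hH : (D * G * D).PosSemidef := by
    have := hG.conjTranspose_mul_mul_same (B := D)
    rwa [hDH] at this
  set H := D * G * D with hHdef
  have hHjj : ∀ j, H j j = 1 := by
    intro j
    rw [hHdef, Matrix.mul_diagonal, Matrix.diagonal_mul, hGjj]
    have hcj : ((c j : ℂ)) ≠ 0 := by
      exact_mod_cast Complex.ofReal_ne_zero.2 (hc j).ne'
    push_cast
    field_simp
  -- trace H = n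
  have htrH : H.trace = (n : ℂ) := by
    rw [Matrix.trace]
    simp only [Matrix.diag_apply, hHjj]
    simp
  -- eigenvalues
  have htr2 := trace_eq_sum_eigs hH.1
  rw [htrH] at htr2
  have hμsum : ∑ i, hH.1.eigenvalues i = n := by
    have : ((∑ i, hH.1.eigenvalues i : ℝ) : ℂ) = ((n:ℝ) : ℂ) := by
      push_cast
      rw [← htr2]
    exact_mod_cast this
  have hμnn : ∀ i, 0 ≤ hH.1.eigenvalues i := hH.eigenvalues_nonneg
  have hprod : ∏ i, hH.1.eigenvalues i ≤ 1 := amgm hn _ hμnn hμsum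
  -- det computations
  have hdetH : H.det = ((∏ i, hH.1.eigenvalues i : ℝ) : ℂ) := by
    rw [hH.1.det_eq_prod_eigenvalues]; push_cast; rfl
  have hdetD : D.det = ((∏ j, (c j)⁻¹ : ℝ) : ℂ) := by
    rw [hDdef, Matrix.det_diagonal]; push_cast; rfl
  have hdetG : G.det = ((Complex.normSq M.det : ℝ) : ℂ) := by
    rw [hGdef, Matrix.det_mul, Matrix.det_conjTranspose]
    rw [Complex.normSq_eq_conj_mul_self]
    rfl
  have hdetH2 : H.det = D.det * G.det * D.det := by
    rw [hHdef, Matrix.det_mul, Matrix.det_mul]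
  rw [hdetH, hdetD, hdetG] at hdetH2
  have hreal : (∏ i, hH.1.eigenvalues i : ℝ)
      = (∏ j, (c j)⁻¹) * Complex.normSq M.det * (∏ j, (c j)⁻¹) := by
    exact_mod_cast hdetH2
  -- conclude
  have hcprod : 0 < ∏ j, c j := Finset.prod_pos fun j _ => hc j
  have hkey : Complex.normSq M.det ≤ (∏ j, c j) ^ 2 := by
    have hinv : (∏ j, (c j)⁻¹) = (∏ j, c j)⁻¹ := by
      rw [← Finset.prod_inv_distrib]
    rw [hinv] at hreal
    have := hprod
    rw [hreal] at this
    calc Complex.normSq M.det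
        = ((∏ j, c j)⁻¹ * Complex.normSq M.det * (∏ j, c j)⁻¹) * (∏ j, c j)^2 := by
          field_simp
      _ ≤ 1 * (∏ j, c j)^2 := by
          apply mul_le_mul_of_nonneg_right this (by positivity)
      _ = (∏ j, c j)^2 := one_mul _
  calc ‖M.det‖ = Real.sqrt (Complex.normSq M.det) := by rw [Complex.norm_def]
    _ ≤ Real.sqrt ((∏ j, c j)^2) := Real.sqrt_le_sqrt hkey
    _ = ∏ j, c j := Real.sqrt_sq hcprod.le

lemma hermOpNorm_nonneg {n : ℕ} (M : Matrix (Fin n) (Fin n) ℂ) : 0 ≤ hermOpNorm M :=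
  norm_nonneg _

lemma colNorm_le {n : ℕ} (M : Matrix (Fin n) (Fin n) ℂ) (j : Fin n) :
    colNorm M j ≤ hermOpNorm M := by
  have h := (Matrix.toEuclideanCLM (𝕜 := ℂ) M).le_opNorm (EuclideanSpace.single j (1:ℂ))
  rw [EuclideanSpace.norm_single, norm_one, mul_one] at h
  exact h

lemma colNorm_congr {n : ℕ} (P Q : Matrix (Fin n) (Fin n) ℂ) (j j' : Fin n)
    (h : ∀ i, P i j = Q i j') : colNorm P j = colNorm Q j' := by
  rw [colNorm_eq, colNorm_eq]
  congr 1
  exact Finset.sum_congr rfl fun i _ => by rw [h i]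

lemma det_lipschitz {n : ℕ} (M N : Matrix (Fin n) (Fin n) ℂ) :
    ‖M.det - N.det‖ ≤ hermOpNorm (M - N) *
      ∑ i ∈ Finset.range n, hermOpNorm M ^ i * hermOpNorm N ^ (n - 1 - i) := by
  set e := hermOpNorm (M - N) with hedef
  set a := hermOpNorm M with hadef
  set b := hermOpNorm N with hbdef
  have he : 0 ≤ e := hermOpNorm_nonneg _
  have ha : 0 ≤ a := hermOpNorm_nonneg _
  have hb : 0 ≤ b := hermOpNorm_nonneg _
  set F : ℕ → Matrix (Fin n) (Fin n) ℂ :=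
    fun k => Matrix.of fun i j => if (j:ℕ) < k then M i j else N i j with hF
  have hF0 : F 0 = N := by ext i j; simp [hF]
  have hFn : F n = M := by ext i j; simp [hF, j.isLt]
  have htel : M.det - N.det = ∑ k ∈ Finset.range n, ((F (k+1)).det - (F k).det) := by
    rw [Finset.sum_range_sub (fun k => (F k).det), hF0, hFn]
  rw [htel]
  refine le_trans (norm_sum_le _ _) ?_
  rw [Finset.mul_sum]
  apply Finset.sum_le_sum
  intro k hk
  have hkn : k < n := Finset.mem_range.1 hk
  set jk : Fin n := ⟨k, hkn⟩ with hjk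
  set D : Matrix (Fin n) (Fin n) ℂ :=
    Matrix.updateCol (F k) jk (fun i => M i jk - N i jk) with hD
  have step : (F (k+1)).det - (F k).det = D.det := by
    have h1 : F (k+1) = Matrix.updateCol (F k) jk
        ((fun i => N i jk) + (fun i => M i jk - N i jk)) := by
      ext i j
      by_cases hj : j = jk
      · subst hj
        simp only [hF, Matrix.updateCol_apply, if_pos rfl, Matrix.of_apply]
        have : ((jk:ℕ) < k + 1) = True := by simp [hjk]
        simp [hjk, Pi.add_apply]
      · have hjv : (j : ℕ) ≠ k := fun hc => hj (Fin.ext hc)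
        have hiff : ((j:ℕ) < k + 1) ↔ ((j:ℕ) < k) := by omega
        simp [hF, Matrix.updateCol_apply, hj, hiff, Pi.add_apply]
    have h2 : (F k) = Matrix.updateCol (F k) jk (fun i => N i jk) := by
      ext i j
      by_cases hj : j = jk
      · subst hj
        simp [hF, Matrix.updateCol_apply, hjk]
      · simp [Matrix.updateCol_apply, hj]
    rw [h1, Matrix.det_updateCol_add, ← h2, hD]
    ring
  rw [step]
  set bound : Fin n → ℝ := fun j => if j = jk then e else if (j:ℕ) < k then a else b with hbound
  have hcol : ∀ j, colNorm D j ≤ bound j := by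
    intro j
    by_cases hj : j = jk
    · subst hj
      have : colNorm D jk = colNorm (M - N) jk :=
        colNorm_congr _ _ _ _ fun i => by simp [hD, Matrix.updateCol_apply]
      rw [hbound]
      simpa [this] using colNorm_le (M - N) jk
    · by_cases hlt : (j:ℕ) < k
      · have : colNorm D j = colNorm M j :=
          colNorm_congr _ _ _ _ fun i => by simp [hD, Matrix.updateCol_apply, hj, hF, hlt]
        rw [hbound]
        simp only [hj, if_false, hlt, if_true]
        rw [this]; exact colNorm_le M j
      · have : colNorm D j = colNorm N j :=
          colNorm_congr _ _ _ _ fun i => by simp [hD, Matrix.updateCol_apply, hj, hF, hlt]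
        rw [hbound]
        simp only [hj, if_false, hlt]
        rw [this]; exact colNorm_le N j
  have hprodbound : ∏ j, bound j = e * (a ^ k * b ^ (n - 1 - k)) := by
    rw [← Finset.mul_prod_erase Finset.univ bound (Finset.mem_univ jk)]
    have hbjk : bound jk = e := by simp [hbound]
    rw [hbjk]
    congr 1
    have hcongr : ∀ j ∈ Finset.univ.erase jk, bound j = if (j:ℕ) < k then a else b := by
      intro j hjmem
      rw [hbound]
      simp [Finset.mem_erase.1 hjmem |>.1]
    rw [Finset.prod_congr rfl hcongr, Finset.prod_ite, Finset.prod_const, Finset.prod_const]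
    have hfe : (Finset.univ.erase jk).filter (fun j : Fin n => (j:ℕ) < k) =
        Finset.univ.filter (fun j : Fin n => (j:ℕ) < k) := by
      ext j
      simp only [Finset.mem_filter, Finset.mem_erase, Finset.mem_univ, true_and, and_true]
      constructor
      · rintro ⟨-, h⟩; exact h
      · intro h; exact ⟨fun hc => by subst hc; exact absurd h (by simp [hjk]), h⟩
    have hcard1 : ((Finset.univ.erase jk).filter (fun j : Fin n => (j:ℕ) < k)).card = k := by
      rw [hfe]
      have : Finset.univ.filter (fun j : Fin n => (j:ℕ) < k) = Finset.Iio jk := by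
        ext j
        simp [hjk, Fin.lt_def]
      rw [this, Fin.card_Iio]
    have hcard2 : ((Finset.univ.erase jk).filter (fun j : Fin n => ¬ (j:ℕ) < k)).card = n - 1 - k := by
      have htot := Finset.card_filter_add_card_filter_not
        (s := Finset.univ.erase jk) (p := fun j => (j:ℕ) < k)
      rw [hcard1, Finset.card_erase_of_mem (Finset.mem_univ jk), Finset.card_univ,
        Fintype.card_fin] at htot
      omega
    rw [hcard1, hcard2]
  calc ‖D.det‖ ≤ ∏ j, colNorm D j := hadamard D
    _ ≤ ∏ j, bound j := Finset.prod_le_prod (fun j _ => colNorm_nonneg D j) (fun j _ => hcol j)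
    _ = e * (a ^ k * b ^ (n - 1 - k)) := hprodbound

noncomputable def rq {n : ℕ} (M : Matrix (Fin n) (Fin n) ℂ) (x : EuclideanSpace ℂ (Fin n)) : ℝ :=
  (inner ℂ x ((Matrix.toEuclideanCLM (𝕜 := ℂ) M) x) : ℂ).re

lemma clm_eigen {n : ℕ} {A : Matrix (Fin n) (Fin n) ℂ} (hA : A.IsHermitian) (j : Fin n) :
    (Matrix.toEuclideanCLM (𝕜 := ℂ) A) (hA.eigenvectorBasis j)
      = (hA.eigenvalues j : ℂ) • hA.eigenvectorBasis j := by
  have h := hA.mulVec_eigenvectorBasis j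
  apply (WithLp.equiv 2 ((Fin n) → ℂ)).injective
  rw [WithLp.equiv_apply, WithLp.equiv_apply, Matrix.ofLp_toEuclideanCLM]
  ext i
  have := congrFun h i
  simp only [WithLp.ofLp_smul, Pi.smul_apply, Matrix.toLin'_apply] at this ⊢
  rw [this]
  simp [Complex.real_smul]

lemma repr_clm {n : ℕ} {A : Matrix (Fin n) (Fin n) ℂ} (hA : A.IsHermitian)
    (x : EuclideanSpace ℂ (Fin n)) (i : Fin n) :
    hA.eigenvectorBasis.repr ((Matrix.toEuclideanCLM (𝕜 := ℂ) A) x) i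
      = (hA.eigenvalues i : ℂ) * hA.eigenvectorBasis.repr x i := by
  set b := hA.eigenvectorBasis with hb
  have hTx : (Matrix.toEuclideanCLM (𝕜 := ℂ) A) x
      = ∑ j, ((hA.eigenvalues j : ℂ) * b.repr x j) • b j := by
    conv_lhs => rw [← b.sum_repr x]
    rw [map_sum]
    refine Finset.sum_congr rfl fun j _ => ?_
    rw [_root_.map_smul, clm_eigen hA, hb, smul_smul, mul_comm]
  rw [OrthonormalBasis.repr_apply_apply, hTx, b.orthonormal.inner_right_fintype]

lemma rq_eq_sum {n : ℕ} {A : Matrix (Fin n) (Fin n) ℂ} (hA : A.IsHermitian)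
    (x : EuclideanSpace ℂ (Fin n)) :
    rq A x = ∑ i, hA.eigenvalues i * Complex.normSq (hA.eigenvectorBasis.repr x i) := by
  rw [rq, ← hA.eigenvectorBasis.repr.inner_map_map x ((Matrix.toEuclideanCLM (𝕜 := ℂ) A) x)]
  rw [PiLp.inner_apply]
  rw [Complex.re_sum]
  refine Finset.sum_congr rfl fun i _ => ?_
  rw [repr_clm hA]
  simp only [RCLike.inner_apply]
  rw [mul_comm]
  rw [show (starRingEnd ℂ) (hA.eigenvectorBasis.repr x i) * ((hA.eigenvalues i : ℂ) * hA.eigenvectorBasis.repr x i) = (hA.eigenvalues i : ℂ) * ((starRingEnd ℂ) (hA.eigenvectorBasis.repr x i) * hA.eigenvectorBasis.repr x i) by ring]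
  rw [← Complex.normSq_eq_conj_mul_self]
  rw [← Complex.ofReal_mul]
  exact Complex.ofReal_re _

lemma norm_sq_repr {n : ℕ} (b : OrthonormalBasis (Fin n) ℂ (EuclideanSpace ℂ (Fin n)))
    (x : EuclideanSpace ℂ (Fin n)) :
    ‖x‖ ^ 2 = ∑ i, Complex.normSq (b.repr x i) := by
  rw [← b.repr.norm_map x, EuclideanSpace.norm_eq,
    Real.sq_sqrt (Finset.sum_nonneg fun i _ => sq_nonneg _)]
  exact Finset.sum_congr rfl fun i _ => by rw [← Complex.sq_norm]

lemma rq_abs_le {n : ℕ} (M : Matrix (Fin n) (Fin n) ℂ) (x : EuclideanSpace ℂ (Fin n)) :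
    |rq M x| ≤ ‖Matrix.toEuclideanCLM (𝕜 := ℂ) M‖ * ‖x‖ ^ 2 := by
  have h1 : |rq M x| ≤ ‖(inner ℂ x ((Matrix.toEuclideanCLM (𝕜 := ℂ) M) x) : ℂ)‖ :=
    Complex.abs_re_le_norm _
  have h2 : ‖(inner ℂ x ((Matrix.toEuclideanCLM (𝕜 := ℂ) M) x) : ℂ)‖
      ≤ ‖x‖ * ‖(Matrix.toEuclideanCLM (𝕜 := ℂ) M) x‖ := by
    exact norm_inner_le_norm _ _
  have h3 : ‖(Matrix.toEuclideanCLM (𝕜 := ℂ) M) x‖ ≤ ‖Matrix.toEuclideanCLM (𝕜 := ℂ) M‖ * ‖x‖ :=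
    (Matrix.toEuclideanCLM (𝕜 := ℂ) M).le_opNorm x
  calc |rq M x| ≤ ‖x‖ * ‖(Matrix.toEuclideanCLM (𝕜 := ℂ) M) x‖ := le_trans h1 h2
    _ ≤ ‖x‖ * (‖Matrix.toEuclideanCLM (𝕜 := ℂ) M‖ * ‖x‖) :=
        mul_le_mul_of_nonneg_left h3 (norm_nonneg x)
    _ = ‖Matrix.toEuclideanCLM (𝕜 := ℂ) M‖ * ‖x‖ ^ 2 := by ring

lemma rq_add {n : ℕ} (P Q : Matrix (Fin n) (Fin n) ℂ) (x : EuclideanSpace ℂ (Fin n)) :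
    rq (P + Q) x = rq P x + rq Q x := by
  rw [rq, map_add, ContinuousLinearMap.add_apply, inner_add_right]
  exact Complex.add_re _ _

lemma span_repr_zero {n : ℕ} (b : OrthonormalBasis (Fin n) ℂ (EuclideanSpace ℂ (Fin n)))
    (S : Finset (Fin n)) (x : EuclideanSpace ℂ (Fin n))
    (hx : x ∈ Submodule.span ℂ (b '' (S : Set (Fin n)))) :
    ∀ i ∉ S, b.repr x i = 0 := by
  intro i hi
  have hx' : x ∈ Submodule.span ℂ (b.toBasis '' (S : Set (Fin n))) := by
    rwa [OrthonormalBasis.coe_toBasis]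
  have hsupp := Module.Basis.repr_support_subset_of_mem_span b.toBasis (S : Set (Fin n)) hx'
  have : b.toBasis.repr x i = 0 := by
    by_contra hne
    exact hi (hsupp (Finsupp.mem_support_iff.2 hne))
  rwa [OrthonormalBasis.coe_toBasis_repr_apply] at this

lemma finrank_span_eq {n : ℕ} (b : OrthonormalBasis (Fin n) ℂ (EuclideanSpace ℂ (Fin n)))
    (S : Finset (Fin n)) :
    Module.finrank ℂ (Submodule.span ℂ (b '' (S : Set (Fin n)))) = S.card := by
  have hli : LinearIndependent ℂ (fun i : {x // x ∈ S} => b i) :=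
    (b.orthonormal.linearIndependent).comp Subtype.val Subtype.val_injective
  have hr : Set.range (fun i : {x // x ∈ S} => b i) = b '' (S : Set (Fin n)) := by
    ext y
    simp [Set.mem_image, Set.mem_range]
  rw [← hr, finrank_span_eq_card hli, Fintype.card_coe]

lemma repr_ne_zero {n : ℕ} (b : OrthonormalBasis (Fin n) ℂ (EuclideanSpace ℂ (Fin n)))
    {x : EuclideanSpace ℂ (Fin n)} (hx : x ≠ 0) : ∃ i, b.repr x i ≠ 0 := by
  by_contra hall
  push_neg at hall
  apply hx
  have h0 : b.repr x = 0 := by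
    ext i; exact hall i
  have := b.repr.map_eq_zero_iff.mp h0
  exact this

lemma sign_stable {n : ℕ} {A B : Matrix (Fin n) (Fin n) ℂ}
    (hA : A.IsHermitian) (hB : B.IsHermitian)
    (h : ∀ i, ‖Matrix.toEuclideanCLM (𝕜 := ℂ) (B - A)‖ < |hA.eigenvalues i|) :
    (∀ i, hB.eigenvalues i ≠ 0) ∧
      (Finset.univ.filter (fun i => hB.eigenvalues i < 0)).card
        = (Finset.univ.filter (fun i => hA.eigenvalues i < 0)).card := by
  set ε := ‖Matrix.toEuclideanCLM (𝕜 := ℂ) (B - A)‖ with hεdef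
  have hεnn : 0 ≤ ε := norm_nonneg _
  set v := hA.eigenvectorBasis with hv
  set w := hB.eigenvectorBasis with hw
  set lam := hA.eigenvalues with hlam
  set mu := hB.eigenvalues with hmu
  set SP := Finset.univ.filter (fun i => 0 < lam i) with hSP
  set SN := Finset.univ.filter (fun i => lam i < 0) with hSN
  set TN := Finset.univ.filter (fun i => mu i ≤ 0) with hTN
  set TP := Finset.univ.filter (fun i => 0 ≤ mu i) with hTP
  set TNeg := Finset.univ.filter (fun i => mu i < 0) with hTNeg
  set Z := Finset.univ.filter (fun i => mu i = 0) with hZ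
  have hBA : ∀ x, rq B x = rq A x + rq (B - A) x := by
    intro x
    rw [← rq_add]
    congr 1
    abel
  -- claim 1 : positive definiteness of B on span of positive eigenvectors of A
  have claim1 : ∀ x ∈ Submodule.span ℂ (v '' (SP : Set (Fin n))), x ≠ 0 → 0 < rq B x := by
    intro x hx hx0
    have hrepr0 := span_repr_zero v SP x hx
    have hsum : rq A x = ∑ i ∈ SP, lam i * Complex.normSq (v.repr x i) := by
      rw [rq_eq_sum hA, ← Finset.sum_subset (Finset.subset_univ SP)]
      intro i _ hi
      rw [hrepr0 i hi]
      simp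
    have hnorm : ε * ‖x‖^2 = ∑ i ∈ SP, ε * Complex.normSq (v.repr x i) := by
      rw [norm_sq_repr v x, Finset.mul_sum, ← Finset.sum_subset (Finset.subset_univ SP)]
      intro i _ hi
      rw [hrepr0 i hi]
      simp
    obtain ⟨i0, hi0⟩ := repr_ne_zero v hx0
    have hi0SP : i0 ∈ SP := by
      by_contra hc
      exact hi0 (hrepr0 i0 hc)
    have hstrict : ε * ‖x‖^2 < rq A x := by
      rw [hsum, hnorm]
      apply Finset.sum_lt_sum
      · intro i hiS
        have hipos : 0 < lam i := (Finset.mem_filter.1 hiS).2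
        have hεlt : ε < lam i := by
          have := h i
          rwa [abs_of_pos hipos] at this
        exact mul_le_mul_of_nonneg_right hεlt.le (Complex.normSq_nonneg _)
      · refine ⟨i0, hi0SP, ?_⟩
        have hipos : 0 < lam i0 := (Finset.mem_filter.1 hi0SP).2
        have hεlt : ε < lam i0 := by
          have := h i0
          rwa [abs_of_pos hipos] at this
        exact mul_lt_mul_of_pos_right hεlt (Complex.normSq_pos.2 hi0)
    have habs := rq_abs_le (B - A) x
    rw [hBA x]
    have : -(ε * ‖x‖^2) ≤ rq (B - A) x := by
      rw [abs_le] at habs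
      exact habs.1
    linarith
  -- claim 2 : negative definiteness of B on span of negative eigenvectors of A
  have claim2 : ∀ x ∈ Submodule.span ℂ (v '' (SN : Set (Fin n))), x ≠ 0 → rq B x < 0 := by
    intro x hx hx0
    have hrepr0 := span_repr_zero v SN x hx
    have hsum : rq A x = ∑ i ∈ SN, lam i * Complex.normSq (v.repr x i) := by
      rw [rq_eq_sum hA, ← Finset.sum_subset (Finset.subset_univ SN)]
      intro i _ hi
      rw [hrepr0 i hi]
      simp
    have hnorm : -(ε * ‖x‖^2) = ∑ i ∈ SN, -ε * Complex.normSq (v.repr x i) := by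
      rw [norm_sq_repr v x, Finset.mul_sum, ← Finset.sum_neg_distrib]
      rw [← Finset.sum_subset (Finset.subset_univ SN)]
      · exact Finset.sum_congr rfl fun i _ => by ring
      intro i _ hi
      rw [hrepr0 i hi]
      simp
    obtain ⟨i0, hi0⟩ := repr_ne_zero v hx0
    have hi0SN : i0 ∈ SN := by
      by_contra hc
      exact hi0 (hrepr0 i0 hc)
    have hstrict : rq A x < -(ε * ‖x‖^2) := by
      rw [hsum, hnorm]
      apply Finset.sum_lt_sum
      · intro i hiS
        have hineg : lam i < 0 := (Finset.mem_filter.1 hiS).2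
        have hεlt : lam i < -ε := by
          have := h i
          rw [abs_of_neg hineg] at this
          linarith
        exact mul_le_mul_of_nonneg_right hεlt.le (Complex.normSq_nonneg _)
      · refine ⟨i0, hi0SN, ?_⟩
        have hineg : lam i0 < 0 := (Finset.mem_filter.1 hi0SN).2
        have hεlt : lam i0 < -ε := by
          have := h i0
          rw [abs_of_neg hineg] at this
          linarith
        exact mul_lt_mul_of_pos_right hεlt (Complex.normSq_pos.2 hi0)
    have habs := rq_abs_le (B - A) x
    rw [hBA x]
    have : rq (B - A) x ≤ ε * ‖x‖^2 := by
      rw [abs_le] at habs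
      exact habs.2
    linarith
  -- claim 3 : B nonpositive on span of nonpositive eigenvectors of B
  have claim3 : ∀ x ∈ Submodule.span ℂ (w '' (TN : Set (Fin n))), rq B x ≤ 0 := by
    intro x hx
    have hrepr0 := span_repr_zero w TN x hx
    have hsum : rq B x = ∑ i ∈ TN, mu i * Complex.normSq (w.repr x i) := by
      rw [rq_eq_sum hB, ← Finset.sum_subset (Finset.subset_univ TN)]
      intro i _ hi
      rw [hrepr0 i hi]
      simp
    rw [hsum]
    apply Finset.sum_nonpos
    intro i hi
    exact mul_nonpos_of_nonpos_of_nonneg (Finset.mem_filter.1 hi).2 (Complex.normSq_nonneg _)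
  -- claim 4 : B nonnegative on span of nonnegative eigenvectors of B
  have claim4 : ∀ x ∈ Submodule.span ℂ (w '' (TP : Set (Fin n))), 0 ≤ rq B x := by
    intro x hx
    have hrepr0 := span_repr_zero w TP x hx
    have hsum : rq B x = ∑ i ∈ TP, mu i * Complex.normSq (w.repr x i) := by
      rw [rq_eq_sum hB, ← Finset.sum_subset (Finset.subset_univ TP)]
      intro i _ hi
      rw [hrepr0 i hi]
      simp
    rw [hsum]
    apply Finset.sum_nonneg
    intro i hi
    exact mul_nonneg (Finset.mem_filter.1 hi).2 (Complex.normSq_nonneg _)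
  -- intersections trivial
  have hbot1 : Submodule.span ℂ (v '' (SP : Set (Fin n))) ⊓
      Submodule.span ℂ (w '' (TN : Set (Fin n))) = ⊥ := by
    rw [Submodule.eq_bot_iff]
    rintro x ⟨hx1, hx2⟩
    by_contra hx0
    exact absurd (claim3 x hx2) (not_le.2 (claim1 x hx1 hx0))
  have hbot2 : Submodule.span ℂ (v '' (SN : Set (Fin n))) ⊓
      Submodule.span ℂ (w '' (TP : Set (Fin n))) = ⊥ := by
    rw [Submodule.eq_bot_iff]
    rintro x ⟨hx1, hx2⟩
    by_contra hx0
    exact absurd (claim4 x hx2) (not_le.2 (claim2 x hx1 hx0))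
  -- dimension counting
  have hdim : ∀ (S T : Finset (Fin n)), Submodule.span ℂ (v '' (S : Set (Fin n))) ⊓
      Submodule.span ℂ (w '' (T : Set (Fin n))) = ⊥ → S.card + T.card ≤ n := by
    intro S T hbot
    have heq := Submodule.finrank_sup_add_finrank_inf_eq
      (Submodule.span ℂ (v '' (S : Set (Fin n)))) (Submodule.span ℂ (w '' (T : Set (Fin n))))
    rw [hbot, finrank_bot, add_zero, finrank_span_eq v S, finrank_span_eq w T] at heq
    have hle : Module.finrank ℂ ↥(Submodule.span ℂ (v '' (S : Set (Fin n))) ⊔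
        Submodule.span ℂ (w '' (T : Set (Fin n)))) ≤ n := by
      have h1 := Submodule.finrank_le (Submodule.span ℂ (v '' (S : Set (Fin n))) ⊔
        Submodule.span ℂ (w '' (T : Set (Fin n))))
      rwa [finrank_euclideanSpace, Fintype.card_fin] at h1
    omega
  have hone := hdim SP TN hbot1
  have htwo := hdim SN TP hbot2
  -- counting identities
  have hSPSN : SP.card + SN.card = n := by
    have hcompl : SN = Finset.univ.filter (fun i => ¬ 0 < lam i) := by
      apply Finset.filter_congr
      intro i _
      have hne : lam i ≠ 0 := by
        intro hc
        have := h i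
        rw [hc] at this
        simp at this
        linarith
      constructor
      · intro hlt; linarith
      · intro hnlt; rcases lt_trichotomy (lam i) 0 with hc | hc | hc
        · exact hc
        · exact absurd hc hne
        · exact absurd hc hnlt
    rw [hcompl]
    rw [Finset.card_filter_add_card_filter_not (fun i => 0 < lam i)]
    simp
  have hTPTNeg : TP.card + TNeg.card = n := by
    have hcompl : TNeg = Finset.univ.filter (fun i => ¬ 0 ≤ mu i) := by
      apply Finset.filter_congr
      intro i _
      simp [not_le]
    rw [hcompl, Finset.card_filter_add_card_filter_not (fun i => 0 ≤ mu i)]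
    simp
  have hTNsplit : TN.card = TNeg.card + Z.card := by
    have : TN = TNeg ∪ Z := by
      ext i
      simp only [hTN, hTNeg, hZ, Finset.mem_union, Finset.mem_filter, Finset.mem_univ, true_and]
      exact le_iff_lt_or_eq
    rw [this, Finset.card_union_of_disjoint]
    rw [Finset.disjoint_filter]
    intro i _ hlt
    exact ne_of_lt hlt
  have hZ0 : Z.card = 0 := by omega
  have hTNegSN : TNeg.card = SN.card := by omega
  constructor
  · intro i
    intro hc
    have : i ∈ Z := Finset.mem_filter.2 ⟨Finset.mem_univ i, hc⟩
    rw [Finset.card_eq_zero] at hZ0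
    rw [hZ0] at this
    exact absurd this (Finset.notMem_empty i)
  · exact hTNegSN

lemma eig_abs_le {n : ℕ} {A : Matrix (Fin n) (Fin n) ℂ} (hA : A.IsHermitian) (i : Fin n) :
    |hA.eigenvalues i| ≤ ‖Matrix.toEuclideanCLM (𝕜 := ℂ) A‖ := by
  have h1 : ‖(Matrix.toEuclideanCLM (𝕜 := ℂ) A) (hA.eigenvectorBasis i)‖
      ≤ ‖Matrix.toEuclideanCLM (𝕜 := ℂ) A‖ * ‖hA.eigenvectorBasis i‖ :=
    (Matrix.toEuclideanCLM (𝕜 := ℂ) A).le_opNorm _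
  rw [clm_eigen hA i, norm_smul] at h1
  have hn1 : ‖hA.eigenvectorBasis i‖ = 1 :=
    hA.eigenvectorBasis.orthonormal.1 i
  rw [hn1, mul_one, mul_one, Complex.norm_real, Real.norm_eq_abs] at h1
  exact h1

lemma abs_det_eq {n : ℕ} {A : Matrix (Fin n) (Fin n) ℂ} (hA : A.IsHermitian) :
    ‖A.det‖ = ∏ i, |hA.eigenvalues i| := by
  rw [hA.det_eq_prod_eigenvalues]
  rw [norm_prod]
  exact Finset.prod_congr rfl fun i _ => RCLike.norm_ofReal _

lemma det_small {n : ℕ} {A : Matrix (Fin n) (Fin n) ℂ} (hA : A.IsHermitian) {ε : ℝ}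
    (hε : 0 ≤ ε) (hex : ∃ i, |hA.eigenvalues i| ≤ ε) :
    ‖A.det‖ ≤ ε * ‖Matrix.toEuclideanCLM (𝕜 := ℂ) A‖ ^ (n - 1) := by
  obtain ⟨i0, hi0⟩ := hex
  rw [abs_det_eq hA, ← Finset.mul_prod_erase Finset.univ _ (Finset.mem_univ i0)]
  have h1 : ∏ i ∈ Finset.univ.erase i0, |hA.eigenvalues i|
      ≤ ‖Matrix.toEuclideanCLM (𝕜 := ℂ) A‖ ^ (n - 1) := by
    have := Finset.prod_le_prod (s := Finset.univ.erase i0)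
      (f := fun i => |hA.eigenvalues i|) (g := fun _ => ‖Matrix.toEuclideanCLM (𝕜 := ℂ) A‖)
      (fun i _ => abs_nonneg _) (fun i _ => eig_abs_le hA i)
    rwa [Finset.prod_const, Finset.card_erase_of_mem (Finset.mem_univ i0),
      Finset.card_univ, Fintype.card_fin] at this
  exact mul_le_mul hi0 h1 (Finset.prod_nonneg fun i _ => abs_nonneg _) hε

lemma hermOpNorm_sub_comm {n : ℕ} (A B : Matrix (Fin n) (Fin n) ℂ) :
    hermOpNorm (A - B) = hermOpNorm (B - A) := by
  unfold hermOpNorm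
  rw [show B - A = -(A - B) by abel, map_neg, norm_neg]

theorem stmt2 (n q : ℕ) (A B : Matrix (Fin n) (Fin n) ℂ)
    (hA : A.IsHermitian) (hB : B.IsHermitian) :
    ‖indSig q hA * A.det - indSig q hB * B.det‖ ≤
      hermOpNorm (A - B) *
        ∑ i ∈ Finset.range n, hermOpNorm A ^ i * hermOpNorm B ^ (n - 1 - i) := by
  have hRHS : 0 ≤ hermOpNorm (A - B) *
      ∑ i ∈ Finset.range n, hermOpNorm A ^ i * hermOpNorm B ^ (n - 1 - i) :=
    mul_nonneg (hermOpNorm_nonneg _) (Finset.sum_nonneg fun i _ =>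
      mul_nonneg (pow_nonneg (hermOpNorm_nonneg _) _) (pow_nonneg (hermOpNorm_nonneg _) _))
  rcases Nat.eq_zero_or_pos n with hn | hn
  · subst hn
    have hcard : ∀ (f : Fin 0 → ℝ), (Finset.univ.filter (fun i => f i < 0)).card = 0 := by
      intro f
      simp [Finset.univ_eq_empty]
    have e1 : indSig q hA = if 0 = q then 1 else 0 := by
      unfold indSig
      refine if_congr ?_ rfl rfl
      constructor
      · rintro ⟨-, hc⟩; rw [← hc, hcard]
      · intro hq; exact ⟨fun i => i.elim0, by rw [hcard]; exact hq⟩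
    have e2 : indSig q hB = if 0 = q then 1 else 0 := by
      unfold indSig
      refine if_congr ?_ rfl rfl
      constructor
      · rintro ⟨-, hc⟩; rw [← hc, hcard]
      · intro hq; exact ⟨fun i => i.elim0, by rw [hcard]; exact hq⟩
    rw [e1, e2, Matrix.det_fin_zero, Matrix.det_fin_zero, sub_self]
    simpa using hRHS
  by_cases hcA : (∀ i, hA.eigenvalues i ≠ 0) ∧
      (Finset.univ.filter (fun i => hA.eigenvalues i < 0)).card = q
  · by_cases hcB : (∀ i, hB.eigenvalues i ≠ 0) ∧
        (Finset.univ.filter (fun i => hB.eigenvalues i < 0)).card = q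
    · -- both indicators are 1
      rw [indSig, if_pos hcA, indSig, if_pos hcB, one_mul, one_mul]
      exact det_lipschitz A B
    · -- A nondegenerate of signature q, B not
      rw [indSig, if_pos hcA, indSig, if_neg hcB, one_mul, zero_mul, sub_zero]
      have hex : ∃ i, |hA.eigenvalues i| ≤ hermOpNorm (A - B) := by
        by_contra hcon
        push_neg at hcon
        have hcon' : ∀ i, ‖Matrix.toEuclideanCLM (𝕜 := ℂ) (B - A)‖ < |hA.eigenvalues i| := by
          intro i
          have := hcon i
          rwa [hermOpNorm_sub_comm] at this
        obtain ⟨h1, h2⟩ := sign_stable hA hB hcon'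
        exact hcB ⟨h1, h2.trans hcA.2⟩
      have hd := det_small hA (hermOpNorm_nonneg (A - B)) hex
      refine le_trans hd ?_
      apply mul_le_mul_of_nonneg_left ?_ (hermOpNorm_nonneg (A - B))
      have hmem : n - 1 ∈ Finset.range n := Finset.mem_range.2 (by omega)
      have := Finset.single_le_sum
        (f := fun i => hermOpNorm A ^ i * hermOpNorm B ^ (n - 1 - i))
        (fun i _ => mul_nonneg (pow_nonneg (hermOpNorm_nonneg _) _)
          (pow_nonneg (hermOpNorm_nonneg _) _)) hmem
      calc ‖Matrix.toEuclideanCLM (𝕜 := ℂ) A‖ ^ (n - 1)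
          = hermOpNorm A ^ (n - 1) * hermOpNorm B ^ (n - 1 - (n - 1)) := by
            rw [Nat.sub_self, pow_zero, mul_one]; rfl
        _ ≤ _ := this
  · by_cases hcB : (∀ i, hB.eigenvalues i ≠ 0) ∧
        (Finset.univ.filter (fun i => hB.eigenvalues i < 0)).card = q
    · -- B nondegenerate of signature q, A not
      rw [indSig, if_neg hcA, indSig, if_pos hcB, one_mul, zero_mul, zero_sub, norm_neg]
      have hex : ∃ i, |hB.eigenvalues i| ≤ hermOpNorm (B - A) := by
        by_contra hcon
        push_neg at hcon
        have hcon' : ∀ i, ‖Matrix.toEuclideanCLM (𝕜 := ℂ) (A - B)‖ < |hB.eigenvalues i| := by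
          intro i
          have := hcon i
          rwa [hermOpNorm_sub_comm] at this
        obtain ⟨h1, h2⟩ := sign_stable hB hA hcon'
        exact hcA ⟨h1, h2.trans hcB.2⟩
      rw [← hermOpNorm_sub_comm] at hex
      have hd := det_small hB (hermOpNorm_nonneg (A - B)) hex
      refine le_trans hd ?_
      apply mul_le_mul_of_nonneg_left ?_ (hermOpNorm_nonneg (A - B))
      have hmem : 0 ∈ Finset.range n := Finset.mem_range.2 hn
      have := Finset.single_le_sum
        (f := fun i => hermOpNorm A ^ i * hermOpNorm B ^ (n - 1 - i))
        (fun i _ => mul_nonneg (pow_nonneg (hermOpNorm_nonneg _) _)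
          (pow_nonneg (hermOpNorm_nonneg _) _)) hmem
      calc ‖Matrix.toEuclideanCLM (𝕜 := ℂ) B‖ ^ (n - 1)
          = hermOpNorm A ^ 0 * hermOpNorm B ^ (n - 1 - 0) := by
            rw [pow_zero, one_mul, Nat.sub_zero]; rfl
        _ ≤ _ := this
    · rw [indSig, if_neg hcA, indSig, if_neg hcB, zero_mul, zero_mul, sub_self]
      simpa using hRHS
end

section
/- Let A be a Hermitian operator on ℂ^n with eigenvalues λ_1,...,λ_n and Q_A(ζ) = ⟨Aζ, ζ⟩ the associated Hermitian quadratic form. Then the integral of |Q_A(ζ)|^2 over the unit sphere S^{2n-1} with respect to the rotation-invariant probability measure μ equals (Σ λ_i^2 + (Σ λ_i)^2) / (n(n+1)). -/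
open MeasureTheory Matrix

variable {n : ℕ}

lemma measurable_mulVecC (M : Matrix (Fin n) (Fin n) ℂ) :
    Measurable (fun ζ : Fin n → ℂ => M *ᵥ ζ) := by
  apply measurable_pi_lambda
  intro i
  simp only [Matrix.mulVec, dotProduct]
  exact Finset.measurable_sum _ fun j _ => (measurable_pi_apply j).const_mul _

lemma int_inv (μ : Measure (Fin n → ℂ))
    (hinv : ∀ U : Matrix.unitaryGroup (Fin n) ℂ,
      μ.map (fun ζ => (U : Matrix (Fin n) (Fin n) ℂ).mulVec ζ) = μ)
    (U : Matrix.unitaryGroup (Fin n) ℂ) (g : (Fin n → ℂ) → ℝ) (hg : Measurable g) :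
    ∫ ζ, g ((U : Matrix (Fin n) (Fin n) ℂ) *ᵥ ζ) ∂μ = ∫ ζ, g ζ ∂μ := by
  conv_rhs => rw [← hinv U]
  rw [integral_map (measurable_mulVecC _).aemeasurable hg.aestronglyMeasurable]

lemma bdd_integrable (μ : Measure (Fin n → ℂ)) [IsProbabilityMeasure μ]
    (hsupp : μ {ζ : Fin n → ℂ | ∑ i, Complex.normSq (ζ i) = 1}ᶜ = 0)
    (g : (Fin n → ℂ) → ℝ) (hg : Measurable g) (C : ℝ)
    (hb : ∀ ζ : Fin n → ℂ, (∑ i, Complex.normSq (ζ i)) = 1 → |g ζ| ≤ C) :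
    Integrable g μ := by
  have hae : ∀ᵐ ζ ∂μ, (∑ i, Complex.normSq (ζ i)) = 1 := by
    rw [ae_iff]
    rwa [Set.compl_setOf] at hsupp
  refine Integrable.mono' (integrable_const C) hg.aestronglyMeasurable ?_
  filter_upwards [hae] with ζ h
  simpa [Real.norm_eq_abs] using hb ζ h

lemma normSq_le_one {ζ : Fin n → ℂ} (h : (∑ i, Complex.normSq (ζ i)) = 1) (i : Fin n) :
    Complex.normSq (ζ i) ≤ 1 := by
  rw [← h]
  exact Finset.single_le_sum (fun k _ => Complex.normSq_nonneg _) (Finset.mem_univ i)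
open MeasureTheory Matrix

variable {n : ℕ}

lemma perm_mem (σ : Equiv.Perm (Fin n)) : σ.permMatrix ℂ ∈ Matrix.unitaryGroup (Fin n) ℂ := by
  rw [Matrix.mem_unitaryGroup_iff']
  have hst : star (σ.permMatrix ℂ) = (σ⁻¹).permMatrix ℂ := by
    have h1 : (σ.permMatrix ℂ).conjTranspose = (σ.permMatrix ℂ)ᵀ := by
      ext i j
      simp [Matrix.conjTranspose_apply, PEquiv.toMatrix_apply, apply_ite]
    rw [Matrix.star_eq_conjTranspose, h1, ← PEquiv.toMatrix_symm, ← Equiv.toPEquiv_symm]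
    rfl
  rw [hst]
  show ((σ⁻¹).toPEquiv.toMatrix : Matrix (Fin n) (Fin n) ℂ) * σ.toPEquiv.toMatrix = 1
  rw [← PEquiv.toMatrix_trans, ← Equiv.toPEquiv_trans]
  have h2 : Equiv.trans σ⁻¹ σ = Equiv.refl (Fin n) := by
    ext x; simp
  have h3 : (Equiv.refl (Fin n)).toPEquiv = PEquiv.refl (Fin n) := by
    ext i j; simp [Equiv.toPEquiv]
  rw [h2, h3, PEquiv.toMatrix_refl]

lemma perm_mulVec (σ : Equiv.Perm (Fin n)) (ζ : Fin n → ℂ) :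
    (σ.permMatrix ℂ) *ᵥ ζ = fun k => ζ (σ k) := by
  funext k
  simp only [Matrix.mulVec, dotProduct, PEquiv.toMatrix_apply, Equiv.toPEquiv_apply,
    Option.mem_def, Option.some.injEq, ite_mul, one_mul, zero_mul]
  rw [Finset.sum_ite_eq Finset.univ (σ k) ζ]
  simp

lemma diag_mem (c : Fin n → ℂ) (hc : ∀ k, c k * (starRingEnd ℂ) (c k) = 1) :
    Matrix.diagonal c ∈ Matrix.unitaryGroup (Fin n) ℂ := by
  rw [Matrix.mem_unitaryGroup_iff, Matrix.star_eq_conjTranspose, Matrix.diagonal_conjTranspose,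
    Matrix.diagonal_mul_diagonal]
  have : (fun i => c i * (star c) i) = fun _ => (1:ℂ) := by
    funext k
    simpa [mul_comm] using hc k
  rw [this, Matrix.diagonal_one]

lemma diag_mulVec (c : Fin n → ℂ) (ζ : Fin n → ℂ) :
    (Matrix.diagonal c) *ᵥ ζ = fun k => c k * ζ k := by
  funext k
  rw [Matrix.mulVec_diagonal]

variable {n : ℕ}

noncomputable def rr : ℂ := (((Real.sqrt 2 : ℝ) : ℂ))⁻¹

lemma rr_real : (starRingEnd ℂ) rr = rr := by
  simp [rr, ← Complex.ofReal_inv, Complex.conj_ofReal]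

lemma rr_sq : rr * rr = (2 : ℂ)⁻¹ := by
  rw [rr, ← mul_inv, ← Complex.ofReal_mul, Real.mul_self_sqrt (by norm_num : (0:ℝ) ≤ 2)]
  norm_num

noncomputable def rotM (n : ℕ) (i j : Fin n) : Matrix (Fin n) (Fin n) ℂ :=
  Matrix.of fun k l =>
    if k = i then (if l = i then rr else if l = j then rr else 0)
    else if k = j then (if l = i then rr else if l = j then -rr else 0)
    else if l = k then 1 else 0

lemma sum_pair {i j : Fin n} (hij : i ≠ j) (a b : ℂ) :
    ∑ m : Fin n, (if m = i then a else if m = j then b else 0) = a + b := by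
  have key : ∀ m : Fin n, (if m = i then a else if m = j then b else 0)
      = (if m = i then a else 0) + (if m = j then b else 0) := by
    intro m; split_ifs <;> simp_all
  rw [Finset.sum_congr rfl fun m _ => key m, Finset.sum_add_distrib]
  simp

lemma sum_pair_mul {i j : Fin n} (hij : i ≠ j) (a b : ℂ) (f : Fin n → ℂ) :
    ∑ m : Fin n, (if m = i then a else if m = j then b else 0) * f m = a * f i + b * f j := by
  have key : ∀ m : Fin n, (if m = i then a else if m = j then b else 0) * f m
      = (if m = i then a * f i else if m = j then b * f j else 0) := by
    intro m; split_ifs with h1 h2 <;> first | (subst h1; ring) | (subst h2; ring) | ring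
  rw [Finset.sum_congr rfl fun m _ => key m, sum_pair hij]

lemma sum_single_mul (k : Fin n) (f : Fin n → ℂ) :
    ∑ m : Fin n, (if m = k then (1:ℂ) else 0) * f m = f k := by
  have key : ∀ m : Fin n, (if m = k then (1:ℂ) else 0) * f m = (if m = k then f m else 0) := by
    intro m; split_ifs <;> ring
  rw [Finset.sum_congr rfl fun m _ => key m, Finset.sum_ite_eq' Finset.univ k f]
  simp

lemma rotM_mulVec {i j : Fin n} (hij : i ≠ j) (ζ : Fin n → ℂ) :
    (rotM n i j) *ᵥ ζ = fun k =>
      if k = i then rr * (ζ i + ζ j) else if k = j then rr * (ζ i - ζ j) else ζ k := by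
  funext k
  simp only [Matrix.mulVec, dotProduct, rotM, Matrix.of_apply]
  by_cases hki : k = i
  · subst hki
    simp only [eq_self_iff_true, if_true]
    rw [sum_pair_mul hij]
    ring
  · simp only [if_neg hki]
    by_cases hkj : k = j
    · subst hkj
      simp only [eq_self_iff_true, if_true]
      rw [sum_pair_mul hij]
      ring
    · simp only [if_neg hkj]
      rw [sum_single_mul]

lemma rotM_mem {i j : Fin n} (hij : i ≠ j) : rotM n i j ∈ Matrix.unitaryGroup (Fin n) ℂ := by
  rw [Matrix.mem_unitaryGroup_iff']
  have hstar : star (rotM n i j) = rotM n i j := by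
    ext k l
    simp only [Matrix.star_eq_conjTranspose, Matrix.conjTranspose_apply, rotM, Matrix.of_apply]
    by_cases hki : k = i <;> by_cases hkj : k = j <;> by_cases hli : l = i <;> by_cases hlj : l = j <;>
      simp_all [rr_real, eq_comm] <;> simp_all [Ne.symm]
  rw [hstar]
  ext k l
  simp only [Matrix.mul_apply, Matrix.one_apply, rotM, Matrix.of_apply]
  by_cases hki : k = i
  · subst hki
    simp only [eq_self_iff_true, if_true]
    rw [sum_pair_mul hij]
    by_cases hlk : l = k
    · subst hlk
      simp only [eq_self_iff_true, if_true, if_neg hij, if_neg (Ne.symm hij)]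
      linear_combination (2:ℂ) * rr_sq
    · by_cases hlj : l = j
      · subst hlj
        simp only [eq_self_iff_true, if_true, if_neg hij, if_neg (Ne.symm hij),
          if_neg (fun h => hlk h.symm : ¬ k = l)]
        ring
      · simp only [eq_self_iff_true, if_true, if_neg hij, if_neg (Ne.symm hij),
          if_neg hlk, if_neg hlj, if_neg (fun h => hlk h.symm : ¬ k = l)]
        ring
  · simp only [if_neg hki]
    by_cases hkj : k = j
    · subst hkj
      simp only [eq_self_iff_true, if_true]
      rw [sum_pair_mul hij]
      by_cases hli : l = i
      · subst hli
        simp only [eq_self_iff_true, if_true, if_neg hij, if_neg (Ne.symm hij), if_neg hki]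
        ring
      · by_cases hlk : l = k
        · subst hlk
          simp only [eq_self_iff_true, if_true, if_neg hij, if_neg (Ne.symm hij), if_neg hli]
          linear_combination (2:ℂ) * rr_sq
        · simp only [eq_self_iff_true, if_true, if_neg hij, if_neg (Ne.symm hij),
            if_neg hli, if_neg hlk, if_neg (fun h => hlk h.symm : ¬ k = l)]
          ring
    · simp only [if_neg hkj]
      rw [sum_single_mul k (fun x => if x = i then (if l = i then rr else if l = j then rr else 0)
        else if x = j then (if l = i then rr else if l = j then -rr else 0) else if l = x then 1 else 0)]
      simp only [if_neg hki, if_neg hkj]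
      by_cases hlk : l = k
      · subst hlk
        simp
      · simp only [if_neg hlk, if_neg (fun h => hlk h.symm : ¬ k = l)]

section Moments
variable (μ : Measure (Fin n → ℂ)) [IsProbabilityMeasure μ]
  (hsupp : μ {ζ : Fin n → ℂ | ∑ i, Complex.normSq (ζ i) = 1}ᶜ = 0)
  (hinv : ∀ U : Matrix.unitaryGroup (Fin n) ℂ,
      μ.map (fun ζ => (U : Matrix (Fin n) (Fin n) ℂ).mulVec ζ) = μ)

lemma meas_x (i : Fin n) : Measurable (fun ζ : Fin n → ℂ => Complex.normSq (ζ i)) :=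
  Complex.continuous_normSq.measurable.comp (measurable_pi_apply i)

lemma meas_r (i j : Fin n) :
    Measurable (fun ζ : Fin n → ℂ => (ζ i * (starRingEnd ℂ) (ζ j)).re) :=
  Complex.measurable_re.comp
    ((measurable_pi_apply i).mul (Complex.continuous_conj.measurable.comp (measurable_pi_apply j)))

lemma meas_s (i j : Fin n) :
    Measurable (fun ζ : Fin n → ℂ => ((ζ i * (starRingEnd ℂ) (ζ j)) ^ 2).re) :=
  Complex.measurable_re.comp
    (((measurable_pi_apply i).mul
      (Complex.continuous_conj.measurable.comp (measurable_pi_apply j))).pow measurable_const)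

lemma abs_le_one {ζ : Fin n → ℂ} (h : (∑ i, Complex.normSq (ζ i)) = 1) (i : Fin n) :
    ‖ζ i‖ ≤ 1 := by
  have h1 := normSq_le_one h i
  rw [← Complex.sq_norm] at h1
  nlinarith [norm_nonneg (ζ i)]

lemma r_le_one {ζ : Fin n → ℂ} (h : (∑ i, Complex.normSq (ζ i)) = 1) (i j : Fin n) :
    |(ζ i * (starRingEnd ℂ) (ζ j)).re| ≤ 1 := by
  have := Complex.abs_re_le_norm (ζ i * (starRingEnd ℂ) (ζ j))
  have h2 : ‖ζ i * (starRingEnd ℂ) (ζ j)‖ ≤ 1 := by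
    rw [norm_mul, Complex.norm_conj]
    have := abs_le_one h i
    have := abs_le_one h j
    nlinarith [norm_nonneg (ζ i), norm_nonneg (ζ j)]
  linarith

include hsupp in
lemma integ_xx (i j : Fin n) :
    Integrable (fun ζ : Fin n → ℂ => Complex.normSq (ζ i) * Complex.normSq (ζ j)) μ := by
  refine bdd_integrable μ hsupp _ ((meas_x i).mul (meas_x j)) 1 ?_
  intro ζ h
  have h1 := normSq_le_one h i
  have h2 := normSq_le_one h j
  have n1 := Complex.normSq_nonneg (ζ i)
  have n2 := Complex.normSq_nonneg (ζ j)
  rw [abs_mul, abs_of_nonneg n1, abs_of_nonneg n2]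
  nlinarith

include hsupp in
lemma integ_xr (i j k : Fin n) :
    Integrable (fun ζ : Fin n → ℂ =>
      Complex.normSq (ζ k) * (ζ i * (starRingEnd ℂ) (ζ j)).re) μ := by
  refine bdd_integrable μ hsupp _ ((meas_x k).mul (meas_r i j)) 1 ?_
  intro ζ h
  have h1 := normSq_le_one h k
  have h2 := r_le_one h i j
  have n1 := Complex.normSq_nonneg (ζ k)
  rw [abs_mul, abs_of_nonneg n1]
  nlinarith [abs_nonneg ((ζ i * (starRingEnd ℂ) (ζ j)).re)]

include hsupp in
lemma integ_s (i j : Fin n) :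
    Integrable (fun ζ : Fin n → ℂ => ((ζ i * (starRingEnd ℂ) (ζ j)) ^ 2).re) μ := by
  refine bdd_integrable μ hsupp _ (meas_s i j) 1 ?_
  intro ζ h
  have h2 : ‖ζ i * (starRingEnd ℂ) (ζ j)‖ ≤ 1 := by
    rw [norm_mul, Complex.norm_conj]
    have := abs_le_one h i
    have := abs_le_one h j
    nlinarith [norm_nonneg (ζ i), norm_nonneg (ζ j)]
  have := Complex.abs_re_le_norm ((ζ i * (starRingEnd ℂ) (ζ j)) ^ 2)
  rw [norm_pow] at this
  nlinarith [norm_nonneg (ζ i * (starRingEnd ℂ) (ζ j))]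

include hinv in
lemma permI (σ : Equiv.Perm (Fin n)) (a b : Fin n) :
    ∫ ζ, Complex.normSq (ζ (σ a)) * Complex.normSq (ζ (σ b)) ∂μ
      = ∫ ζ, Complex.normSq (ζ a) * Complex.normSq (ζ b) ∂μ := by
  have h := int_inv μ hinv ⟨σ.permMatrix ℂ, perm_mem σ⟩
    (fun ζ => Complex.normSq (ζ a) * Complex.normSq (ζ b)) ((meas_x a).mul (meas_x b))
  simp only [perm_mulVec] at h
  exact h

lemma integral_add4' {α : Type*} [MeasurableSpace α] {ν : Measure α} (f1 f2 f3 f4 : α → ℝ)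
    (h1 : Integrable f1 ν) (h2 : Integrable f2 ν) (h3 : Integrable f3 ν) (h4 : Integrable f4 ν) :
    ∫ a, (f1 a + f2 a + f3 a + f4 a) ∂ν
      = ∫ a, f1 a ∂ν + ∫ a, f2 a ∂ν + ∫ a, f3 a ∂ν + ∫ a, f4 a ∂ν := by
  have h12 : Integrable (fun a => f1 a + f2 a) ν := h1.add h2
  have h123 : Integrable (fun a => f1 a + f2 a + f3 a) ν := h12.add h3
  rw [integral_add h123 h4, integral_add h12 h3, integral_add h1 h2]

include hinv in
lemma vanish_xr {i j : Fin n} (hij : i ≠ j) (k : Fin n) :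
    ∫ ζ, Complex.normSq (ζ k) * (ζ i * (starRingEnd ℂ) (ζ j)).re ∂μ = 0 := by
  set c : Fin n → ℂ := fun m => if m = j then (-1 : ℂ) else 1 with hc
  have hcu : ∀ m, c m * (starRingEnd ℂ) (c m) = 1 := by
    intro m; simp only [hc]; split_ifs <;> simp
  have h := int_inv μ hinv ⟨Matrix.diagonal c, diag_mem c hcu⟩
    (fun ζ => Complex.normSq (ζ k) * (ζ i * (starRingEnd ℂ) (ζ j)).re)
    ((meas_x k).mul (meas_r i j))
  have hpt : ∀ ζ : Fin n → ℂ, ((Matrix.diagonal c) *ᵥ ζ) = fun m => c m * ζ m :=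
    fun ζ => diag_mulVec c ζ
  simp only [hpt] at h
  have hcomp : ∀ ζ : Fin n → ℂ,
      Complex.normSq (c k * ζ k) * ((c i * ζ i) * (starRingEnd ℂ) (c j * ζ j)).re
        = -(Complex.normSq (ζ k) * (ζ i * (starRingEnd ℂ) (ζ j)).re) := by
    intro ζ
    have h1 : Complex.normSq (c k * ζ k) = Complex.normSq (ζ k) := by
      rw [Complex.normSq_mul]
      simp only [hc]
      split_ifs <;> simp
    rw [h1]
    simp [hc, hij, _root_.map_mul, Complex.neg_re, mul_neg, neg_mul]
    ring
  simp only [hcomp] at h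
  rw [integral_neg] at h
  linarith

include hinv in
lemma vanish_s {i j : Fin n} (hij : i ≠ j) :
    ∫ ζ, ((ζ i * (starRingEnd ℂ) (ζ j)) ^ 2).re ∂μ = 0 := by
  set c : Fin n → ℂ := fun m => if m = j then Complex.I else 1 with hc
  have hcu : ∀ m, c m * (starRingEnd ℂ) (c m) = 1 := by
    intro m; simp only [hc]; split_ifs <;> simp [Complex.conj_I]
  have h := int_inv μ hinv ⟨Matrix.diagonal c, diag_mem c hcu⟩
    (fun ζ => ((ζ i * (starRingEnd ℂ) (ζ j)) ^ 2).re) (meas_s i j)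
  have hpt : ∀ ζ : Fin n → ℂ, ((Matrix.diagonal c) *ᵥ ζ) = fun m => c m * ζ m :=
    fun ζ => diag_mulVec c ζ
  simp only [hpt] at h
  have hcomp : ∀ ζ : Fin n → ℂ,
      (((c i * ζ i) * (starRingEnd ℂ) (c j * ζ j)) ^ 2).re
        = -(((ζ i * (starRingEnd ℂ) (ζ j)) ^ 2).re) := by
    intro ζ
    have key : ((c i * ζ i) * (starRingEnd ℂ) (c j * ζ j)) ^ 2
        = -((ζ i * (starRingEnd ℂ) (ζ j)) ^ 2) := by
      simp only [hc]
      simp only [if_neg hij, eq_self_iff_true, if_true, _root_.map_mul, Complex.conj_I, one_mul]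
      linear_combination (ζ i * (starRingEnd ℂ) (ζ j)) ^ 2 * Complex.I_sq
    rw [key, Complex.neg_re]
  simp only [hcomp] at h
  rw [integral_neg] at h
  linarith

lemma re_sq_helper (z : ℂ) : z.re * z.re = (Complex.normSq z + (z ^ 2).re) / 2 := by
  simp only [Complex.normSq_apply, pow_two, Complex.mul_re]
  ring

include hsupp hinv in
lemma rot_relation {i j : Fin n} (hij : i ≠ j) :
    ∫ ζ, Complex.normSq (ζ i) * Complex.normSq (ζ i) ∂μ
      = 2 * ∫ ζ, Complex.normSq (ζ i) * Complex.normSq (ζ j) ∂μ := by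
  have h := int_inv μ hinv ⟨rotM n i j, rotM_mem hij⟩
    (fun ζ => Complex.normSq (ζ i) * Complex.normSq (ζ i)) ((meas_x i).mul (meas_x i))
  have hpt : ∀ ζ : Fin n → ℂ,
      Complex.normSq (((rotM n i j) *ᵥ ζ) i) * Complex.normSq (((rotM n i j) *ᵥ ζ) i)
      = (Complex.normSq (ζ i) * Complex.normSq (ζ i)
          + Complex.normSq (ζ j) * Complex.normSq (ζ j)
          + 4 * (Complex.normSq (ζ i) * Complex.normSq (ζ j))) / 4
        + Complex.normSq (ζ i) * (ζ i * (starRingEnd ℂ) (ζ j)).re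
        + Complex.normSq (ζ j) * (ζ i * (starRingEnd ℂ) (ζ j)).re
        + ((ζ i * (starRingEnd ℂ) (ζ j)) ^ 2).re / 2 := by
    intro ζ
    have hval : ((rotM n i j) *ᵥ ζ) i = rr * (ζ i + ζ j) := by
      simpa using congrFun (rotM_mulVec hij ζ) i
    have hrr : Complex.normSq rr = 1 / 2 := by
      rw [rr, Complex.normSq_inv, Complex.normSq_ofReal,
        Real.mul_self_sqrt (by norm_num : (0:ℝ) ≤ 2)]
      norm_num
    have hre := re_sq_helper (ζ i * (starRingEnd ℂ) (ζ j))
    rw [Complex.normSq_mul, Complex.normSq_conj] at hre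
    rw [hval, Complex.normSq_mul, hrr, Complex.normSq_add]
    nlinarith [hre]
  simp only [hpt] at h
  have i1 := integ_xx μ hsupp i i
  have i2 := integ_xx μ hsupp j j
  have i3 := integ_xx μ hsupp i j
  have i4 := integ_xr μ hsupp i j i
  have i5 := integ_xr μ hsupp i j j
  have i6 := integ_s μ hsupp i j
  have h12 : Integrable (fun ζ : Fin n → ℂ => Complex.normSq (ζ i) * Complex.normSq (ζ i)
      + Complex.normSq (ζ j) * Complex.normSq (ζ j)) μ := i1.add i2
  have h124 : Integrable (fun ζ : Fin n → ℂ => Complex.normSq (ζ i) * Complex.normSq (ζ i)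
      + Complex.normSq (ζ j) * Complex.normSq (ζ j)
      + 4 * (Complex.normSq (ζ i) * Complex.normSq (ζ j))) μ := h12.add (i3.const_mul 4)
  have e1 := integral_add4' (ν := μ)
    (fun ζ => (Complex.normSq (ζ i) * Complex.normSq (ζ i)
          + Complex.normSq (ζ j) * Complex.normSq (ζ j)
          + 4 * (Complex.normSq (ζ i) * Complex.normSq (ζ j))) / 4)
    (fun ζ => Complex.normSq (ζ i) * (ζ i * (starRingEnd ℂ) (ζ j)).re)
    (fun ζ => Complex.normSq (ζ j) * (ζ i * (starRingEnd ℂ) (ζ j)).re)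
    (fun ζ => ((ζ i * (starRingEnd ℂ) (ζ j)) ^ 2).re / 2)
    (h124.div_const 4) i4 i5 (i6.div_const 2)
  rw [e1] at h
  beta_reduce at h
  rw [integral_div, integral_add h12 (i3.const_mul 4), integral_add i1 i2,
    integral_const_mul, integral_div] at h
  simp only [vanish_xr μ hinv hij i, vanish_xr μ hinv hij j,
    vanish_s μ hinv hij] at h
  have hswap : ∫ ζ, Complex.normSq (ζ j) * Complex.normSq (ζ j) ∂μ
      = ∫ ζ, Complex.normSq (ζ i) * Complex.normSq (ζ i) ∂μ := by
    have := permI μ hinv (Equiv.swap i j) i i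
    simpa [Equiv.swap_apply_left] using this
  rw [hswap] at h
  linarith

include hsupp in
lemma normalization :
    ∑ p : Fin n, ∑ q : Fin n, ∫ ζ, Complex.normSq (ζ p) * Complex.normSq (ζ q) ∂μ = 1 := by
  have hae : ∀ᵐ ζ ∂μ, (∑ i, Complex.normSq (ζ i)) = 1 := by
    rw [ae_iff]; rwa [Set.compl_setOf] at hsupp
  have h1 : ∫ ζ, (∑ p, Complex.normSq (ζ p)) * (∑ q, Complex.normSq (ζ q)) ∂μ = 1 := by
    rw [integral_congr_ae (g := fun _ => (1:ℝ)) ?_]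
    · simp
    · filter_upwards [hae] with ζ h
      rw [h]; norm_num
  rw [← h1]
  have e0 : ∀ ζ : Fin n → ℂ, (∑ p, Complex.normSq (ζ p)) * (∑ q, Complex.normSq (ζ q))
      = ∑ p, ∑ q, Complex.normSq (ζ p) * Complex.normSq (ζ q) := by
    intro ζ; rw [Finset.sum_mul_sum]
  simp only [e0]
  rw [integral_finset_sum _ (fun p _ => integrable_finset_sum _ (fun q _ => integ_xx μ hsupp p q))]
  exact Finset.sum_congr rfl fun p _ =>
    (integral_finset_sum _ (fun q _ => integ_xx μ hsupp p q)).symm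

include hsupp hinv in
lemma moments (hn : 0 < n) (i j : Fin n) :
    ∫ ζ, Complex.normSq (ζ i) * Complex.normSq (ζ j) ∂μ
      = (if i = j then 2 else 1) / (n * (n + 1)) := by
  rcases lt_or_ge n 2 with h2 | h2
  · have hn1 : n = 1 := by omega
    subst hn1
    have hnorm := normalization μ hsupp
    simp only [Fin.sum_univ_one] at hnorm
    have h0 : i = 0 := Subsingleton.elim i 0
    have h0' : j = 0 := Subsingleton.elim j 0
    rw [h0, h0', if_pos rfl, hnorm]
    norm_num
  · have hnR : (0:ℝ) < n := by exact_mod_cast hn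
    set u : Fin n := ⟨0, by omega⟩ with hu
    set v : Fin n := ⟨1, by omega⟩ with hv
    have huv : u ≠ v := by simp [hu, hv, Fin.ext_iff]
    set b := ∫ ζ, Complex.normSq (ζ u) * Complex.normSq (ζ v) ∂μ with hbdef
    have hdiag : ∀ p : Fin n,
        ∫ ζ, Complex.normSq (ζ p) * Complex.normSq (ζ p) ∂μ = 2 * b := by
      intro p
      have h1 : ∫ ζ, Complex.normSq (ζ p) * Complex.normSq (ζ p) ∂μ
          = ∫ ζ, Complex.normSq (ζ u) * Complex.normSq (ζ u) ∂μ := by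
        have := permI μ hinv (Equiv.swap u p) u u
        simpa [Equiv.swap_apply_left] using this
      rw [h1, rot_relation μ hsupp hinv huv]
    have hoff : ∀ p q : Fin n, p ≠ q →
        ∫ ζ, Complex.normSq (ζ p) * Complex.normSq (ζ q) ∂μ = b := by
      intro p q hpq
      set τ := Equiv.swap u p with hτ
      set w := τ q with hw
      have hwu : w ≠ u := by
        intro hcon
        apply hpq
        have h3 : τ w = τ u := congrArg τ hcon
        rw [hw, Equiv.swap_apply_self, Equiv.swap_apply_left] at h3
        exact h3.symm
      have hσu : ((Equiv.swap v w).trans τ) u = p := by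
        rw [Equiv.trans_apply, Equiv.swap_apply_of_ne_of_ne huv (Ne.symm hwu)]
        exact Equiv.swap_apply_left u p
      have hσv : ((Equiv.swap v w).trans τ) v = q := by
        rw [Equiv.trans_apply, Equiv.swap_apply_left, hw, Equiv.swap_apply_self]
      have h4 := permI μ hinv ((Equiv.swap v w).trans τ) u v
      rw [hσu, hσv] at h4
      exact h4
    have hnorm := normalization μ hsupp
    have hsum : ∀ p : Fin n,
        ∑ q, ∫ ζ, Complex.normSq (ζ p) * Complex.normSq (ζ q) ∂μ = ((n:ℝ) + 1) * b := by
      intro p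
      rw [← Finset.add_sum_erase _ _ (Finset.mem_univ p), hdiag p,
        Finset.sum_congr rfl (fun q hq => hoff p q (Ne.symm (Finset.ne_of_mem_erase hq))),
        Finset.sum_const, Finset.card_erase_of_mem (Finset.mem_univ p), Finset.card_univ,
        Fintype.card_fin, nsmul_eq_mul]
      push_cast [Nat.cast_sub (by omega : 1 ≤ n)]
      ring
    rw [Finset.sum_congr rfl (fun p _ => hsum p), Finset.sum_const, Finset.card_univ,
      Fintype.card_fin, nsmul_eq_mul] at hnorm
    have hb : b = 1 / ((n:ℝ) * ((n:ℝ) + 1)) := by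
      have hNpos : (0:ℝ) < (n:ℝ) * ((n:ℝ) + 1) := by nlinarith
      field_simp
      nlinarith [hnorm]
    by_cases hij : i = j
    · rw [if_pos hij]
      subst hij
      rw [hdiag i, hb]
      ring
    · rw [if_neg hij, hoff i j hij, hb]

end Moments

lemma final_algebra {n : ℕ} (N : ℝ) (lam : Fin n → ℝ) :
    ∑ k, ∑ l, (lam k * lam l) * ((if k = l then 2 else 1) / N)
      = ((∑ k, lam k ^ 2) + (∑ k, lam k) ^ 2) / N := by
  have key : ∀ k l : Fin n, (lam k * lam l) * ((if k = l then 2 else 1) / N)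
      = lam k * lam l / N + (if k = l then lam k * lam l / N else 0) := by
    intro k l; split_ifs with h <;> [skip; skip] <;> first | (subst h; ring) | ring
  simp only [key, Finset.sum_add_distrib, Finset.sum_ite_eq, Finset.mem_univ, if_true]
  rw [add_div, add_comm ((∑ k, lam k ^ 2) / N) _]
  congr 1
  · rw [pow_two, Finset.sum_mul_sum, Finset.sum_div]
    refine Finset.sum_congr rfl fun k _ => ?_
    rw [Finset.sum_div]
  · rw [Finset.sum_div]
    refine Finset.sum_congr rfl fun k _ => ?_
    rw [pow_two]

theorem stmt3 (n : ℕ) (hn : 0 < n) (μ : Measure (Fin n → ℂ)) [IsProbabilityMeasure μ]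
    -- μ is carried by the unit sphere S^{2n-1} ⊂ ℂ^n
    (hsupp : μ {ζ : Fin n → ℂ | ∑ i, Complex.normSq (ζ i) = 1}ᶜ = 0)
    -- μ is invariant under the unitary group U(n) (rotation invariance)
    (hinv : ∀ U : Matrix.unitaryGroup (Fin n) ℂ,
      μ.map (fun ζ => (U : Matrix (Fin n) (Fin n) ℂ).mulVec ζ) = μ)
    (A : Matrix (Fin n) (Fin n) ℂ) (hA : A.IsHermitian) :
    ∫ ζ, ‖∑ i, ∑ j, A i j * ζ i * (starRingEnd ℂ) (ζ j)‖ ^ 2 ∂μ =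
      ((∑ i, hA.eigenvalues i ^ 2) + (∑ i, hA.eigenvalues i) ^ 2) / (n * (n + 1)) := by
  classical
  set W : Matrix (Fin n) (Fin n) ℂ := (hA.eigenvectorUnitary : Matrix (Fin n) (Fin n) ℂ) with hW
  set V : Matrix (Fin n) (Fin n) ℂ := (star W)ᵀ with hVdef
  have hWU : W ∈ Matrix.unitaryGroup (Fin n) ℂ := hA.eigenvectorUnitary.2
  have hVH : Vᴴ = Wᵀ := by
    ext k l
    simp [hVdef, Matrix.conjTranspose_apply, Matrix.transpose_apply,
      Matrix.star_eq_conjTranspose]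
  have hVU : V ∈ Matrix.unitaryGroup (Fin n) ℂ := by
    rw [Matrix.mem_unitaryGroup_iff]
    rw [← Matrix.star_eq_conjTranspose] at hVH
    rw [hVH, hVdef, ← Matrix.transpose_mul, Matrix.mem_unitaryGroup_iff.mp hWU,
      Matrix.transpose_one]
  -- pointwise diagonalization
  have hdiagform : ∀ η : Fin n → ℂ,
      (∑ i, ∑ j, A i j * (V *ᵥ η) i * (starRingEnd ℂ) ((V *ᵥ η) j))
        = ((∑ k, hA.eigenvalues k * Complex.normSq (η k) : ℝ) : ℂ) := by
    intro η
    have hQdot : ∀ ζ : Fin n → ℂ, (∑ i, ∑ j, A i j * ζ i * (starRingEnd ℂ) (ζ j))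
        = dotProduct ζ (A *ᵥ (star ζ)) := by
      intro ζ
      rw [dotProduct]
      refine Finset.sum_congr rfl fun i _ => ?_
      rw [Matrix.mulVec, dotProduct, Finset.mul_sum]
      refine Finset.sum_congr rfl fun j _ => ?_
      simp only [Pi.star_apply, Complex.star_def]
      ring
    rw [hQdot]
    have hstarmul : star (V *ᵥ η) = W *ᵥ (star η) := by
      rw [Matrix.star_mulVec, hVH, Matrix.vecMul_transpose]
    rw [hstarmul, Matrix.mulVec_mulVec, dotProduct_comm, Matrix.dotProduct_mulVec]
    have hvm : ((A * W) *ᵥ (star η)) ᵥ* V = (star W * (A * W)) *ᵥ (star η) := by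
      rw [hVdef, Matrix.vecMul_transpose, Matrix.mulVec_mulVec]
    rw [hvm]
    have hdiag : star W * (A * W) = Matrix.diagonal (RCLike.ofReal ∘ hA.eigenvalues) := by
      rw [← Matrix.mul_assoc, hW]
      have := hA.conjStarAlgAut_star_eigenvectorUnitary
      rw [Unitary.conjStarAlgAut_star_apply] at this
      exact this
    rw [hdiag, dotProduct]
    push_cast
    refine Finset.sum_congr rfl fun k _ => ?_
    rw [Matrix.mulVec_diagonal]
    have hcc : (star η) k * η k = ((Complex.normSq (η k) : ℝ) : ℂ) := by
      rw [Pi.star_apply, Complex.star_def, mul_comm, Complex.mul_conj]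
    rw [mul_assoc, hcc]
    simp only [Function.comp_apply]
    first
    | (simp [RCLike.ofReal_alg]; done)
    | (push_cast; ring)
    | norm_cast
  -- measurability of the integrand
  have hQm : Measurable (fun ζ : Fin n → ℂ =>
      (∑ i, ∑ j, A i j * ζ i * (starRingEnd ℂ) (ζ j))) := by
    refine Finset.measurable_sum _ fun i _ => Finset.measurable_sum _ fun j _ => ?_
    exact (measurable_const.mul (measurable_pi_apply i)).mul
      (Complex.continuous_conj.measurable.comp (measurable_pi_apply j))
  have hgm : Measurable (fun ζ : Fin n → ℂ =>
      ‖∑ i, ∑ j, A i j * ζ i * (starRingEnd ℂ) (ζ j)‖ ^ 2) :=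
    (continuous_norm.measurable.comp hQm).pow_const 2
  have hinv1 := int_inv μ hinv ⟨V, hVU⟩
    (fun ζ => ‖∑ i, ∑ j, A i j * ζ i * (starRingEnd ℂ) (ζ j)‖ ^ 2) hgm
  rw [← hinv1]
  beta_reduce
  have hpt2 : ∀ η : Fin n → ℂ,
      ‖∑ i, ∑ j, A i j * (V *ᵥ η) i * (starRingEnd ℂ) ((V *ᵥ η) j)‖ ^ 2
        = ∑ k, ∑ l, (hA.eigenvalues k * hA.eigenvalues l)
            * (Complex.normSq (η k) * Complex.normSq (η l)) := by
    intro η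
    rw [hdiagform η, Complex.norm_real, Real.norm_eq_abs, sq_abs, pow_two, Finset.sum_mul_sum]
    refine Finset.sum_congr rfl fun k _ => Finset.sum_congr rfl fun l _ => ?_
    ring
  simp only [hpt2]
  rw [integral_finset_sum _ (fun k _ => integrable_finset_sum _
    (fun l _ => (integ_xx μ hsupp k l).const_mul _))]
  rw [Finset.sum_congr rfl (fun k (_ : k ∈ Finset.univ) => integral_finset_sum _
    (fun l _ => (integ_xx μ hsupp k l).const_mul _))]
  simp only [integral_const_mul]
  simp only [moments μ hsupp hinv hn]
  exact final_algebra _ _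
end

section
/- Let A be a Hermitian operator on ℂ^n with operator norm ‖A‖ = max_i |λ_i|. Then (1/n²)‖A‖² ≤ ∫_{S^{2n-1}} |Q_A(ζ)|² dμ(ζ) ≤ ‖A‖², where μ is the rotation-invariant probability measure on the unit sphere and Q_A(ζ)=⟨Aζ,ζ⟩. -/
open MeasureTheory Matrix

set_option linter.unusedSectionVars false
set_option maxHeartbeats 1000000

namespace Stmt4Aux

variable {n : ℕ}




/-- generic 2x2 block matrix acting on coordinates i,j -/
def blk (i j : Fin n) (α β γ δ : ℂ) : Matrix (Fin n) (Fin n) ℂ :=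
  fun k l => if k = i then (if l = i then α else if l = j then β else 0)
    else if k = j then (if l = i then γ else if l = j then δ else 0)
    else if l = k then 1 else 0

lemma sum_pair_prod {i j : Fin n} (hij : i ≠ j) (f : Fin n → ℂ)
    (hf : ∀ x, x ≠ i → x ≠ j → f x = 0) : ∑ m, f m = f i + f j := by
  rw [← Finset.sum_sdiff (Finset.subset_univ {i, j}), Finset.sum_pair hij,
    Finset.sum_eq_zero, zero_add]
  intro x hx
  simp only [Finset.mem_sdiff, Finset.mem_insert, Finset.mem_singleton, not_or] at hx
  exact hf x hx.2.1 hx.2.2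

lemma sum_single (k : Fin n) (f : Fin n → ℂ) (hf : ∀ x, x ≠ k → f x = 0) :
    ∑ m, f m = f k := by
  rw [← Finset.sum_subset (Finset.subset_univ {k}), Finset.sum_singleton]
  intro x _ hx
  exact hf x (by simpa using hx)

lemma blk_mulVec {i j : Fin n} (hij : i ≠ j) (α β γ δ : ℂ) (ζ : Fin n → ℂ) :
    (blk i j α β γ δ) *ᵥ ζ = fun k =>
      if k = i then α * ζ i + β * ζ j else if k = j then γ * ζ i + δ * ζ j else ζ k := by
  funext k
  simp only [Matrix.mulVec, dotProduct]
  rcases eq_or_ne k i with hk | hk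
  · rw [hk, if_pos rfl, sum_pair_prod hij _ (fun x hx1 hx2 => by simp [blk, hx1, hx2])]
    simp [blk, hij, hij.symm]
  · rcases eq_or_ne k j with hk2 | hk2
    · rw [hk2, if_neg (hk2 ▸ hk), if_pos rfl,
        sum_pair_prod hij _ (fun x hx1 hx2 => by simp [blk, hij.symm, hx1, hx2])]
      simp [blk, hij, hij.symm]
    · rw [if_neg hk, if_neg hk2, sum_single k _ (fun x hx => by simp [blk, hk, hk2, hx])]
      simp [blk, hk, hk2]

lemma blk_mem_unitary {i j : Fin n} (hij : i ≠ j) {α β γ δ : ℂ}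
    (h1 : α * (starRingEnd ℂ) α + β * (starRingEnd ℂ) β = 1)
    (h2 : γ * (starRingEnd ℂ) γ + δ * (starRingEnd ℂ) δ = 1)
    (h3 : α * (starRingEnd ℂ) γ + β * (starRingEnd ℂ) δ = 0) :
    blk i j α β γ δ ∈ Matrix.unitaryGroup (Fin n) ℂ := by
  have h3' : γ * (starRingEnd ℂ) α + δ * (starRingEnd ℂ) β = 0 := by
    have h := congrArg (starRingEnd ℂ) h3
    simp only [map_add, _root_.map_mul, Complex.conj_conj, map_zero] at h
    linear_combination h
  rw [Matrix.mem_unitaryGroup_iff]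
  ext k l
  rw [Matrix.mul_apply]
  simp only [Matrix.star_apply, Complex.star_def]
  rcases eq_or_ne k i with hki | hki
  · rcases eq_or_ne l i with hli | hli
    · rw [hki, hli, sum_pair_prod hij _ (fun x hx1 hx2 => by simp [blk, hx1, hx2])]
      simp [blk, hij, hij.symm, Matrix.one_apply]
      linear_combination h1
    · rcases eq_or_ne l j with hlj | hlj
      · rw [hki, hlj, sum_pair_prod hij _ (fun x hx1 hx2 => by simp [blk, hx1, hx2])]
        simp [blk, hij, hij.symm, Matrix.one_apply]
        linear_combination h3
      · rw [hki, sum_pair_prod hij _ (fun x hx1 hx2 => by simp [blk, hx1, hx2])]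
        simp [blk, hij, hij.symm, hli, hlj, Ne.symm hli, Ne.symm hlj, Matrix.one_apply]
  · rcases eq_or_ne k j with hkj | hkj
    · rcases eq_or_ne l i with hli | hli
      · rw [hkj, hli, sum_pair_prod hij _ (fun x hx1 hx2 => by simp [blk, hij.symm, hx1, hx2])]
        simp [blk, hij, hij.symm, Matrix.one_apply]
        linear_combination h3'
      · rcases eq_or_ne l j with hlj | hlj
        · rw [hkj, hlj, sum_pair_prod hij _ (fun x hx1 hx2 => by simp [blk, hij.symm, hx1, hx2])]
          simp [blk, hij, hij.symm, Matrix.one_apply]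
          linear_combination h2
        · rw [hkj, sum_pair_prod hij _ (fun x hx1 hx2 => by simp [blk, hij.symm, hx1, hx2])]
          simp [blk, hij, hij.symm, hli, hlj, Ne.symm hli, Ne.symm hlj, Matrix.one_apply]
    · rcases eq_or_ne l i with hli | hli
      · rw [hli, sum_single k _ (fun x hx => by simp [blk, hki, hkj, hx])]
        simp [blk, hki, hkj, Ne.symm hki, Matrix.one_apply]
      · rcases eq_or_ne l j with hlj | hlj
        · rw [hlj, sum_single k _ (fun x hx => by simp [blk, hki, hkj, hx])]
          simp [blk, hki, hkj, hij.symm, Ne.symm hkj, Matrix.one_apply]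
        · rw [sum_single k _ (fun x hx => by simp [blk, hki, hkj, hx])]
          simp [blk, hki, hkj, hli, hlj, Matrix.one_apply, eq_comm]







section Meas

variable (μ : Measure (Fin n → ℂ)) [IsProbabilityMeasure μ]

lemma ae_sphere (hsupp : μ {ζ : Fin n → ℂ | ∑ i, Complex.normSq (ζ i) = 1}ᶜ = 0) :
    ∀ᵐ ζ ∂μ, ∑ i, Complex.normSq (ζ i) = 1 := by
  rw [ae_iff]
  convert hsupp using 2
  rfl

lemma normSq_le_one {ζ : Fin n → ℂ} (h : ∑ i, Complex.normSq (ζ i) = 1) (i : Fin n) :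
    Complex.normSq (ζ i) ≤ 1 := by
  rw [← h]
  exact Finset.single_le_sum (fun k _ => Complex.normSq_nonneg (ζ k)) (Finset.mem_univ i)

lemma integ (hsupp : μ {ζ : Fin n → ℂ | ∑ i, Complex.normSq (ζ i) = 1}ᶜ = 0)
    {g : (Fin n → ℂ) → ℝ} (hg : Continuous g) {C : ℝ}
    (hb : ∀ ζ : Fin n → ℂ, (∑ i, Complex.normSq (ζ i)) = 1 → |g ζ| ≤ C) :
    Integrable g μ :=
  ⟨hg.aestronglyMeasurable, HasFiniteIntegral.of_bounded
    (C := C) ((ae_sphere μ hsupp).mono fun ζ h => by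
      simpa [Real.norm_eq_abs] using hb ζ h)⟩

lemma intinv
    (hinv : ∀ U : Matrix.unitaryGroup (Fin n) ℂ,
      μ.map (fun ζ => (U : Matrix (Fin n) (Fin n) ℂ).mulVec ζ) = μ)
    (U : Matrix.unitaryGroup (Fin n) ℂ) {g : (Fin n → ℂ) → ℝ} (hg : Continuous g) :
    ∫ ζ, g ((U : Matrix (Fin n) (Fin n) ℂ) *ᵥ ζ) ∂μ = ∫ ζ, g ζ ∂μ := by
  have hc : Continuous (fun ζ : Fin n → ℂ => (U : Matrix (Fin n) (Fin n) ℂ) *ᵥ ζ) := by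
    exact continuous_const.matrix_mulVec continuous_id
  conv_rhs => rw [← hinv U]
  rw [integral_map hc.aemeasurable hg.aestronglyMeasurable]

end Meas







section Ptwise

open Complex

lemma ptwiseP (u v : ℂ) :
    normSq (u+v) ^ 2 + normSq (u-v) ^ 2 + normSq (I*u+v) ^ 2 + normSq (I*u-v) ^ 2
      = 4*(normSq u + normSq v)^2 + 8*(normSq u * normSq v) := by
  have h1 := Complex.normSq_add u v
  have h2 := Complex.normSq_sub u v
  have h3 := Complex.normSq_add (I*u) v
  have h4 := Complex.normSq_sub (I*u) v
  have h5 : Complex.normSq (I*u) = normSq u := by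
    rw [Complex.normSq_mul, Complex.normSq_I, one_mul]
  have h6 : ((I*u) * (starRingEnd ℂ) v).re = -((u * (starRingEnd ℂ) v).im) := by
    rw [mul_assoc]
    simp [Complex.mul_re, Complex.I_re, Complex.I_im]
  have h7 : (u*(starRingEnd ℂ) v).re^2 + (u*(starRingEnd ℂ) v).im^2 = normSq u * normSq v := by
    have := Complex.normSq_apply (u * (starRingEnd ℂ) v)
    rw [Complex.normSq_mul, Complex.normSq_conj] at this
    nlinarith [this]
  rw [h1, h2, h3, h4, h5, h6]
  linear_combination 8*h7

lemma bound_helper {a b w1 w2 : ℂ} (ha : ‖a‖ ≤ 1) (hb : ‖b‖ ≤ 1)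
    (h1 : normSq w1 ≤ 1) (h2 : normSq w2 ≤ 1) :
    |normSq (a*w1 + b*w2) * normSq (a*w1 + b*w2)| ≤ 16 := by
  have hw1 : ‖w1‖ ≤ 1 := by
    rw [Complex.norm_def]; exact Real.sqrt_le_one.mpr (by simpa using h1)
  have hw2 : ‖w2‖ ≤ 1 := by
    rw [Complex.norm_def]; exact Real.sqrt_le_one.mpr (by simpa using h2)
  have habs : ‖a*w1 + b*w2‖ ≤ 2 := by
    refine le_trans (norm_add_le _ _) ?_
    rw [norm_mul, norm_mul]
    nlinarith [norm_nonneg a, norm_nonneg b, norm_nonneg w1,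
      norm_nonneg w2]
  have hn4 : normSq (a*w1+b*w2) ≤ 4 := by
    rw [← Complex.sq_norm]
    nlinarith [norm_nonneg (a*w1+b*w2)]
  rw [_root_.abs_of_nonneg (mul_nonneg (normSq_nonneg _) (normSq_nonneg _))]
  nlinarith [Complex.normSq_nonneg (a*w1+b*w2)]

end Ptwise


section Moments

open Complex

variable (μ : Measure (Fin n → ℂ)) [IsProbabilityMeasure μ]
  (hsupp : μ {ζ : Fin n → ℂ | ∑ i, Complex.normSq (ζ i) = 1}ᶜ = 0)
  (hinv : ∀ U : Matrix.unitaryGroup (Fin n) ℂ,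
      μ.map (fun ζ => (U : Matrix (Fin n) (Fin n) ℂ).mulVec ζ) = μ)

include hsupp hinv

lemma mom_int (i j : Fin n) :
    Integrable (fun ζ : Fin n → ℂ => normSq (ζ i) * normSq (ζ j)) μ := by
  refine integ μ hsupp ?_ (C := 1) ?_
  · exact (Complex.continuous_normSq.comp (continuous_apply i)).mul
      (Complex.continuous_normSq.comp (continuous_apply j))
  · intro ζ h
    rw [_root_.abs_of_nonneg (mul_nonneg (normSq_nonneg _) (normSq_nonneg _))]
    nlinarith [normSq_le_one h i, normSq_le_one h j, normSq_nonneg (ζ i), normSq_nonneg (ζ j)]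

lemma diag_eq (i j : Fin n) :
    ∫ ζ, normSq (ζ i) * normSq (ζ i) ∂μ = ∫ ζ, normSq (ζ j) * normSq (ζ j) ∂μ := by
  rcases eq_or_ne i j with h | h
  · rw [h]
  · have hU := blk_mem_unitary h (α := 0) (β := 1) (γ := 1) (δ := 0)
      (by simp) (by simp) (by simp)
    have := intinv μ hinv ⟨_, hU⟩
      (g := fun ζ : Fin n → ℂ => normSq (ζ i) * normSq (ζ i))
      ((Complex.continuous_normSq.comp (continuous_apply i)).mul
        (Complex.continuous_normSq.comp (continuous_apply i)))
    rw [← this]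
    refine integral_congr_ae (Filter.Eventually.of_forall fun ζ => ?_)
    simp only [blk_mulVec h, if_pos rfl]
    simp

lemma offdiag (i j : Fin n) (hij : i ≠ j) :
    ∫ ζ, normSq (ζ i) * normSq (ζ j) ∂μ =
      (∫ ζ, normSq (ζ i) * normSq (ζ i) ∂μ) / 2 := by
  set c₀ : ℝ := (Real.sqrt 2)⁻¹ with hc₀
  have hc0pos : 0 < c₀ := by positivity
  have hc01 : c₀ ≤ 1 := by
    rw [hc₀]
    rw [inv_le_one_iff₀]
    right
    nlinarith [Real.sq_sqrt (by norm_num : (2:ℝ) ≥ 0), Real.sqrt_nonneg 2]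
  have hcc : c₀ * c₀ = 1/2 := by
    rw [hc₀, ← mul_inv, Real.mul_self_sqrt (by norm_num)]
    norm_num
  set c : ℂ := (c₀ : ℂ) with hc
  have hcC : c * c = 1/2 := by
    rw [hc, ← Complex.ofReal_mul, hcc]; norm_num
  have habsc : ‖c‖ = c₀ := by
    rw [hc, Complex.norm_real, Real.norm_of_nonneg hc0pos.le]
  have hconj : (starRingEnd ℂ) c = c := by rw [hc, Complex.conj_ofReal]
  -- the two unitaries
  have hns : normSq c = 1/2 := by rw [hc, Complex.normSq_ofReal, hcc]
  have hnsI : normSq (c*I) = 1/2 := by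
    rw [Complex.normSq_mul, Complex.normSq_I, hns, mul_one]
  have hconjI : (starRingEnd ℂ) (c*I) = -(c*I) := by
    rw [map_mul (starRingEnd ℂ) c I, hconj, Complex.conj_I, mul_neg]
  have hU1 := blk_mem_unitary hij (α := c) (β := c) (γ := c) (δ := -c)
    (by rw [hconj]; linear_combination 2*hcC)
    (by rw [map_neg, hconj]; linear_combination 2*hcC)
    (by rw [map_neg, hconj]; ring)
  have hU2 := blk_mem_unitary hij (α := c*I) (β := c) (γ := c*I) (δ := -c)
    (by rw [hconjI, hconj]
        linear_combination (-(c*c)) * Complex.I_mul_I + 2*hcC)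
    (by rw [hconjI, map_neg, hconj]
        linear_combination (-(c*c)) * Complex.I_mul_I + 2*hcC)
    (by rw [hconjI, map_neg, hconj]
        linear_combination (-(c*c)) * Complex.I_mul_I)
  -- continuity of the quartic integrands
  have cont2 : ∀ a b : ℂ, Continuous
      (fun ζ : Fin n → ℂ => normSq (a * ζ i + b * ζ j) * normSq (a * ζ i + b * ζ j)) := by
    intro a b
    have h : Continuous (fun ζ : Fin n → ℂ => a * ζ i + b * ζ j) :=
      (continuous_const.mul (continuous_apply i)).add (continuous_const.mul (continuous_apply j))
    exact (Complex.continuous_normSq.comp h).mul (Complex.continuous_normSq.comp h)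
  have int2 : ∀ a b : ℂ, ‖a‖ ≤ 1 → ‖b‖ ≤ 1 → Integrable
      (fun ζ : Fin n → ℂ => normSq (a * ζ i + b * ζ j) * normSq (a * ζ i + b * ζ j)) μ := by
    intro a b ha hb
    exact integ μ hsupp (cont2 a b) (C := 16)
      (fun ζ h => bound_helper ha hb (normSq_le_one h i) (normSq_le_one h j))
  have habsI : ‖c*I‖ ≤ 1 := by
    rw [norm_mul, Complex.norm_I, mul_one, habsc]; exact hc01
  have habsc' : ‖c‖ ≤ 1 := by rw [habsc]; exact hc01
  have habsnc : ‖-c‖ ≤ 1 := by rw [norm_neg]; exact habsc'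
  -- four invariance identities
  have E1 : ∫ ζ, normSq (c * ζ i + c * ζ j) * normSq (c * ζ i + c * ζ j) ∂μ
      = ∫ ζ, normSq (ζ i) * normSq (ζ i) ∂μ := by
    rw [← intinv μ hinv ⟨_, hU1⟩
      (g := fun ζ : Fin n → ℂ => normSq (ζ i) * normSq (ζ i))
      ((Complex.continuous_normSq.comp (continuous_apply i)).mul
        (Complex.continuous_normSq.comp (continuous_apply i)))]
    refine integral_congr_ae (Filter.Eventually.of_forall fun ζ => ?_)
    simp [blk_mulVec hij, hij.symm]
  have E2 : ∫ ζ, normSq (c * ζ i + (-c) * ζ j) * normSq (c * ζ i + (-c) * ζ j) ∂μ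
      = ∫ ζ, normSq (ζ j) * normSq (ζ j) ∂μ := by
    rw [← intinv μ hinv ⟨_, hU1⟩
      (g := fun ζ : Fin n → ℂ => normSq (ζ j) * normSq (ζ j))
      ((Complex.continuous_normSq.comp (continuous_apply j)).mul
        (Complex.continuous_normSq.comp (continuous_apply j)))]
    refine integral_congr_ae (Filter.Eventually.of_forall fun ζ => ?_)
    simp [blk_mulVec hij, hij.symm]
  have E3 : ∫ ζ, normSq ((c*I) * ζ i + c * ζ j) * normSq ((c*I) * ζ i + c * ζ j) ∂μ
      = ∫ ζ, normSq (ζ i) * normSq (ζ i) ∂μ := by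
    rw [← intinv μ hinv ⟨_, hU2⟩
      (g := fun ζ : Fin n → ℂ => normSq (ζ i) * normSq (ζ i))
      ((Complex.continuous_normSq.comp (continuous_apply i)).mul
        (Complex.continuous_normSq.comp (continuous_apply i)))]
    refine integral_congr_ae (Filter.Eventually.of_forall fun ζ => ?_)
    simp [blk_mulVec hij, hij.symm]
  have E4 : ∫ ζ, normSq ((c*I) * ζ i + (-c) * ζ j) * normSq ((c*I) * ζ i + (-c) * ζ j) ∂μ
      = ∫ ζ, normSq (ζ j) * normSq (ζ j) ∂μ := by
    rw [← intinv μ hinv ⟨_, hU2⟩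
      (g := fun ζ : Fin n → ℂ => normSq (ζ j) * normSq (ζ j))
      ((Complex.continuous_normSq.comp (continuous_apply j)).mul
        (Complex.continuous_normSq.comp (continuous_apply j)))]
    refine integral_congr_ae (Filter.Eventually.of_forall fun ζ => ?_)
    simp [blk_mulVec hij, hij.symm]
  -- pointwise identity
  have key : ∀ ζ : Fin n → ℂ,
      normSq (c * ζ i + c * ζ j) * normSq (c * ζ i + c * ζ j)
      + normSq (c * ζ i + (-c) * ζ j) * normSq (c * ζ i + (-c) * ζ j)
      + normSq ((c*I) * ζ i + c * ζ j) * normSq ((c*I) * ζ i + c * ζ j)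
      + normSq ((c*I) * ζ i + (-c) * ζ j) * normSq ((c*I) * ζ i + (-c) * ζ j)
      = normSq (ζ i) * normSq (ζ i) + normSq (ζ j) * normSq (ζ j)
        + 4 * (normSq (ζ i) * normSq (ζ j)) := by
    intro ζ
    have hP := ptwiseP (ζ i) (ζ j)
    have e1 : c * ζ i + c * ζ j = c * (ζ i + ζ j) := by ring
    have e2 : c * ζ i + (-c) * ζ j = c * (ζ i - ζ j) := by ring
    have e3 : (c*I) * ζ i + c * ζ j = c * (I * ζ i + ζ j) := by ring
    have e4 : (c*I) * ζ i + (-c) * ζ j = c * (I * ζ i - ζ j) := by ring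
    have hnc : normSq c = 1/2 := by
      rw [hc, Complex.normSq_ofReal, hcc]
    rw [e1, e2, e3, e4, Complex.normSq_mul, Complex.normSq_mul, Complex.normSq_mul,
      Complex.normSq_mul, hnc]
    nlinarith [hP]
  -- combine
  have i11 := mom_int μ hsupp hinv i i
  have i22 := mom_int μ hsupp hinv j j
  have i12 := mom_int μ hsupp hinv i j
  have q1 := int2 c c habsc' habsc'
  have q2 := int2 c (-c) habsc' habsnc
  have q3 := int2 (c*I) c habsI habsc'
  have q4 := int2 (c*I) (-c) habsI habsnc
  have hA4 : ∫ ζ, (normSq (c * ζ i + c * ζ j) * normSq (c * ζ i + c * ζ j)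
      + normSq (c * ζ i + (-c) * ζ j) * normSq (c * ζ i + (-c) * ζ j)
      + normSq ((c*I) * ζ i + c * ζ j) * normSq ((c*I) * ζ i + c * ζ j)
      + normSq ((c*I) * ζ i + (-c) * ζ j) * normSq ((c*I) * ζ i + (-c) * ζ j)) ∂μ
      = (∫ ζ, (normSq (c * ζ i + c * ζ j) * normSq (c * ζ i + c * ζ j)
          + normSq (c * ζ i + (-c) * ζ j) * normSq (c * ζ i + (-c) * ζ j)
          + normSq ((c*I) * ζ i + c * ζ j) * normSq ((c*I) * ζ i + c * ζ j)) ∂μ)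
        + ∫ ζ, normSq ((c*I) * ζ i + (-c) * ζ j) * normSq ((c*I) * ζ i + (-c) * ζ j) ∂μ :=
    integral_add ((q1.add q2).add q3) q4
  have hA3 : ∫ ζ, (normSq (c * ζ i + c * ζ j) * normSq (c * ζ i + c * ζ j)
      + normSq (c * ζ i + (-c) * ζ j) * normSq (c * ζ i + (-c) * ζ j)
      + normSq ((c*I) * ζ i + c * ζ j) * normSq ((c*I) * ζ i + c * ζ j)) ∂μ
      = (∫ ζ, (normSq (c * ζ i + c * ζ j) * normSq (c * ζ i + c * ζ j)
          + normSq (c * ζ i + (-c) * ζ j) * normSq (c * ζ i + (-c) * ζ j)) ∂μ)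
        + ∫ ζ, normSq ((c*I) * ζ i + c * ζ j) * normSq ((c*I) * ζ i + c * ζ j) ∂μ :=
    integral_add (q1.add q2) q3
  have hA2 : ∫ ζ, (normSq (c * ζ i + c * ζ j) * normSq (c * ζ i + c * ζ j)
      + normSq (c * ζ i + (-c) * ζ j) * normSq (c * ζ i + (-c) * ζ j)) ∂μ
      = (∫ ζ, normSq (c * ζ i + c * ζ j) * normSq (c * ζ i + c * ζ j) ∂μ)
        + ∫ ζ, normSq (c * ζ i + (-c) * ζ j) * normSq (c * ζ i + (-c) * ζ j) ∂μ :=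
    integral_add q1 q2
  have hB2 : ∫ ζ, (normSq (ζ i) * normSq (ζ i) + normSq (ζ j) * normSq (ζ j)
      + 4 * (normSq (ζ i) * normSq (ζ j))) ∂μ
      = (∫ ζ, (normSq (ζ i) * normSq (ζ i) + normSq (ζ j) * normSq (ζ j)) ∂μ)
        + ∫ ζ, 4 * (normSq (ζ i) * normSq (ζ j)) ∂μ :=
    integral_add (i11.add i22) (i12.const_mul 4)
  have hB1 : ∫ ζ, (normSq (ζ i) * normSq (ζ i) + normSq (ζ j) * normSq (ζ j)) ∂μ
      = (∫ ζ, normSq (ζ i) * normSq (ζ i) ∂μ) + ∫ ζ, normSq (ζ j) * normSq (ζ j) ∂μ :=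
    integral_add i11 i22
  have hB0 : ∫ ζ, 4 * (normSq (ζ i) * normSq (ζ j)) ∂μ
      = 4 * ∫ ζ, normSq (ζ i) * normSq (ζ j) ∂μ := integral_const_mul 4 _
  have hAB : ∫ ζ, (normSq (c * ζ i + c * ζ j) * normSq (c * ζ i + c * ζ j)
      + normSq (c * ζ i + (-c) * ζ j) * normSq (c * ζ i + (-c) * ζ j)
      + normSq ((c*I) * ζ i + c * ζ j) * normSq ((c*I) * ζ i + c * ζ j)
      + normSq ((c*I) * ζ i + (-c) * ζ j) * normSq ((c*I) * ζ i + (-c) * ζ j)) ∂μ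
      = ∫ ζ, (normSq (ζ i) * normSq (ζ i) + normSq (ζ j) * normSq (ζ j)
      + 4 * (normSq (ζ i) * normSq (ζ j))) ∂μ :=
    integral_congr_ae (Filter.Eventually.of_forall key)
  have hd := diag_eq μ hsupp hinv i j
  rw [hAB, hB2, hB1, hB0] at hA4
  rw [hA3, hA2, E1, E2, E3, E4] at hA4
  linarith [hA4, hd]

lemma total : ∑ i : Fin n, ∑ j : Fin n, ∫ ζ, normSq (ζ i) * normSq (ζ j) ∂μ = 1 := by
  have e1 : ∀ i : Fin n, ∑ j : Fin n, ∫ ζ, normSq (ζ i) * normSq (ζ j) ∂μ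
      = ∫ ζ, (∑ j, normSq (ζ i) * normSq (ζ j)) ∂μ := fun i =>
    (integral_finset_sum _ (fun j _ => mom_int μ hsupp hinv i j)).symm
  rw [Finset.sum_congr rfl fun i _ => e1 i,
    ← integral_finset_sum _ (fun i _ =>
      integrable_finset_sum _ (fun j _ => mom_int μ hsupp hinv i j))]
  have e2 : ∫ ζ, (∑ i : Fin n, ∑ j : Fin n, normSq (ζ i) * normSq (ζ j)) ∂μ
      = ∫ _ζ, (1:ℝ) ∂μ := by
    refine integral_congr_ae ((ae_sphere μ hsupp).mono fun ζ h => ?_)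
    show ∑ i : Fin n, ∑ j : Fin n, normSq (ζ i) * normSq (ζ j) = 1
    rw [← Finset.sum_mul_sum, h, one_mul]
  rw [e2]
  simp

lemma m_diag_val (hn : 0 < n) (i : Fin n) :
    ∫ ζ, normSq (ζ i) * normSq (ζ i) ∂μ = 2/((n:ℝ)*(n+1)) := by
  set a : ℝ := ∫ ζ, normSq (ζ i) * normSq (ζ i) ∂μ with ha
  have hdiag : ∀ k : Fin n, ∫ ζ, normSq (ζ k) * normSq (ζ k) ∂μ = a :=
    fun k => diag_eq μ hsupp hinv k i
  have hrow : ∀ k : Fin n, ∑ l : Fin n, ∫ ζ, normSq (ζ k) * normSq (ζ l) ∂μ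
      = (n:ℝ) * (a/2) + a/2 := by
    intro k
    have hterm : ∀ l : Fin n, (∫ ζ, normSq (ζ k) * normSq (ζ l) ∂μ)
        = a/2 + (if k = l then a/2 else 0) := by
      intro l
      rcases eq_or_ne l k with h | h
      · rw [h, hdiag k]; simp
      · rw [offdiag μ hsupp hinv k l (Ne.symm h), hdiag k, if_neg (Ne.symm h), add_zero]
    rw [Finset.sum_congr rfl fun l _ => hterm l, Finset.sum_add_distrib, Finset.sum_const,
      Finset.sum_ite_eq Finset.univ k (fun _ => a/2)]
    simp [Finset.card_univ, nsmul_eq_mul]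
  have htot := total μ hsupp hinv
  rw [Finset.sum_congr rfl fun k (_ : k ∈ Finset.univ) => hrow k, Finset.sum_const,
    Finset.card_univ, Fintype.card_fin, nsmul_eq_mul] at htot
  have hn' : (1:ℝ) ≤ (n:ℝ) := by exact_mod_cast hn
  rw [ha, eq_div_iff (by positivity)]
  linear_combination (2:ℝ) * htot

lemma m_off_val (hn : 0 < n) (i j : Fin n) (hij : i ≠ j) :
    ∫ ζ, normSq (ζ i) * normSq (ζ j) ∂μ = 1/((n:ℝ)*(n+1)) := by
  rw [offdiag μ hsupp hinv i j hij, m_diag_val μ hsupp hinv hn i]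
  ring

lemma quad_int (hn : 0 < n) (lam : Fin n → ℝ) :
    ∫ ζ, (∑ i, lam i * normSq (ζ i))^2 ∂μ
      = ((∑ i, lam i)^2 + ∑ i, (lam i)^2) / ((n:ℝ)*(n+1)) := by
  have hptw : ∀ ζ : Fin n → ℂ, (∑ i, lam i * normSq (ζ i))^2
      = ∑ i : Fin n, ∑ j : Fin n, lam i * lam j * (normSq (ζ i) * normSq (ζ j)) := by
    intro ζ
    rw [sq, Finset.sum_mul_sum]
    exact Finset.sum_congr rfl fun i _ => Finset.sum_congr rfl fun j _ => by ring
  rw [integral_congr_ae (Filter.Eventually.of_forall hptw)]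
  rw [integral_finset_sum _ (fun i _ => integrable_finset_sum _
    (fun j _ => (mom_int μ hsupp hinv i j).const_mul (lam i * lam j)))]
  rw [Finset.sum_congr rfl fun i (_ : i ∈ Finset.univ) => integral_finset_sum Finset.univ
    (fun j _ => (mom_int μ hsupp hinv i j).const_mul (lam i * lam j))]
  have hterm : ∀ i j : Fin n, ∫ ζ, lam i * lam j * (normSq (ζ i) * normSq (ζ j)) ∂μ
      = lam i * lam j * ∫ ζ, normSq (ζ i) * normSq (ζ j) ∂μ := fun i j =>
    integral_const_mul _ _
  have hval : ∀ i j : Fin n, (∫ ζ, normSq (ζ i) * normSq (ζ j) ∂μ)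
      = 1/((n:ℝ)*(n+1)) * (1 + if i = j then 1 else 0) := by
    intro i j
    rcases eq_or_ne i j with h | h
    · rw [h, m_diag_val μ hsupp hinv hn j, if_pos rfl]; ring
    · rw [m_off_val μ hsupp hinv hn i j h, if_neg h]; ring
  rw [Finset.sum_congr rfl fun i _ => Finset.sum_congr rfl fun j (_ : j ∈ Finset.univ) => by
    rw [hterm i j, hval i j]]
  have hsplit : ∀ i : Fin n, ∑ j : Fin n,
      lam i * lam j * (1/((n:ℝ)*(n+1)) * (1 + if i = j then 1 else 0))
      = (1/((n:ℝ)*(n+1))) * (lam i * (∑ j, lam j)) + (1/((n:ℝ)*(n+1))) * (lam i * lam i) := by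
    intro i
    have : ∀ j : Fin n, lam i * lam j * (1/((n:ℝ)*(n+1)) * (1 + if i = j then 1 else 0))
        = (1/((n:ℝ)*(n+1))) * (lam i * lam j)
          + (if i = j then (1/((n:ℝ)*(n+1))) * (lam i * lam j) else 0) := by
      intro j
      rcases eq_or_ne i j with h | h
      · rw [if_pos h, if_pos h]; ring
      · rw [if_neg h, if_neg h]; ring
    rw [Finset.sum_congr rfl fun j _ => this j, Finset.sum_add_distrib,
      Finset.sum_ite_eq Finset.univ i (fun j => (1/((n:ℝ)*(n+1))) * (lam i * lam j))]
    simp [← Finset.mul_sum, Finset.mul_sum]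
  rw [Finset.sum_congr rfl fun i (_ : i ∈ Finset.univ) => hsplit i, Finset.sum_add_distrib,
    ← Finset.mul_sum, ← Finset.mul_sum, ← Finset.sum_mul]
  have hsq : ∑ i : Fin n, lam i * lam i = ∑ i : Fin n, lam i ^ 2 :=
    Finset.sum_congr rfl fun i _ => (sq (lam i)).symm
  rw [hsq]
  have hn0 : ((n:ℝ)*(n+1)) ≠ 0 := by positivity
  field_simp

lemma quad_upper (lam : Fin n → ℝ) (M : ℝ) (hM0 : 0 ≤ M) (hM : ∀ i, |lam i| ≤ M) :
    ∫ ζ, (∑ i, lam i * normSq (ζ i))^2 ∂μ ≤ M^2 := by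
  have hcont : Continuous fun ζ : Fin n → ℂ => (∑ i, lam i * normSq (ζ i))^2 :=
    (continuous_finset_sum _ fun i _ =>
      continuous_const.mul (Complex.continuous_normSq.comp (continuous_apply i))).pow 2
  have hbd : ∀ ζ : Fin n → ℂ, (∑ i, Complex.normSq (ζ i)) = 1 →
      (∑ i, lam i * normSq (ζ i))^2 ≤ M^2 := by
    intro ζ h
    have h1 : |∑ i, lam i * normSq (ζ i)| ≤ M := by
      refine le_trans (Finset.abs_sum_le_sum_abs _ _) ?_
      calc ∑ i, |lam i * normSq (ζ i)| ≤ ∑ i, M * normSq (ζ i) :=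
            Finset.sum_le_sum fun i _ => by
              rw [abs_mul, _root_.abs_of_nonneg (normSq_nonneg _)]
              exact mul_le_mul_of_nonneg_right (hM i) (normSq_nonneg _)
        _ = M := by rw [← Finset.mul_sum, h, mul_one]
    calc (∑ i, lam i * normSq (ζ i))^2 = |∑ i, lam i * normSq (ζ i)|^2 := (_root_.sq_abs _).symm
      _ ≤ M^2 := pow_le_pow_left₀ (abs_nonneg _) h1 2
  have hint : Integrable (fun ζ : Fin n → ℂ => (∑ i, lam i * normSq (ζ i))^2) μ :=
    integ μ hsupp hcont (C := M^2)
      (fun ζ h => by rw [_root_.abs_of_nonneg (sq_nonneg _)]; exact hbd ζ h)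
  have hmono := integral_mono_ae hint (integrable_const (M^2))
    ((ae_sphere μ hsupp).mono fun ζ h => hbd ζ h)
  simpa using hmono

end Moments

section Spectral

open Complex

lemma Q_eq_dot (B : Matrix (Fin n) (Fin n) ℂ) (η : Fin n → ℂ) :
    ∑ i, ∑ j, B i j * η i * (starRingEnd ℂ) (η j) = η ⬝ᵥ (B *ᵥ (star η)) := by
  simp only [dotProduct, Matrix.mulVec]
  refine Finset.sum_congr rfl fun i _ => ?_
  rw [Finset.mul_sum]
  refine Finset.sum_congr rfl fun j _ => ?_
  simp only [Pi.star_apply, Complex.star_def]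
  ring

lemma Q_transform (B W : Matrix (Fin n) (Fin n) ℂ) (ζ : Fin n → ℂ) :
    ∑ i, ∑ j, B i j * (W *ᵥ ζ) i * (starRingEnd ℂ) ((W *ᵥ ζ) j)
      = ∑ i, ∑ j, (Wᵀ * B * (Wᴴ)ᵀ) i j * ζ i * (starRingEnd ℂ) (ζ j) := by
  rw [Q_eq_dot, Q_eq_dot]
  rw [Matrix.star_mulVec, ← Matrix.mulVec_transpose Wᴴ (star ζ), Matrix.mulVec_mulVec]
  rw [dotProduct_comm, dotProduct_mulVec, dotProduct_comm]
  rw [← Matrix.mulVec_transpose W, Matrix.mulVec_mulVec, ← Matrix.mul_assoc]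

lemma Q_diagonal (lam : Fin n → ℝ) (ζ : Fin n → ℂ) :
    ∑ i, ∑ j, (Matrix.diagonal (fun i => ((lam i : ℝ) : ℂ))) i j * ζ i * (starRingEnd ℂ) (ζ j)
      = ((∑ i, lam i * normSq (ζ i) : ℝ) : ℂ) := by
  have h1 : ∀ i : Fin n,
      ∑ j, (Matrix.diagonal (fun i => ((lam i : ℝ) : ℂ))) i j * ζ i * (starRingEnd ℂ) (ζ j)
      = ((lam i * normSq (ζ i) : ℝ) : ℂ) := by
    intro i
    rw [Finset.sum_eq_single i
      (fun j _ hj => by rw [Matrix.diagonal_apply_ne _ (Ne.symm hj), zero_mul, zero_mul])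
      (fun h => absurd (Finset.mem_univ i) h)]
    rw [Matrix.diagonal_apply_eq, mul_assoc, Complex.mul_conj]
    push_cast
    ring
  rw [Finset.sum_congr rfl fun i _ => h1 i]
  push_cast
  ring

lemma alg (hn : 0 < n) (lam : Fin n → ℝ) (k : Fin n) (hk : ∀ y, |lam y| ≤ |lam k|) :
    ((n:ℝ)+1) * (lam k)^2 ≤ (n:ℝ) * ((∑ i, lam i)^2 + ∑ i, (lam i)^2) := by
  have hT : ∑ i ∈ Finset.univ.erase k, lam i + lam k = ∑ i, lam i :=
    Finset.sum_erase_add _ _ (Finset.mem_univ k)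
  have hS : ∑ i ∈ Finset.univ.erase k, (lam i)^2 + (lam k)^2 = ∑ i, (lam i)^2 :=
    Finset.sum_erase_add _ _ (Finset.mem_univ k)
  have hcs : (∑ i ∈ Finset.univ.erase k, lam i)^2
      ≤ ((n:ℝ) - 1) * ∑ i ∈ Finset.univ.erase k, (lam i)^2 := by
    have h := _root_.sq_sum_le_card_mul_sum_sq (s := Finset.univ.erase k) (f := lam)
    rw [Finset.card_erase_of_mem (Finset.mem_univ k), Finset.card_univ, Fintype.card_fin] at h
    have hcast : ((n - 1 : ℕ) : ℝ) = (n:ℝ) - 1 := by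
      rw [Nat.cast_sub hn]; norm_num
    calc (∑ i ∈ Finset.univ.erase k, lam i)^2
        ≤ ((n - 1 : ℕ) : ℝ) * ∑ i ∈ Finset.univ.erase k, (lam i)^2 := by exact_mod_cast h
      _ = ((n:ℝ) - 1) * ∑ i ∈ Finset.univ.erase k, (lam i)^2 := by rw [hcast]
  have hs2 : (0:ℝ) ≤ ∑ i ∈ Finset.univ.erase k, (lam i)^2 :=
    Finset.sum_nonneg fun i _ => sq_nonneg _
  rw [← hT, ← hS]
  set r := ∑ i ∈ Finset.univ.erase k, lam i
  set s2 := ∑ i ∈ Finset.univ.erase k, (lam i)^2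
  rcases Nat.lt_or_ge n 2 with h2 | h2
  · have hn1 : n = 1 := by omega
    have hn1' : (n:ℝ) = 1 := by rw [hn1]; norm_num
    rw [hn1'] at hcs ⊢
    nlinarith [hcs, hs2, sq_nonneg r]
  · have hn2 : (2:ℝ) ≤ (n:ℝ) := by exact_mod_cast h2
    nlinarith [hcs, hs2, sq_nonneg (((n:ℝ)-1)*lam k + (n:ℝ)*r), hn2]

end Spectral

end Stmt4Aux

open MeasureTheory

theorem stmt4 (n : ℕ) (hn : 0 < n) (μ : Measure (Fin n → ℂ)) [IsProbabilityMeasure μ]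
    -- μ is carried by the unit sphere S^{2n-1} ⊂ ℂ^n
    (hsupp : μ {ζ : Fin n → ℂ | ∑ i, Complex.normSq (ζ i) = 1}ᶜ = 0)
    -- μ is invariant under the unitary group U(n) (rotation invariance)
    (hinv : ∀ U : Matrix.unitaryGroup (Fin n) ℂ,
      μ.map (fun ζ => (U : Matrix (Fin n) (Fin n) ℂ).mulVec ζ) = μ)
    (A : Matrix (Fin n) (Fin n) ℂ) (hA : A.IsHermitian) :
    (1 / (n : ℝ) ^ 2) * (⨆ i, |hA.eigenvalues i|) ^ 2 ≤
        ∫ ζ, (‖∑ i, ∑ j, A i j * ζ i * (starRingEnd ℂ) (ζ j)‖) ^ 2 ∂μ ∧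
      ∫ ζ, (‖∑ i, ∑ j, A i j * ζ i * (starRingEnd ℂ) (ζ j)‖) ^ 2 ∂μ ≤
        (⨆ i, |hA.eigenvalues i|) ^ 2 := by
  classical
  have hnR : (0:ℝ) < (n:ℝ) := by exact_mod_cast hn
  set lam : Fin n → ℝ := hA.eigenvalues with hlam
  haveI : Nonempty (Fin n) := ⟨⟨0, hn⟩⟩
  obtain ⟨k, hk⟩ := Finite.exists_max (fun i => |lam i|)
  have hMk : (⨆ i, |lam i|) = |lam k| := by
    refine le_antisymm (ciSup_le hk) ?_
    exact le_ciSup (f := fun i => |lam i|) (Set.Finite.bddAbove (Set.finite_range _)) k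
  -- the diagonalizing unitary
  set V : Matrix (Fin n) (Fin n) ℂ := (hA.eigenvectorUnitary : Matrix (Fin n) (Fin n) ℂ)
    with hV
  set W : Matrix (Fin n) (Fin n) ℂ := (Vᴴ)ᵀ with hW
  have hVmem : V ∈ Matrix.unitaryGroup (Fin n) ℂ := (hA.eigenvectorUnitary).2
  have hcomm : ((Vᴴ)ᵀ)ᴴ = Vᵀ := by
    ext i j
    simp [Matrix.conjTranspose_apply, Matrix.transpose_apply]
  have hWmem : W ∈ Matrix.unitaryGroup (Fin n) ℂ := by
    rw [Matrix.mem_unitaryGroup_iff]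
    have h1 : V * Vᴴ = 1 := by
      have h := Matrix.mem_unitaryGroup_iff.mp hVmem
      rwa [Matrix.star_eq_conjTranspose] at h
    have h2 : star W = Vᵀ := by
      rw [hW, Matrix.star_eq_conjTranspose, hcomm]
    rw [h2, hW, ← Matrix.transpose_mul, h1, Matrix.transpose_one]
  have hdiagm : Wᵀ * A * (Wᴴ)ᵀ = Matrix.diagonal (fun i => ((lam i : ℝ) : ℂ)) := by
    have h2 : Wᵀ = Vᴴ := Matrix.transpose_transpose _
    have h3 : (Wᴴ)ᵀ = V := by
      rw [hW, hcomm, Matrix.transpose_transpose]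
    rw [h2, h3]
    have h4 := hA.conjStarAlgAut_star_eigenvectorUnitary
    rw [Unitary.conjStarAlgAut_star_apply] at h4
    rw [Matrix.star_eq_conjTranspose] at h4
    rw [h4]
    rfl
  -- reduction of the integral
  have hFcont : Continuous (fun ζ : Fin n → ℂ =>
      (‖∑ i, ∑ j, A i j * ζ i * (starRingEnd ℂ) (ζ j)‖) ^ 2) := by
    apply Continuous.pow
    apply continuous_norm.comp
    refine continuous_finset_sum _ fun i _ => continuous_finset_sum _ fun j _ => ?_
    exact (continuous_const.mul (continuous_apply i)).mul
      (Complex.continuous_conj.comp (continuous_apply j))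
  have hred : ∫ ζ, (‖∑ i, ∑ j, A i j * ζ i * (starRingEnd ℂ) (ζ j)‖) ^ 2 ∂μ
      = ∫ ζ, (∑ i, lam i * Complex.normSq (ζ i))^2 ∂μ := by
    rw [← Stmt4Aux.intinv μ hinv ⟨W, hWmem⟩ hFcont]
    refine integral_congr_ae (Filter.Eventually.of_forall fun ζ => ?_)
    show (‖∑ i, ∑ j, A i j * (W *ᵥ ζ) i * (starRingEnd ℂ) ((W *ᵥ ζ) j)‖) ^ 2 = _
    rw [Stmt4Aux.Q_transform A W ζ, hdiagm, Stmt4Aux.Q_diagonal lam ζ,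
      Complex.norm_real, Real.norm_eq_abs, _root_.sq_abs]
  constructor
  · rw [hred, Stmt4Aux.quad_int μ hsupp hinv hn lam, hMk, _root_.sq_abs]
    have halg := Stmt4Aux.alg hn lam k hk
    rw [show (1 / (n:ℝ)^2) * (lam k)^2 = (lam k)^2 / (n:ℝ)^2 by ring,
      div_le_div_iff₀ (by positivity) (by positivity)]
    nlinarith [mul_le_mul_of_nonneg_left halg hnR.le]
  · rw [hred, hMk]
    exact Stmt4Aux.quad_upper μ hsupp hinv lam |lam k| (abs_nonneg _) hk
end

section
/- If A is a trace-free Hermitian operator on ℂ^r (Σ λ_α = 0, eigenvalues λ_α), then the variance V(Q_A) = ∫_{S^{2r-1}} |⟨Au,u⟩|² dμ(u) equals (Σ_α λ_α²)/(r(r+1)), and consequently V(Q_A) ≤ ‖A‖²/(r+1). -/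
open MeasureTheory Matrix

namespace Stmt5Aux

variable {r : ℕ} {μ : Measure (Fin r → ℂ)} [IsProbabilityMeasure μ]

-- placeholders for already-proven lemmas
lemma ae_sph (hsupp : μ {u : Fin r → ℂ | ∑ α, Complex.normSq (u α) = 1}ᶜ = 0) :
    ∀ᵐ u ∂μ, ∑ α, Complex.normSq (u α) = 1 := by
  rw [ae_iff]; simpa [Set.compl_setOf] using hsupp

lemma normSq_le_one {u : Fin r → ℂ} (hu : ∑ α, Complex.normSq (u α) = 1) (α : Fin r) :
    Complex.normSq (u α) ≤ 1 := by
  rw [← hu]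
  exact Finset.single_le_sum (fun i _ => Complex.normSq_nonneg (u i)) (Finset.mem_univ α)

lemma integ (hsupp : μ {u : Fin r → ℂ | ∑ α, Complex.normSq (u α) = 1}ᶜ = 0)
    {f : (Fin r → ℂ) → ℝ} (hf : Continuous f) {C : ℝ}
    (hb : ∀ u : Fin r → ℂ, ∑ α, Complex.normSq (u α) = 1 → ‖f u‖ ≤ C) :
    Integrable f μ :=
  Integrable.mono' (integrable_const C) hf.aestronglyMeasurable ((ae_sph hsupp).mono hb)

lemma intvar (hinv : ∀ U : Matrix.unitaryGroup (Fin r) ℂ,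
      μ.map (fun u => (U : Matrix (Fin r) (Fin r) ℂ).mulVec u) = μ)
    (U : Matrix.unitaryGroup (Fin r) ℂ) {f : (Fin r → ℂ) → ℝ} (hf : Continuous f) :
    ∫ u, f ((U : Matrix (Fin r) (Fin r) ℂ).mulVec u) ∂μ = ∫ u, f u ∂μ := by
  have hc : Continuous fun u : Fin r → ℂ => (U : Matrix (Fin r) (Fin r) ℂ).mulVec u :=
    continuous_const.matrix_mulVec continuous_id
  conv_rhs => rw [← hinv U]
  rw [integral_map hc.aemeasurable hf.aestronglyMeasurable]

noncomputable def m (μ : Measure (Fin r → ℂ)) (α β : Fin r) : ℝ :=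
  ∫ u, Complex.normSq (u α) * Complex.normSq (u β) ∂μ

lemma cont_normSq (α : Fin r) : Continuous fun u : Fin r → ℂ => Complex.normSq (u α) :=
  Complex.continuous_normSq.comp (continuous_apply α)

lemma integ_m (hsupp : μ {u : Fin r → ℂ | ∑ α, Complex.normSq (u α) = 1}ᶜ = 0) (α β : Fin r) :
    Integrable (fun u => Complex.normSq (u α) * Complex.normSq (u β)) μ := by
  refine integ hsupp ((cont_normSq α).mul (cont_normSq β)) (C := 1) (fun u hu => ?_)
  have h1 := normSq_le_one hu α
  have h2 := normSq_le_one hu β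
  have h3 := Complex.normSq_nonneg (u α)
  have h4 := Complex.normSq_nonneg (u β)
  rw [Real.norm_eq_abs, _root_.abs_of_nonneg (by positivity)]
  nlinarith



lemma std_ct {r : ℕ} (i j : Fin r) (c : ℂ) :
    (single i j c)ᴴ = single j i ((starRingEnd ℂ) c) := by
  ext a b
  by_cases h1 : i = b <;> by_cases h2 : j = a <;>
    simp [Matrix.single, Matrix.conjTranspose_apply, h1, h2]

noncomputable def mix {r : ℕ} (i j : Fin r) : Matrix (Fin r) (Fin r) ℂ :=
  (((Real.sqrt 2)⁻¹ : ℝ) : ℂ) • (single i i 1 + single i j 1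
    + single j i 1 - single j j 1)
  + (1 - single i i 1 - single j j 1)

lemma hc2 : (((Real.sqrt 2)⁻¹ : ℝ) : ℂ) * (((Real.sqrt 2)⁻¹ : ℝ) : ℂ) = (1/2 : ℂ) := by
  have h : (Real.sqrt 2)⁻¹ * (Real.sqrt 2)⁻¹ = 1/2 := by
    rw [← mul_inv, Real.mul_self_sqrt (by norm_num : (0:ℝ) ≤ 2)]; exact (one_div 2).symm
  rw [← Complex.ofReal_mul, h]; push_cast; ring

lemma mix_ct {r : ℕ} (i j : Fin r) : (mix i j)ᴴ = mix i j := by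
  simp only [mix, conjTranspose_add, conjTranspose_sub, conjTranspose_smul, std_ct,
    conjTranspose_one, _root_.map_one, RCLike.star_def, Complex.conj_ofReal]
  module

lemma mix_mem {r : ℕ} {i j : Fin r} (hij : i ≠ j) :
    mix i j ∈ Matrix.unitaryGroup (Fin r) ℂ := by
  set E1 := single i i (1:ℂ) with hE1
  set Eij := single i j (1:ℂ) with hEij
  set Eji := single j i (1:ℂ) with hEji
  set E2 := single j j (1:ℂ) with hE2
  set c := (((Real.sqrt 2)⁻¹ : ℝ) : ℂ) with hcc
  set B := E1 + Eij + Eji - E2 with hB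
  set D := 1 - E1 - E2 with hD
  have t11 : E1 * E1 = E1 := by simp [hE1]
  have t1ij : E1 * Eij = Eij := by simp [hE1, hEij]
  have t1ji : E1 * Eji = 0 := by simp [hE1, hEji, Matrix.single_mul_single_of_ne, hij]
  have t12 : E1 * E2 = 0 := by simp [hE1, hE2, Matrix.single_mul_single_of_ne, hij]
  have tij1 : Eij * E1 = 0 := by simp [hE1, hEij, Matrix.single_mul_single_of_ne, hij.symm]
  have tijij : Eij * Eij = 0 := by simp [hEij, Matrix.single_mul_single_of_ne, hij.symm]
  have tijji : Eij * Eji = E1 := by simp [hE1, hEij, hEji]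
  have tij2 : Eij * E2 = Eij := by simp [hEij, hE2]
  have tji1 : Eji * E1 = Eji := by simp [hE1, hEji]
  have tjiij : Eji * Eij = E2 := by simp [hE2, hEji, hEij]
  have tjiji : Eji * Eji = 0 := by simp [hEji, Matrix.single_mul_single_of_ne, hij]
  have tji2 : Eji * E2 = 0 := by simp [hEji, hE2, Matrix.single_mul_single_of_ne, hij]
  have t21 : E2 * E1 = 0 := by simp [hE2, hE1, Matrix.single_mul_single_of_ne, hij.symm]
  have t2ij : E2 * Eij = 0 := by simp [hE2, hEij, Matrix.single_mul_single_of_ne, hij.symm]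
  have t2ji : E2 * Eji = Eji := by simp [hE2, hEji]
  have t22 : E2 * E2 = E2 := by simp [hE2]
  have hBB : B * B = (2:ℂ) • (E1 + E2) := by
    rw [hB]
    simp only [mul_add, add_mul, mul_sub, sub_mul, t11, t1ij, t1ji, t12, tij1, tijij, tijji,
      tij2, tji1, tjiij, tjiji, tji2, t21, t2ij, t2ji, t22]
    module
  have hBD : B * D = 0 := by
    rw [hB, hD]
    simp only [mul_sub, sub_mul, add_mul, mul_one, t11, t1ij, t1ji, t12, tij1, tijij, tijji,
      tij2, tji1, tjiij, tjiji, tji2, t21, t2ij, t2ji, t22]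
    module
  have hDB : D * B = 0 := by
    rw [hB, hD]
    simp only [mul_sub, sub_mul, mul_add, add_mul, one_mul, mul_one, t11, t1ij, t1ji, t12, tij1,
      tijij, tijji, tij2, tji1, tjiij, tjiji, tji2, t21, t2ij, t2ji, t22]
    module
  have hDD : D * D = D := by
    rw [hD]
    simp only [mul_sub, sub_mul, one_mul, mul_one, t11, t12, t21, t22]
    module
  rw [Matrix.mem_unitaryGroup_iff]
  show mix i j * star (mix i j) = 1
  rw [Matrix.star_eq_conjTranspose, mix_ct]
  show (c • B + D) * (c • B + D) = 1
  rw [mul_add, add_mul, add_mul]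
  simp only [Matrix.smul_mul, Matrix.mul_smul, smul_smul]
  rw [hc2, hBB, hBD, hDB, hDD, smul_zero, hD]
  module

lemma mix_mulVec_i {r : ℕ} {i j : Fin r} (hij : i ≠ j) (u : Fin r → ℂ) :
    (mix i j).mulVec u i = (((Real.sqrt 2)⁻¹ : ℝ) : ℂ) * (u i + u j) := by
  simp [mix, add_mulVec, sub_mulVec, smul_mulVec, one_mulVec, single_mulVec,
    Function.update_apply, hij, hij.symm]

lemma mix_mulVec_j {r : ℕ} {i j : Fin r} (hij : i ≠ j) (u : Fin r → ℂ) :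
    (mix i j).mulVec u j = (((Real.sqrt 2)⁻¹ : ℝ) : ℂ) * (u i - u j) := by
  simp [mix, add_mulVec, sub_mulVec, smul_mulVec, one_mulVec, single_mulVec,
    Function.update_apply, hij, hij.symm]



lemma hrinv : (Real.sqrt 2)⁻¹ * (Real.sqrt 2)⁻¹ = 1/2 := by
  rw [← mul_inv, Real.mul_self_sqrt (by norm_num : (0:ℝ) ≤ 2)]; exact (one_div 2).symm

lemma phase_mem {d : Fin r → ℂ} (hd : ∀ k, d k * (starRingEnd ℂ) (d k) = 1) :
    diagonal d ∈ Matrix.unitaryGroup (Fin r) ℂ := by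
  rw [Matrix.mem_unitaryGroup_iff]
  show diagonal d * star (diagonal d) = 1
  rw [Matrix.star_eq_conjTranspose, diagonal_conjTranspose, diagonal_mul_diagonal]
  ext a b
  rcases eq_or_ne a b with rfl | hab
  · simpa using hd a
  · simp [hab]

lemma phase_int (hinv : ∀ U : Matrix.unitaryGroup (Fin r) ℂ,
      μ.map (fun u => (U : Matrix (Fin r) (Fin r) ℂ).mulVec u) = μ)
    {d : Fin r → ℂ} (hd : ∀ k, d k * (starRingEnd ℂ) (d k) = 1)
    {f : (Fin r → ℂ) → ℝ} (hf : Continuous f) :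
    ∫ u, f (fun k => d k * u k) ∂μ = ∫ u, f u ∂μ := by
  have hI : ∫ u, f ((diagonal d).mulVec u) ∂μ = ∫ u, f u ∂μ :=
    intvar hinv ⟨diagonal d, phase_mem hd⟩ hf
  have he : ∀ u : Fin r → ℂ, (diagonal d).mulVec u = fun k => d k * u k := by
    intro u; funext k; rw [mulVec_diagonal]
  simp only [he] at hI
  exact hI

lemma abs_le_one {u : Fin r → ℂ} (hu : ∑ α, Complex.normSq (u α) = 1) (α : Fin r) :
    ‖u α‖ ≤ 1 := by
  have h := normSq_le_one hu α
  rw [← Complex.sq_norm] at h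
  nlinarith [norm_nonneg (u α)]

lemma t_le_one {u : Fin r → ℂ} (hu : ∑ α, Complex.normSq (u α) = 1) (i j : Fin r) :
    |(u i * (starRingEnd ℂ) (u j)).re| ≤ 1 := by
  refine le_trans (Complex.abs_re_le_norm _) ?_
  rw [norm_mul, Complex.norm_conj]
  exact mul_le_one₀ (abs_le_one hu i) (norm_nonneg _) (abs_le_one hu j)

lemma s_le_one {u : Fin r → ℂ} (hu : ∑ α, Complex.normSq (u α) = 1) (i j : Fin r) :
    |(u i * (starRingEnd ℂ) (u j)).im| ≤ 1 := by
  refine le_trans (Complex.abs_im_le_norm _) ?_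
  rw [norm_mul, Complex.norm_conj]
  exact mul_le_one₀ (abs_le_one hu i) (norm_nonneg _) (abs_le_one hu j)


lemma sum_m (hsupp : μ {u : Fin r → ℂ | ∑ α, Complex.normSq (u α) = 1}ᶜ = 0) :
    ∑ α, ∑ β, m μ α β = 1 := by
  have h1 : ∀ α : Fin r, ∫ u, ∑ β, Complex.normSq (u α) * Complex.normSq (u β) ∂μ
      = ∑ β, m μ α β := fun α => integral_finset_sum _ (fun β _ => integ_m hsupp α β)
  have h2 : ∫ u, ∑ α, ∑ β, Complex.normSq (u α) * Complex.normSq (u β) ∂μ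
      = ∑ α, ∑ β, m μ α β := by
    rw [integral_finset_sum _ (fun α _ => integrable_finset_sum _
      (fun β _ => integ_m hsupp α β))]
    exact Finset.sum_congr rfl fun α _ => h1 α
  rw [← h2]
  have h3 : ∫ u, (fun _ : Fin r → ℂ => (1:ℝ)) u ∂μ = 1 := by simp
  rw [← h3]
  apply integral_congr_ae
  filter_upwards [ae_sph hsupp] with u hu
  simp only [← Finset.mul_sum, ← Finset.sum_mul, hu, one_mul]

lemma trace_eq {A : Matrix (Fin r) (Fin r) ℂ} (hA : A.IsHermitian) :
    A.trace = ∑ γ, (hA.eigenvalues γ : ℂ) := by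
  conv_lhs => rw [hA.spectral_theorem, Unitary.conjStarAlgAut_apply]
  rw [Matrix.trace_mul_cycle, (Matrix.mem_unitaryGroup_iff').mp (hA.eigenvectorUnitary).2,
    Matrix.one_mul, Matrix.trace_diagonal]
  simp

section moments

variable (hsupp : μ {u : Fin r → ℂ | ∑ α, Complex.normSq (u α) = 1}ᶜ = 0)
  (hinv : ∀ U : Matrix.unitaryGroup (Fin r) ℂ,
      μ.map (fun u => (U : Matrix (Fin r) (Fin r) ℂ).mulVec u) = μ)
  {i j : Fin r} (hij : i ≠ j)

lemma cont_T : Continuous fun u : Fin r → ℂ => (u i * (starRingEnd ℂ) (u j)).re :=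
  Complex.continuous_re.comp ((continuous_apply i).mul
    (Complex.continuous_conj.comp (continuous_apply j)))

lemma cont_S : Continuous fun u : Fin r → ℂ => (u i * (starRingEnd ℂ) (u j)).im :=
  Complex.continuous_im.comp ((continuous_apply i).mul
    (Complex.continuous_conj.comp (continuous_apply j)))

include hsupp in
lemma integ_T2 : Integrable (fun u => (u i * (starRingEnd ℂ) (u j)).re
    * (u i * (starRingEnd ℂ) (u j)).re) μ := by
  refine integ hsupp ((cont_T (i := i) (j := j)).mul cont_T) (C := 1) (fun u hu => ?_)
  have := t_le_one hu i j
  rw [Real.norm_eq_abs, abs_mul]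
  nlinarith [abs_nonneg ((u i * (starRingEnd ℂ) (u j)).re)]

include hsupp in
lemma integ_S2 : Integrable (fun u => (u i * (starRingEnd ℂ) (u j)).im
    * (u i * (starRingEnd ℂ) (u j)).im) μ := by
  refine integ hsupp ((cont_S (i := i) (j := j)).mul cont_S) (C := 1) (fun u hu => ?_)
  have := s_le_one hu i j
  rw [Real.norm_eq_abs, abs_mul]
  nlinarith [abs_nonneg ((u i * (starRingEnd ℂ) (u j)).im)]

include hsupp in
lemma integ_Txy : Integrable (fun u => (u i * (starRingEnd ℂ) (u j)).re
    * (Complex.normSq (u i) + Complex.normSq (u j))) μ := by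
  refine integ hsupp ((cont_T (i := i) (j := j)).mul ((cont_normSq i).add (cont_normSq j)))
    (C := 2) (fun u hu => ?_)
  have h1 := t_le_one hu i j
  have h2 := normSq_le_one hu i
  have h3 := normSq_le_one hu j
  have h4 := Complex.normSq_nonneg (u i)
  have h5 := Complex.normSq_nonneg (u j)
  rw [Real.norm_eq_abs, abs_mul,
    _root_.abs_of_nonneg (show (0:ℝ) ≤ Complex.normSq (u i) + Complex.normSq (u j) by positivity)]
  nlinarith [abs_nonneg ((u i * (starRingEnd ℂ) (u j)).re)]

include hsupp hinv hij in
lemma key_moments : m μ i i = m μ j j ∧ m μ i j = m μ i i / 2 := by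
  classical
  -- Step A : ∫ S*S = ∫ T*T
  have hdI : ∀ k : Fin r, (if k = i then Complex.I else 1) *
      (starRingEnd ℂ) (if k = i then Complex.I else 1) = 1 := by
    intro k; by_cases h : k = i <;> simp [h]
  have hpA := phase_int hinv hdI
    (f := fun u => (u i * (starRingEnd ℂ) (u j)).re * (u i * (starRingEnd ℂ) (u j)).re)
    ((cont_T (i := i) (j := j)).mul cont_T)
  have heA : (fun u : Fin r → ℂ =>
      (((fun k => (if k = i then Complex.I else 1) * u k) i *
        (starRingEnd ℂ) ((fun k => (if k = i then Complex.I else 1) * u k) j)).re *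
       ((fun k => (if k = i then Complex.I else 1) * u k) i *
        (starRingEnd ℂ) ((fun k => (if k = i then Complex.I else 1) * u k) j)).re)) =
      fun u => (u i * (starRingEnd ℂ) (u j)).im * (u i * (starRingEnd ℂ) (u j)).im := by
    funext u
    simp only [eq_self_iff_true, if_true, if_neg hij.symm, one_mul, mul_assoc]
    simp only [Complex.mul_re, Complex.mul_im, Complex.I_re, Complex.I_im]
    ring
  rw [show (fun u : Fin r → ℂ => (fun u : Fin r → ℂ =>
      (u i * (starRingEnd ℂ) (u j)).re * (u i * (starRingEnd ℂ) (u j)).re)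
      (fun k => (if k = i then Complex.I else 1) * u k)) = _ from heA] at hpA
  -- hpA : ∫ S*S = ∫ T*T
  -- Step B : ∫ T*T + ∫ S*S = m i j
  have hB := integral_add (integ_T2 hsupp (i := i) (j := j)) (integ_S2 hsupp (i := i) (j := j))
  have heB : (fun u : Fin r → ℂ => (u i * (starRingEnd ℂ) (u j)).re *
      (u i * (starRingEnd ℂ) (u j)).re + (u i * (starRingEnd ℂ) (u j)).im *
      (u i * (starRingEnd ℂ) (u j)).im) =
      fun u => Complex.normSq (u i) * Complex.normSq (u j) := by
    funext u
    have : Complex.normSq (u i) * Complex.normSq (u j)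
        = Complex.normSq (u i * (starRingEnd ℂ) (u j)) := by
      rw [_root_.map_mul, Complex.normSq_conj]
    rw [this, Complex.normSq_apply]
  rw [heB] at hB
  -- hB : m μ i j = ∫ T*T + ∫ S*S  (after viewing m as the integral)
  -- Step C : ∫ T*(x+y) = 0
  have hdN : ∀ k : Fin r, (if k = i then (-1 : ℂ) else 1) *
      (starRingEnd ℂ) (if k = i then (-1 : ℂ) else 1) = 1 := by
    intro k; by_cases h : k = i <;> simp [h]
  have hpC := phase_int hinv hdN
    (f := fun u => (u i * (starRingEnd ℂ) (u j)).re *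
      (Complex.normSq (u i) + Complex.normSq (u j)))
    ((cont_T (i := i) (j := j)).mul ((cont_normSq i).add (cont_normSq j)))
  have heC : (fun u : Fin r → ℂ => (fun u : Fin r → ℂ =>
      (u i * (starRingEnd ℂ) (u j)).re * (Complex.normSq (u i) + Complex.normSq (u j)))
      (fun k => (if k = i then (-1:ℂ) else 1) * u k)) =
      fun u => -((u i * (starRingEnd ℂ) (u j)).re *
        (Complex.normSq (u i) + Complex.normSq (u j))) := by
    funext u
    simp only [eq_self_iff_true, if_true, if_neg hij.symm, one_mul, neg_one_mul, neg_mul,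
      Complex.neg_re, Complex.normSq_neg]
  rw [heC, integral_neg] at hpC
  -- hpC : -∫ T*(x+y) = ∫ T*(x+y)
  -- Step D : mixing at coordinate i
  have hfi : Continuous (fun u : Fin r → ℂ => Complex.normSq (u i) * Complex.normSq (u i)) :=
    (cont_normSq i).mul (cont_normSq i)
  have hmi : ∫ u, (fun u : Fin r → ℂ => Complex.normSq (u i) * Complex.normSq (u i))
      ((mix i j).mulVec u) ∂μ = m μ i i :=
    intvar hinv ⟨mix i j, mix_mem hij⟩ hfi
  have heD : (fun u : Fin r → ℂ => (fun u : Fin r → ℂ =>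
      Complex.normSq (u i) * Complex.normSq (u i)) ((mix i j).mulVec u)) =
      fun u : Fin r → ℂ => (1/4 : ℝ) *
        (Complex.normSq (u i) * Complex.normSq (u i) +
        (Complex.normSq (u j) * Complex.normSq (u j) +
        (4 * ((u i * (starRingEnd ℂ) (u j)).re * (u i * (starRingEnd ℂ) (u j)).re) +
        (2 * (Complex.normSq (u i) * Complex.normSq (u j)) +
        4 * ((u i * (starRingEnd ℂ) (u j)).re *
          (Complex.normSq (u i) + Complex.normSq (u j))))))) := by
    funext u
    simp only [mix_mulVec_i hij, Complex.normSq_mul, Complex.normSq_ofReal, hrinv,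
      Complex.normSq_add]
    ring
  rw [heD] at hmi
  have ID1 : Integrable (fun u : Fin r → ℂ => 2 * (Complex.normSq (u i) * Complex.normSq (u j)) +
      4 * ((u i * (starRingEnd ℂ) (u j)).re *
        (Complex.normSq (u i) + Complex.normSq (u j)))) μ :=
    ((integ_m hsupp i j).const_mul 2).add ((integ_Txy hsupp).const_mul 4)
  have ID2 : Integrable (fun u : Fin r → ℂ =>
      4 * ((u i * (starRingEnd ℂ) (u j)).re * (u i * (starRingEnd ℂ) (u j)).re) +
      (2 * (Complex.normSq (u i) * Complex.normSq (u j)) +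
      4 * ((u i * (starRingEnd ℂ) (u j)).re *
        (Complex.normSq (u i) + Complex.normSq (u j))))) μ :=
    ((integ_T2 hsupp).const_mul 4).add ID1
  have ID3 : Integrable (fun u : Fin r → ℂ => Complex.normSq (u j) * Complex.normSq (u j) +
      (4 * ((u i * (starRingEnd ℂ) (u j)).re * (u i * (starRingEnd ℂ) (u j)).re) +
      (2 * (Complex.normSq (u i) * Complex.normSq (u j)) +
      4 * ((u i * (starRingEnd ℂ) (u j)).re *
        (Complex.normSq (u i) + Complex.normSq (u j)))))) μ :=
    (integ_m hsupp j j).add ID2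
  rw [integral_const_mul, integral_add (integ_m hsupp i i) ID3,
    integral_add (integ_m hsupp j j) ID2,
    integral_add ((integ_T2 hsupp).const_mul 4) ID1,
    integral_add ((integ_m hsupp i j).const_mul 2) ((integ_Txy hsupp).const_mul 4),
    integral_const_mul, integral_const_mul, integral_const_mul] at hmi
  -- Step E : mixing at coordinate j
  have hfj : Continuous (fun u : Fin r → ℂ => Complex.normSq (u j) * Complex.normSq (u j)) :=
    (cont_normSq j).mul (cont_normSq j)
  have hmj : ∫ u, (fun u : Fin r → ℂ => Complex.normSq (u j) * Complex.normSq (u j))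
      ((mix i j).mulVec u) ∂μ = m μ j j :=
    intvar hinv ⟨mix i j, mix_mem hij⟩ hfj
  have heE : (fun u : Fin r → ℂ => (fun u : Fin r → ℂ =>
      Complex.normSq (u j) * Complex.normSq (u j)) ((mix i j).mulVec u)) =
      fun u : Fin r → ℂ => (1/4 : ℝ) *
        (Complex.normSq (u i) * Complex.normSq (u i) +
        (Complex.normSq (u j) * Complex.normSq (u j) +
        (4 * ((u i * (starRingEnd ℂ) (u j)).re * (u i * (starRingEnd ℂ) (u j)).re) +
        (2 * (Complex.normSq (u i) * Complex.normSq (u j)) +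
        (-4) * ((u i * (starRingEnd ℂ) (u j)).re *
          (Complex.normSq (u i) + Complex.normSq (u j))))))) := by
    funext u
    simp only [mix_mulVec_j hij, Complex.normSq_mul, Complex.normSq_ofReal, hrinv,
      Complex.normSq_sub]
    ring
  rw [heE] at hmj
  have IE1 : Integrable (fun u : Fin r → ℂ => 2 * (Complex.normSq (u i) * Complex.normSq (u j)) +
      (-4) * ((u i * (starRingEnd ℂ) (u j)).re *
        (Complex.normSq (u i) + Complex.normSq (u j)))) μ :=
    ((integ_m hsupp i j).const_mul 2).add ((integ_Txy hsupp).const_mul (-4))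
  have IE2 : Integrable (fun u : Fin r → ℂ =>
      4 * ((u i * (starRingEnd ℂ) (u j)).re * (u i * (starRingEnd ℂ) (u j)).re) +
      (2 * (Complex.normSq (u i) * Complex.normSq (u j)) +
      (-4) * ((u i * (starRingEnd ℂ) (u j)).re *
        (Complex.normSq (u i) + Complex.normSq (u j))))) μ :=
    ((integ_T2 hsupp).const_mul 4).add IE1
  have IE3 : Integrable (fun u : Fin r → ℂ => Complex.normSq (u j) * Complex.normSq (u j) +
      (4 * ((u i * (starRingEnd ℂ) (u j)).re * (u i * (starRingEnd ℂ) (u j)).re) +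
      (2 * (Complex.normSq (u i) * Complex.normSq (u j)) +
      (-4) * ((u i * (starRingEnd ℂ) (u j)).re *
        (Complex.normSq (u i) + Complex.normSq (u j)))))) μ :=
    (integ_m hsupp j j).add IE2
  rw [integral_const_mul, integral_add (integ_m hsupp i i) IE3,
    integral_add (integ_m hsupp j j) IE2,
    integral_add ((integ_T2 hsupp).const_mul 4) IE1,
    integral_add ((integ_m hsupp i j).const_mul 2) ((integ_Txy hsupp).const_mul (-4)),
    integral_const_mul, integral_const_mul, integral_const_mul] at hmj
  have hBm : m μ i j = (∫ u, (u i * (starRingEnd ℂ) (u j)).re *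
      (u i * (starRingEnd ℂ) (u j)).re ∂μ) + ∫ u, (u i * (starRingEnd ℂ) (u j)).im *
      (u i * (starRingEnd ℂ) (u j)).im ∂μ := hB
  beta_reduce at hpA hpC
  have hd1 : m μ i i = ∫ u, Complex.normSq (u i) * Complex.normSq (u i) ∂μ := rfl
  have hd2 : m μ j j = ∫ u, Complex.normSq (u j) * Complex.normSq (u j) ∂μ := rfl
  have hd3 : m μ i j = ∫ u, Complex.normSq (u i) * Complex.normSq (u j) ∂μ := rfl
  constructor <;> linarith [hpA, hpC, hBm, hmi, hmj, hd1, hd2, hd3]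

end moments

lemma m_values (hsupp : μ {u : Fin r → ℂ | ∑ α, Complex.normSq (u α) = 1}ᶜ = 0)
    (hinv : ∀ U : Matrix.unitaryGroup (Fin r) ℂ,
      μ.map (fun u => (U : Matrix (Fin r) (Fin r) ℂ).mulVec u) = μ)
    (hr2 : 2 ≤ r) :
    ∀ i j : Fin r, m μ i j = (if i = j then 2 else 1) / (r * (r + 1)) := by
  obtain ⟨i0⟩ : Nonempty (Fin r) := ⟨⟨0, by omega⟩⟩
  have hdiag : ∀ i j : Fin r, m μ i i = m μ j j := by
    intro i j
    rcases eq_or_ne i j with rfl | h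
    · rfl
    · exact (key_moments hsupp hinv h).1
  have hoff : ∀ i j : Fin r, i ≠ j → m μ i j = m μ i i / 2 := fun i j h =>
    (key_moments hsupp hinv h).2
  have hrow : ∀ i : Fin r, ∑ j, m μ i j = m μ i0 i0 + ((r : ℝ) - 1) * (m μ i0 i0 / 2) := by
    intro i
    rw [← Finset.sum_erase_add _ _ (Finset.mem_univ i)]
    have h2 : ∀ j ∈ Finset.univ.erase i, m μ i j = m μ i0 i0 / 2 := by
      intro j hj
      rw [hoff i j (Ne.symm (Finset.mem_erase.mp hj).1), hdiag i i0]
    rw [Finset.sum_congr rfl h2, Finset.sum_const, Finset.card_erase_of_mem (Finset.mem_univ i),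
      Finset.card_univ, Fintype.card_fin, hdiag i i0, nsmul_eq_mul,
      Nat.cast_sub (by omega : 1 ≤ r), Nat.cast_one]
    ring
  have hsum := sum_m hsupp
  rw [Finset.sum_congr rfl (fun i _ => hrow i), Finset.sum_const, Finset.card_univ,
    Fintype.card_fin, nsmul_eq_mul] at hsum
  have hrpos : (0:ℝ) < r := by exact_mod_cast (by omega : 0 < r)
  have haval : m μ i0 i0 = 2 / ((r:ℝ) * (r + 1)) := by
    rw [eq_div_iff (by positivity)]
    nlinarith [hsum]
  intro i j
  rcases eq_or_ne i j with rfl | h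
  · rw [if_pos rfl, hdiag i i0, haval]
  · rw [if_neg h, hoff i j h, hdiag i i0, haval]
    ring


lemma master (hsupp : μ {u : Fin r → ℂ | ∑ α, Complex.normSq (u α) = 1}ᶜ = 0)
    (hinv : ∀ U : Matrix.unitaryGroup (Fin r) ℂ,
      μ.map (fun u => (U : Matrix (Fin r) (Fin r) ℂ).mulVec u) = μ)
    (A : Matrix (Fin r) (Fin r) ℂ) (hA : A.IsHermitian) :
    ∫ u, ‖∑ α, ∑ β, A α β * u α * (starRingEnd ℂ) (u β)‖ ^ 2 ∂μ
      = ∑ γ, ∑ δ, (hA.eigenvalues γ * hA.eigenvalues δ) * m μ γ δ := by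
  classical
  set V : Matrix (Fin r) (Fin r) ℂ := (hA.eigenvectorUnitary : Matrix (Fin r) (Fin r) ℂ) with hVdef
  set W : Matrix (Fin r) (Fin r) ℂ := (Vᴴ)ᵀ with hWdef
  have hVu : V * Vᴴ = 1 := by
    have := (Matrix.mem_unitaryGroup_iff).mp (hA.eigenvectorUnitary).2
    simpa [Matrix.star_eq_conjTranspose] using this
  have hVV : Vᴴ * V = 1 := by
    have := (Matrix.mem_unitaryGroup_iff').mp (hA.eigenvectorUnitary).2
    simpa [Matrix.star_eq_conjTranspose] using this
  have hW : W ∈ Matrix.unitaryGroup (Fin r) ℂ := by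
    rw [Matrix.mem_unitaryGroup_iff, Matrix.star_eq_conjTranspose]
    have h1 : Wᴴ = Vᵀ := by
      ext a b
      simp [hWdef, Matrix.conjTranspose_apply, Matrix.transpose_apply]
    rw [h1, hWdef, ← Matrix.transpose_mul, hVu, Matrix.transpose_one]
  have hWapp : ∀ a b, W a b = (starRingEnd ℂ) (V a b) := by
    intro a b; rw [hWdef, Matrix.transpose_apply, Matrix.conjTranspose_apply]; rfl
  have hent : ∀ α β, A α β
      = ∑ γ, V α γ * (hA.eigenvalues γ : ℂ) * (starRingEnd ℂ) (V β γ) := by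
    intro α β
    conv_lhs => rw [hA.spectral_theorem, Unitary.conjStarAlgAut_apply]
    rw [Matrix.mul_apply]
    refine Finset.sum_congr rfl fun δ _ => ?_
    rw [Matrix.mul_diagonal, Matrix.star_apply]
    rfl
  have hcol : ∀ (u : Fin r → ℂ) (γ : Fin r), (∑ α, V α γ * W.mulVec u α) = u γ := by
    intro u γ
    have e1 : (∑ α, V α γ * W.mulVec u α)
        = ∑ α, ∑ δ, V α γ * ((starRingEnd ℂ) (V α δ) * u δ) := by
      refine Finset.sum_congr rfl fun α _ => ?_
      rw [Matrix.mulVec, dotProduct, Finset.mul_sum]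
      refine Finset.sum_congr rfl fun δ _ => ?_
      rw [hWapp]
    rw [e1, Finset.sum_comm]
    have e2 : ∀ δ, (∑ α, V α γ * ((starRingEnd ℂ) (V α δ) * u δ))
        = (∑ α, (starRingEnd ℂ) (V α δ) * V α γ) * u δ := by
      intro δ
      rw [Finset.sum_mul]
      exact Finset.sum_congr rfl fun α _ => by ring
    rw [Finset.sum_congr rfl fun δ _ => e2 δ]
    have e3 : ∀ δ, (∑ α, (starRingEnd ℂ) (V α δ) * V α γ) = if δ = γ then 1 else 0 := by
      intro δ
      have := congrFun (congrFun hVV δ) γ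
      rw [Matrix.mul_apply] at this
      simp only [Matrix.conjTranspose_apply, Matrix.one_apply, RCLike.star_def] at this
      rw [this]
    rw [Finset.sum_congr rfl fun δ _ => by rw [e3 δ]]
    simp
  have hQ : ∀ u : Fin r → ℂ,
      (∑ α, ∑ β, A α β * W.mulVec u α * (starRingEnd ℂ) (W.mulVec u β))
      = ((∑ γ, hA.eigenvalues γ * Complex.normSq (u γ) : ℝ) : ℂ) := by
    intro u
    have e1 : ∀ α β, A α β * W.mulVec u α * (starRingEnd ℂ) (W.mulVec u β)
        = ∑ γ, (hA.eigenvalues γ : ℂ) *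
          ((V α γ * W.mulVec u α) * (starRingEnd ℂ) (V β γ * W.mulVec u β)) := by
      intro α β
      rw [hent α β, Finset.sum_mul, Finset.sum_mul]
      refine Finset.sum_congr rfl fun γ _ => ?_
      rw [_root_.map_mul]
      ring
    calc (∑ α, ∑ β, A α β * W.mulVec u α * (starRingEnd ℂ) (W.mulVec u β))
        = ∑ α, ∑ β, ∑ γ, (hA.eigenvalues γ : ℂ) *
            ((V α γ * W.mulVec u α) * (starRingEnd ℂ) (V β γ * W.mulVec u β)) :=
          Finset.sum_congr rfl fun α _ => Finset.sum_congr rfl fun β _ => e1 α β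
      _ = ∑ α, ∑ γ, ∑ β, (hA.eigenvalues γ : ℂ) *
            ((V α γ * W.mulVec u α) * (starRingEnd ℂ) (V β γ * W.mulVec u β)) :=
          Finset.sum_congr rfl fun α _ => Finset.sum_comm
      _ = ∑ γ, ∑ α, ∑ β, (hA.eigenvalues γ : ℂ) *
            ((V α γ * W.mulVec u α) * (starRingEnd ℂ) (V β γ * W.mulVec u β)) :=
          Finset.sum_comm
      _ = ∑ γ, (hA.eigenvalues γ : ℂ) * ((∑ α, V α γ * W.mulVec u α) *
            (starRingEnd ℂ) (∑ β, V β γ * W.mulVec u β)) := by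
          have hPP : ∀ γ : Fin r, (∑ α, V α γ * W.mulVec u α) *
              (starRingEnd ℂ) (∑ β, V β γ * W.mulVec u β)
              = ∑ α, ∑ β, (V α γ * W.mulVec u α) *
                (starRingEnd ℂ) (V β γ * W.mulVec u β) := by
            intro γ
            rw [map_sum, Finset.sum_mul_sum]
          refine Finset.sum_congr rfl fun γ _ => ?_
          rw [hPP γ, Finset.mul_sum]
          refine Finset.sum_congr rfl fun α _ => ?_
          rw [Finset.mul_sum]
      _ = ∑ γ, (hA.eigenvalues γ : ℂ) * (u γ * (starRingEnd ℂ) (u γ)) := by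
          refine Finset.sum_congr rfl fun γ _ => ?_
          rw [hcol u γ]
      _ = ((∑ γ, hA.eigenvalues γ * Complex.normSq (u γ) : ℝ) : ℂ) := by
          push_cast
          refine Finset.sum_congr rfl fun γ _ => ?_
          rw [Complex.mul_conj]
  have contQ : Continuous (fun u : Fin r → ℂ =>
      ‖∑ α, ∑ β, A α β * u α * (starRingEnd ℂ) (u β)‖ ^ 2) := by
    apply Continuous.pow
    apply continuous_norm.comp
    exact continuous_finset_sum _ fun α _ => continuous_finset_sum _ fun β _ =>
      ((continuous_const.mul (continuous_apply α)).mul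
        (Complex.continuous_conj.comp (continuous_apply β)))
  have hsub : ∫ u, (fun u : Fin r → ℂ =>
        ‖∑ α, ∑ β, A α β * u α * (starRingEnd ℂ) (u β)‖ ^ 2) (W.mulVec u) ∂μ
      = ∫ u, ‖∑ α, ∑ β, A α β * u α * (starRingEnd ℂ) (u β)‖ ^ 2 ∂μ :=
    intvar hinv ⟨W, hW⟩ contQ
  rw [← hsub]
  have hpt : (fun u : Fin r → ℂ => (fun u : Fin r → ℂ =>
        ‖∑ α, ∑ β, A α β * u α * (starRingEnd ℂ) (u β)‖ ^ 2) (W.mulVec u))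
      = fun u : Fin r → ℂ => ∑ γ, ∑ δ, (hA.eigenvalues γ * hA.eigenvalues δ) *
          (Complex.normSq (u γ) * Complex.normSq (u δ)) := by
    funext u
    beta_reduce
    rw [hQ u, Complex.norm_real, Real.norm_eq_abs, sq_abs, sq, Finset.sum_mul_sum]
    refine Finset.sum_congr rfl fun γ _ => Finset.sum_congr rfl fun δ _ => by ring
  rw [hpt, integral_finset_sum _ (fun γ _ => integrable_finset_sum _
    (fun δ _ => (integ_m hsupp γ δ).const_mul _))]
  refine Finset.sum_congr rfl fun γ _ => ?_
  rw [integral_finset_sum _ (fun δ _ => (integ_m hsupp γ δ).const_mul _)]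
  refine Finset.sum_congr rfl fun δ _ => ?_
  rw [integral_const_mul]
  rfl

end Stmt5Aux

open MeasureTheory

theorem stmt5 (r : ℕ) (hr : 0 < r) (μ : Measure (Fin r → ℂ)) [IsProbabilityMeasure μ]
    -- μ is carried by the unit sphere S^{2r-1} ⊂ ℂ^r
    (hsupp : μ {u : Fin r → ℂ | ∑ α, Complex.normSq (u α) = 1}ᶜ = 0)
    -- μ is invariant under the unitary group U(r) (rotation invariance)
    (hinv : ∀ U : Matrix.unitaryGroup (Fin r) ℂ,
      μ.map (fun u => (U : Matrix (Fin r) (Fin r) ℂ).mulVec u) = μ)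
    (A : Matrix (Fin r) (Fin r) ℂ) (hA : A.IsHermitian) (htr : A.trace = 0) :
    ∫ u, ‖∑ α, ∑ β, A α β * u α * (starRingEnd ℂ) (u β)‖ ^ 2 ∂μ =
        (∑ α, hA.eigenvalues α ^ 2) / (r * (r + 1)) ∧
      ∫ u, ‖∑ α, ∑ β, A α β * u α * (starRingEnd ℂ) (u β)‖ ^ 2 ∂μ ≤
        (⨆ α, |hA.eigenvalues α|) ^ 2 / (r + 1) := by
  classical
  have hmaster := Stmt5Aux.master hsupp hinv A hA
  have hsum0 : ∑ γ, hA.eigenvalues γ = 0 := by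
    have h1 := Stmt5Aux.trace_eq hA
    rw [htr] at h1
    exact_mod_cast h1.symm
  have heq : ∫ u, ‖∑ α, ∑ β, A α β * u α * (starRingEnd ℂ) (u β)‖ ^ 2 ∂μ
      = (∑ α, hA.eigenvalues α ^ 2) / (r * (r + 1)) := by
    rcases Nat.lt_or_ge r 2 with h1 | h2
    · have hr1 : r = 1 := by omega
      subst hr1
      have hlam : hA.eigenvalues 0 = 0 := by simpa using hsum0
      rw [hmaster]
      simp [Fin.sum_univ_one, hlam]
    · rw [hmaster]
      have hm := Stmt5Aux.m_values hsupp hinv h2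
      have hterm : ∀ γ δ : Fin r, (hA.eigenvalues γ * hA.eigenvalues δ) * Stmt5Aux.m μ γ δ
          = hA.eigenvalues γ * hA.eigenvalues δ / ((r:ℝ) * (r+1))
            + (if δ = γ then hA.eigenvalues γ * hA.eigenvalues δ / ((r:ℝ)*(r+1)) else 0) := by
        intro γ δ
        rw [hm γ δ]
        rcases eq_or_ne δ γ with rfl | h
        · rw [if_pos rfl, if_pos rfl]; ring
        · rw [if_neg (Ne.symm h), if_neg h]; ring
      calc ∑ γ, ∑ δ, (hA.eigenvalues γ * hA.eigenvalues δ) * Stmt5Aux.m μ γ δ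
          = ∑ γ, ∑ δ, (hA.eigenvalues γ * hA.eigenvalues δ / ((r:ℝ) * (r+1))
            + (if δ = γ then hA.eigenvalues γ * hA.eigenvalues δ / ((r:ℝ)*(r+1)) else 0)) :=
            Finset.sum_congr rfl fun γ _ => Finset.sum_congr rfl fun δ _ => hterm γ δ
        _ = ∑ γ, ((∑ δ, hA.eigenvalues γ * hA.eigenvalues δ / ((r:ℝ)*(r+1)))
            + hA.eigenvalues γ * hA.eigenvalues γ / ((r:ℝ)*(r+1))) := by
            refine Finset.sum_congr rfl fun γ _ => ?_
            rw [Finset.sum_add_distrib, Finset.sum_ite_eq' Finset.univ γ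
              (fun δ => hA.eigenvalues γ * hA.eigenvalues δ / ((r:ℝ)*(r+1)))]
            simp
        _ = (∑ α, hA.eigenvalues α ^ 2) / ((r:ℝ) * (r + 1)) := by
            rw [Finset.sum_add_distrib]
            have hz : ∑ γ, (∑ δ, hA.eigenvalues γ * hA.eigenvalues δ / ((r:ℝ)*(r+1))) = 0 := by
              simp only [← Finset.sum_div, ← Finset.mul_sum, hsum0, mul_zero, zero_div,
                Finset.sum_const_zero]
            rw [hz, zero_add, ← Finset.sum_div]
            congr 1
            exact Finset.sum_congr rfl fun γ _ => by rw [sq]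
  refine ⟨heq, ?_⟩
  rw [heq]
  haveI : Nonempty (Fin r) := ⟨⟨0, hr⟩⟩
  have hle : ∀ γ : Fin r, |hA.eigenvalues γ| ≤ ⨆ α, |hA.eigenvalues α| := fun γ =>
    le_ciSup (Set.Finite.bddAbove (Set.finite_range (fun α => |hA.eigenvalues α|))) γ
  have hsq : ∀ γ : Fin r, hA.eigenvalues γ ^ 2 ≤ (⨆ α, |hA.eigenvalues α|) ^ 2 := fun γ => by
    rw [← sq_abs]; exact pow_le_pow_left₀ (abs_nonneg _) (hle γ) 2
  have hsum : (∑ α, hA.eigenvalues α ^ 2) ≤ r * (⨆ α, |hA.eigenvalues α|) ^ 2 := by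
    calc ∑ α, hA.eigenvalues α ^ 2 ≤ ∑ _α : Fin r, (⨆ α, |hA.eigenvalues α|) ^ 2 :=
          Finset.sum_le_sum fun γ _ => hsq γ
      _ = r * (⨆ α, |hA.eigenvalues α|) ^ 2 := by
          rw [Finset.sum_const, Finset.card_univ, Fintype.card_fin, nsmul_eq_mul]
  have hrpos : (0:ℝ) < r := by exact_mod_cast hr
  have hd1 : (0:ℝ) < (r:ℝ) * (r + 1) := by nlinarith
  have hd2 : (0:ℝ) < (r:ℝ) + 1 := by linarith
  rw [div_le_div_iff₀ hd1 hd2]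
  nlinarith [hsum, sq_nonneg (⨆ α, |hA.eigenvalues α|)]
end

section
/- For positive integers k, r, n, the quantity I_{k,r,n} = ∫_{Δ_{k-1}} (Σ_{s=1}^k x_s/s)^n dν_{k,r}(x) satisfies the lower bound I_{k,r,n} ≥ r^n (1 + 1/2 + ... + 1/k)^n / (kr(kr+1)···(kr+n−1)). -/
open MeasureTheory

/-- Integral over the standard (k-1)-simplex `{x ∈ ℝ^k : x_s ≥ 0, Σ x_s = 1}`, parametrized by
the first `k-1` coordinates with `x_k = 1 - Σ_{i<k-1} x_i`, Lebesgue integral in dimension `k-1`. -/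
noncomputable def simplexIntegral (k : ℕ) (f : (Fin k → ℝ) → ℝ) : ℝ :=
  ∫ y in {y : Fin (k - 1) → ℝ | (∀ i, 0 ≤ y i) ∧ ∑ i, y i ≤ 1},
    f (fun s => if h : (s : ℕ) < k - 1 then y ⟨s, h⟩ else 1 - ∑ i, y i)

/-- Integral against the probability measure
`dν_{k,r}(x) = (kr−1)! (x_1⋯x_k)^{r−1}/((r−1)!)^k dx` on the simplex. -/
noncomputable def nuIntegral (k r : ℕ) (f : (Fin k → ℝ) → ℝ) : ℝ :=
  simplexIntegral k (fun x =>
    f x * ((Nat.factorial (k * r - 1) : ℝ) / (Nat.factorial (r - 1) : ℝ) ^ k *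
      ∏ s, x s ^ (r - 1)))

open Set intervalIntegral


lemma beta_scaled : ∀ (a : ℕ) (c : ℕ) (b : ℝ),
    ∫ t in (0:ℝ)..b, t^a * (b-t)^c
      = b^(a+c+1) * ((a.factorial * c.factorial : ℕ) : ℝ) / ((a+c+1).factorial : ℝ) := by
  intro a
  induction a with
  | zero =>
    intro c b
    have h1 : ∫ t in (0:ℝ)..b, t^(0:ℕ) * (b-t)^c = ∫ t in (0:ℝ)..b, (b-t)^c := by
      simp
    have h2 : (∫ t in (0:ℝ)..b, (b-t)^c) = ∫ t in (0:ℝ)..b, t^c := by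
      have := intervalIntegral.integral_comp_sub_left (a := (0:ℝ)) (b := b)
        (fun t => t^c) b
      simpa using this
    rw [h1, h2, integral_pow]
    have hc : ((c+1).factorial : ℝ) = (c+1) * c.factorial := by
      push_cast [Nat.factorial_succ]; ring
    simp only [Nat.zero_add, Nat.factorial_zero, one_mul]
    rw [hc]
    have : ((c:ℝ)+1) ≠ 0 := by positivity
    field_simp
    ring
  | succ a IH =>
    intro c b
    have hcc : ((c:ℝ)+1) ≠ 0 := by positivity
    have hu : ∀ x ∈ Set.uIcc (0:ℝ) b, HasDerivAt (fun t : ℝ => t^(a+1))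
        (((a:ℝ)+1) * x^a) x := by
      intro x _
      simpa using (hasDerivAt_pow (a+1) x)
    have hv : ∀ x ∈ Set.uIcc (0:ℝ) b, HasDerivAt (fun t : ℝ => -(b-t)^(c+1) / ((c:ℝ)+1))
        ((b-x)^c) x := by
      intro x _
      have h1 : HasDerivAt (fun t : ℝ => b - t) (-1) x := by
        simpa using ((hasDerivAt_id x).const_sub b)
      have h2 : HasDerivAt (fun t : ℝ => (b-t)^(c+1)) (((c:ℝ)+1) * (b-x)^c * (-1)) x := by
        simpa using (h1.fun_pow (c+1))
      have h3 : HasDerivAt (fun t : ℝ => -(b-t)^(c+1) / ((c:ℝ)+1))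
          (-(((c:ℝ)+1) * (b-x)^c * (-1)) / ((c:ℝ)+1)) x := (h2.neg).div_const ((c:ℝ)+1)
      convert h3 using 1
      rw [eq_div_iff hcc]; ring
    have hc1 : IntervalIntegrable (fun x : ℝ => ((a:ℝ)+1) * x^a) volume 0 b :=
      (continuous_const.mul (continuous_pow a)).intervalIntegrable _ _
    have hc2 : IntervalIntegrable (fun x : ℝ => (b-x)^c) volume 0 b :=
      (((continuous_const.sub continuous_id).pow c)).intervalIntegrable _ _
    have key := intervalIntegral.integral_mul_deriv_eq_deriv_mul hu hv hc1 hc2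
    have e1 : ∀ x : ℝ, ((a:ℝ)+1)*x^a * (-(b-x)^(c+1)/((c:ℝ)+1))
        = (-((a:ℝ)+1)/((c:ℝ)+1)) * (x^a*(b-x)^(c+1)) := by
      intro x; field_simp
    simp_rw [e1] at key
    rw [intervalIntegral.integral_const_mul, IH (c+1) b] at key
    rw [key]
    have harg : a + (c+1) + 1 = (a+1) + c + 1 := by omega
    rw [harg]
    have hfac : (((a+1).factorial * c.factorial : ℕ) : ℝ)
        = ((a:ℝ)+1) * ((a.factorial * (c+1).factorial : ℕ) : ℝ) / ((c:ℝ)+1) := by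
      push_cast [Nat.factorial_succ]
      field_simp
    rw [hfac]
    simp only [sub_self]
    rw [zero_pow (Nat.succ_ne_zero c)]
    field_simp
    ring


def Sset (m : ℕ) : Set (Fin m → ℝ) := {y | (∀ i, 0 ≤ y i) ∧ ∑ i, y i ≤ 1}

lemma isClosed_Sset (m : ℕ) : IsClosed (Sset m) := by
  have h1 : IsClosed {y : Fin m → ℝ | ∀ i, 0 ≤ y i} := by
    have : {y : Fin m → ℝ | ∀ i, 0 ≤ y i} = ⋂ i, {y | 0 ≤ y i} := by
      ext y; simp
    rw [this]
    exact isClosed_iInter fun i => isClosed_le continuous_const (continuous_apply i)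
  have h2 : IsClosed {y : Fin m → ℝ | ∑ i, y i ≤ 1} :=
    isClosed_le (by continuity) continuous_const
  exact h1.inter h2

lemma Sset_subset_Icc (m : ℕ) : Sset m ⊆ Set.Icc (0 : Fin m → ℝ) 1 := by
  intro y hy
  constructor
  · intro i; exact hy.1 i
  · intro i
    calc y i ≤ ∑ j, y j := Finset.single_le_sum (fun j _ => hy.1 j) (Finset.mem_univ i)
    _ ≤ 1 := hy.2

lemma isCompact_Sset (m : ℕ) : IsCompact (Sset m) := by
  refine IsCompact.of_isClosed_subset ?_ (isClosed_Sset m) (Sset_subset_Icc m)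
  exact isCompact_Icc

lemma measurableSet_Sset (m : ℕ) : MeasurableSet (Sset m) :=
  (isClosed_Sset m).measurableSet

lemma integrableOn_Sset {m : ℕ} {g : (Fin m → ℝ) → ℝ} (hg : Continuous g) :
    IntegrableOn g (Sset m) :=
  hg.continuousOn.integrableOn_compact (isCompact_Sset m)

noncomputable def J (m : ℕ) (a : Fin m → ℕ) (c : ℕ) : ℝ :=
  ∫ y in Sset m, (∏ i, y i ^ a i) * (1 - ∑ i, y i)^c

section Succ
variable (m : ℕ) (a : Fin (m+1) → ℕ) (c : ℕ)

-- the product-space set and integrand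
def A' : Set (ℝ × (Fin m → ℝ)) := {p | 0 ≤ p.1 ∧ (∀ i, 0 ≤ p.2 i) ∧ p.1 + ∑ i, p.2 i ≤ 1}

noncomputable def hfun : ℝ × (Fin m → ℝ) → ℝ :=
  fun p => (p.1 ^ (a 0) * ∏ i, p.2 i ^ a (Fin.succ i)) * (1 - (p.1 + ∑ i, p.2 i))^c

lemma isCompact_A' : IsCompact (A' m) := by
  have hclosed : IsClosed (A' m) := by
    have h1 : IsClosed {p : ℝ × (Fin m → ℝ) | 0 ≤ p.1} :=
      isClosed_le continuous_const continuous_fst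
    have h2 : IsClosed {p : ℝ × (Fin m → ℝ) | ∀ i, 0 ≤ p.2 i} := by
      have : {p : ℝ × (Fin m → ℝ) | ∀ i, 0 ≤ p.2 i} = ⋂ i, {p | 0 ≤ p.2 i} := by
        ext p; simp
      rw [this]
      exact isClosed_iInter fun i =>
        isClosed_le continuous_const ((continuous_apply i).comp continuous_snd)
    have h3 : IsClosed {p : ℝ × (Fin m → ℝ) | p.1 + ∑ i, p.2 i ≤ 1} := by
      refine isClosed_le ?_ continuous_const
      exact continuous_fst.add (by fun_prop)
    have hA : A' m = ({p : ℝ × (Fin m → ℝ) | 0 ≤ p.1} ∩ {p | ∀ i, 0 ≤ p.2 i}) ∩ {p | p.1 + ∑ i, p.2 i ≤ 1} := by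
      ext p; simp [A', and_assoc]
    rw [hA]
    exact (h1.inter h2).inter h3
  have hsub : A' m ⊆ (Set.Icc (0:ℝ) 1) ×ˢ (Set.Icc (0 : Fin m → ℝ) 1) := by
    rintro p ⟨h1, h2, h3⟩
    have hsum : 0 ≤ ∑ i, p.2 i := Finset.sum_nonneg fun i _ => h2 i
    constructor
    · exact ⟨h1, by linarith⟩
    · refine ⟨fun i => h2 i, fun i => ?_⟩
      have : p.2 i ≤ ∑ j, p.2 j := Finset.single_le_sum (fun j _ => h2 j) (Finset.mem_univ i)
      simp only [Pi.one_apply]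
      linarith
  exact IsCompact.of_isClosed_subset (isCompact_Icc.prod isCompact_Icc) hclosed hsub

lemma measurableSet_A' : MeasurableSet (A' m) := (isCompact_A' m).isClosed.measurableSet

lemma continuous_hfun : Continuous (hfun m a c) := by
  unfold hfun
  fun_prop

lemma integrable_ind : Integrable (Set.indicator (A' m) (hfun m a c)) := by
  rw [integrable_indicator_iff (measurableSet_A' m)]
  exact (continuous_hfun m a c).continuousOn.integrableOn_compact (isCompact_A' m)

lemma J_succ :
    J (m+1) a c = (((a 0).factorial * c.factorial : ℕ) : ℝ) / (((a 0) + c + 1).factorial : ℝ)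
      * J m (fun i => a (Fin.succ i)) ((a 0) + c + 1) := by
  classical
  set β : ℝ := (((a 0).factorial * c.factorial : ℕ) : ℝ) / (((a 0) + c + 1).factorial : ℝ) with hβ
  set e := MeasurableEquiv.piFinSuccAbove (fun _ : Fin (m+1) => ℝ) 0 with he
  set g : (Fin (m+1) → ℝ) → ℝ := fun y => (∏ i, y i ^ a i) * (1 - ∑ i, y i)^c with hg
  have hmp := (volume_preserving_piFinSuccAbove (fun _ : Fin (m+1) => ℝ) 0).symm
  have step1 : J (m+1) a c = ∫ y, Set.indicator (Sset (m+1)) g y :=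
    (MeasureTheory.integral_indicator (measurableSet_Sset (m+1))).symm
  have step2 : (∫ y, Set.indicator (Sset (m+1)) g y)
      = ∫ p : ℝ × (Fin m → ℝ), Set.indicator (Sset (m+1)) g (e.symm p) :=
    (hmp.integral_comp e.symm.measurableEmbedding _).symm
  have hcomp : ∀ p : ℝ × (Fin m → ℝ),
      Set.indicator (Sset (m+1)) g (e.symm p) = Set.indicator (A' m) (hfun m a c) p := by
    intro p
    have hsymm : e.symm p = Fin.cons p.1 p.2 := by
      simp [he, MeasurableEquiv.piFinSuccAbove, Fin.insertNthEquiv, Fin.insertNth_zero]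
    have hmem : e.symm p ∈ Sset (m+1) ↔ p ∈ A' m := by
      rw [hsymm]
      constructor
      · rintro ⟨h1, h2⟩
        refine ⟨by simpa using h1 0, fun i => by simpa using h1 i.succ, ?_⟩
        rw [Fin.sum_univ_succ] at h2
        simpa using h2
      · rintro ⟨h1, h2, h3⟩
        refine ⟨fun i => ?_, ?_⟩
        · refine Fin.cases ?_ ?_ i
          · simpa using h1
          · intro j; simpa using h2 j
        · rw [Fin.sum_univ_succ]; simpa using h3
    have hval : g (e.symm p) = hfun m a c p := by
      rw [hsymm]
      show (∏ i, (Fin.cons p.1 p.2 : Fin (m+1) → ℝ) i ^ a i) * (1 - ∑ i, (Fin.cons p.1 p.2 : Fin (m+1) → ℝ) i)^c = _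
      unfold hfun
      rw [Fin.prod_univ_succ, Fin.sum_univ_succ]
      simp
    by_cases hp : p ∈ A' m
    · rw [Set.indicator_of_mem hp, Set.indicator_of_mem (hmem.mpr hp), hval]
    · rw [Set.indicator_of_notMem hp, Set.indicator_of_notMem (fun hh => hp (hmem.mp hh))]
  have step3 : (∫ p : ℝ × (Fin m → ℝ), Set.indicator (Sset (m+1)) g (e.symm p))
      = ∫ p : ℝ × (Fin m → ℝ), Set.indicator (A' m) (hfun m a c) p := by
    congr 1; funext p; exact hcomp p
  have step4 : (∫ p : ℝ × (Fin m → ℝ), Set.indicator (A' m) (hfun m a c) p)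
      = ∫ y : Fin m → ℝ, ∫ t : ℝ, Set.indicator (A' m) (hfun m a c) (t, y) := by
    exact integral_prod_symm _ (integrable_ind m a c)
  -- inner integral
  have inner : ∀ y : Fin m → ℝ,
      (∫ t : ℝ, Set.indicator (A' m) (hfun m a c) (t, y))
      = Set.indicator (Sset m)
          (fun y => β * ((∏ i, y i ^ a (Fin.succ i)) * (1 - ∑ i, y i)^((a 0) + c + 1))) y := by
    intro y
    by_cases hy : y ∈ Sset m
    · set b : ℝ := 1 - ∑ i, y i with hb
      have hb0 : 0 ≤ b := by simp only [hb, sub_nonneg]; exact hy.2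
      have hind : ∀ t : ℝ, Set.indicator (A' m) (hfun m a c) (t, y)
          = Set.indicator (Set.Icc 0 b)
              (fun t => (∏ i, y i ^ a (Fin.succ i)) * (t ^ (a 0) * (b - t)^c)) t := by
        intro t
        have hmem2 : (t, y) ∈ A' m ↔ t ∈ Set.Icc 0 b := by
          constructor
          · rintro ⟨h1, _, h3⟩
            exact ⟨h1, by simp only [hb]; linarith⟩
          · rintro ⟨h1, h2⟩
            refine ⟨h1, hy.1, ?_⟩
            simp only [hb] at h2; linarith
        by_cases ht : (t, y) ∈ A' m
        · rw [Set.indicator_of_mem ht, Set.indicator_of_mem (hmem2.mp ht)]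
          unfold hfun
          have : 1 - (t + ∑ i, y i) = b - t := by simp only [hb]; ring
          rw [this]; ring
        · rw [Set.indicator_of_notMem ht,
            Set.indicator_of_notMem (fun hh => ht (hmem2.mpr hh))]
      rw [Set.indicator_of_mem hy]
      calc (∫ t : ℝ, Set.indicator (A' m) (hfun m a c) (t, y))
          = ∫ t : ℝ, Set.indicator (Set.Icc 0 b)
              (fun t => (∏ i, y i ^ a (Fin.succ i)) * (t ^ (a 0) * (b - t)^c)) t := by
            congr 1; funext t; exact hind t
        _ = ∫ t in Set.Icc (0:ℝ) b,
              (∏ i, y i ^ a (Fin.succ i)) * (t ^ (a 0) * (b - t)^c) := by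
            rw [MeasureTheory.integral_indicator measurableSet_Icc]
        _ = ∫ t in (0:ℝ)..b, (∏ i, y i ^ a (Fin.succ i)) * (t ^ (a 0) * (b - t)^c) := by
            rw [intervalIntegral.integral_of_le hb0, integral_Icc_eq_integral_Ioc]
        _ = (∏ i, y i ^ a (Fin.succ i)) * ∫ t in (0:ℝ)..b, t ^ (a 0) * (b - t)^c := by
            rw [intervalIntegral.integral_const_mul]
        _ = β * ((∏ i, y i ^ a (Fin.succ i)) * (1 - ∑ i, y i)^((a 0) + c + 1)) := by
            rw [beta_scaled, ← hb, hβ]; ring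
    · rw [Set.indicator_of_notMem hy]
      have : ∀ t : ℝ, Set.indicator (A' m) (hfun m a c) (t, y) = 0 := by
        intro t
        apply Set.indicator_of_notMem
        rintro ⟨h1, h2, h3⟩
        apply hy
        refine ⟨h2, ?_⟩
        linarith
      simp only [this]
      exact MeasureTheory.integral_zero _ _
  have step5 : (∫ y : Fin m → ℝ, ∫ t : ℝ, Set.indicator (A' m) (hfun m a c) (t, y))
      = β * J m (fun i => a (Fin.succ i)) ((a 0) + c + 1) := by
    calc (∫ y : Fin m → ℝ, ∫ t : ℝ, Set.indicator (A' m) (hfun m a c) (t, y))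
        = ∫ y : Fin m → ℝ, Set.indicator (Sset m)
            (fun y => β * ((∏ i, y i ^ a (Fin.succ i)) * (1 - ∑ i, y i)^((a 0) + c + 1))) y := by
          congr 1; funext y; exact inner y
      _ = ∫ y in Sset m, β * ((∏ i, y i ^ a (Fin.succ i)) * (1 - ∑ i, y i)^((a 0) + c + 1)) :=
          MeasureTheory.integral_indicator (measurableSet_Sset m)
      _ = β * ∫ y in Sset m, (∏ i, y i ^ a (Fin.succ i)) * (1 - ∑ i, y i)^((a 0) + c + 1) :=
          MeasureTheory.integral_const_mul _ _
      _ = β * J m (fun i => a (Fin.succ i)) ((a 0) + c + 1) := rfl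
  rw [step1, step2, step3, step4, step5]

end Succ


lemma J_eq : ∀ (m : ℕ) (a : Fin m → ℕ) (c : ℕ),
    J m a c = (∏ i, ((a i).factorial : ℝ)) * (c.factorial : ℝ)
      / (((m + c + ∑ i, a i).factorial : ℝ)) := by
  intro m
  induction m with
  | zero =>
    intro a c
    unfold J
    have hS : Sset 0 = Set.univ := by
      ext y; simp [Sset]
    rw [hS]
    simp only [Fin.prod_univ_zero, Fin.sum_univ_zero, one_mul, sub_zero, one_pow]
    rw [MeasureTheory.setIntegral_univ, MeasureTheory.integral_const]
    rw [MeasureTheory.volume_pi, MeasureTheory.measureReal_def, MeasureTheory.Measure.pi_empty_univ]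
    simp
    exact (div_self (Nat.cast_ne_zero.mpr (Nat.factorial_ne_zero c))).symm
  | succ m IH =>
    intro a c
    rw [J_succ m a c, IH (fun i => a (Fin.succ i)) (a 0 + c + 1),
      Fin.prod_univ_succ (fun i => ((a i).factorial : ℝ)), Fin.sum_univ_succ a]
    have harg : m + (a 0 + c + 1) + ∑ i, a (Fin.succ i)
        = m + 1 + c + (a 0 + ∑ i, a (Fin.succ i)) := by omega
    rw [harg]
    have h1 : ((a 0 + c + 1).factorial : ℝ) ≠ 0 :=
      Nat.cast_ne_zero.mpr (Nat.factorial_ne_zero _)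
    have h2 : ((m + 1 + c + (a 0 + ∑ i, a (Fin.succ i))).factorial : ℝ) ≠ 0 :=
      Nat.cast_ne_zero.mpr (Nat.factorial_ne_zero _)
    push_cast
    field_simp

lemma tangent_pow (n : ℕ) {t A : ℝ} (ht : 0 ≤ t) (hA : 0 ≤ A) (hn : 0 < n) :
    A^n + n * A^(n-1) * (t - A) ≤ t^n := by
  have hfac : (∑ i ∈ Finset.range n, t^i * A^(n-1-i)) * (t - A) = t^n - A^n :=
    geom_sum₂_mul t A n
  rcases le_total A t with h | h
  · have hsum : (n : ℝ) * A^(n-1) ≤ ∑ i ∈ Finset.range n, t^i * A^(n-1-i) := by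
      have : ∀ i ∈ Finset.range n, A^(n-1) ≤ t^i * A^(n-1-i) := by
        intro i hi
        rw [Finset.mem_range] at hi
        have h1 : A^i ≤ t^i := pow_le_pow_left₀ hA h i
        have h2 : A^(n-1) = A^i * A^(n-1-i) := by
          rw [← pow_add]; congr 1; omega
        rw [h2]
        exact mul_le_mul_of_nonneg_right h1 (pow_nonneg hA _)
      calc (n:ℝ) * A^(n-1) = ∑ _i ∈ Finset.range n, A^(n-1) := by
            simp [Finset.sum_const, mul_comm]
        _ ≤ _ := Finset.sum_le_sum this
    nlinarith [mul_le_mul_of_nonneg_right hsum (sub_nonneg.mpr h)]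
  · have hsum : (∑ i ∈ Finset.range n, t^i * A^(n-1-i)) ≤ (n : ℝ) * A^(n-1) := by
      have : ∀ i ∈ Finset.range n, t^i * A^(n-1-i) ≤ A^(n-1) := by
        intro i hi
        rw [Finset.mem_range] at hi
        have h1 : t^i ≤ A^i := pow_le_pow_left₀ ht h i
        have h2 : A^(n-1) = A^i * A^(n-1-i) := by
          rw [← pow_add]; congr 1; omega
        rw [h2]
        exact mul_le_mul_of_nonneg_right h1 (pow_nonneg hA _)
      calc (∑ i ∈ Finset.range n, t^i * A^(n-1-i)) ≤ ∑ _i ∈ Finset.range n, A^(n-1) :=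
            Finset.sum_le_sum this
        _ = (n:ℝ) * A^(n-1) := by simp [Finset.sum_const, mul_comm]
    nlinarith [mul_le_mul_of_nonpos_right hsum (sub_nonpos.mpr h)]

set_option maxHeartbeats 1000000 in
theorem stmt9 (k r n : ℕ) (hk : 0 < k) (hr : 0 < r) (hn : 0 < n) :
    (r : ℝ) ^ n * (∑ s ∈ Finset.range k, (1 : ℝ) / (s + 1)) ^ n /
        (∏ i ∈ Finset.range n, ((k * r : ℕ) + i : ℝ)) ≤
      nuIntegral k r (fun x => (∑ s, x s / ((s : ℕ) + 1)) ^ n) := by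
  classical
  obtain ⟨m, rfl⟩ := Nat.exists_eq_succ_of_ne_zero hk.ne'
  set K : ℕ := (m+1) * r with hK
  have hK1 : 1 ≤ K := Nat.mul_pos (Nat.succ_pos m) hr
  set Q : ℝ := ((r-1).factorial : ℝ)^(m+1) with hQ
  have hQpos : 0 < Q := by positivity
  set C : ℝ := ((K - 1).factorial : ℝ) / Q with hC
  have hCpos : 0 < C := by positivity
  set w : (Fin m → ℝ) → ℝ :=
    fun y => (∏ i, y i ^ (r-1)) * (1 - ∑ i, y i)^(r-1) with hw
  set φ : (Fin m → ℝ) → ℝ :=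
    fun y => (∑ i, y i / ((i:ℕ)+1)) + (1 - ∑ i, y i)/((m:ℝ)+1) with hφ
  set H : ℝ := ∑ s ∈ Finset.range (m+1), (1 : ℝ) / (s + 1) with hH
  set M : ℝ := (r : ℝ) * Q / (K.factorial : ℝ) with hM
  set A : ℝ := H / ((m:ℝ)+1) with hA
  -- continuity
  have hsumcont : Continuous (fun y : Fin m → ℝ => ∑ i, y i) :=
    continuous_finset_sum _ fun i _ => continuous_apply i
  have hwcont : Continuous w := by
    refine Continuous.mul ?_ ?_
    · exact continuous_finset_prod _ fun i _ => (continuous_apply i).pow _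
    · exact (continuous_const.sub hsumcont).pow _
  have hφcont : Continuous φ := by
    refine Continuous.add ?_ ?_
    · exact continuous_finset_sum _ fun i _ => (continuous_apply i).div_const _
    · exact (continuous_const.sub hsumcont).div_const _
  -- rewrite nuIntegral
  have hnu0 : nuIntegral (m+1) r (fun x => (∑ s, x s / ((s : ℕ) + 1)) ^ n)
      = ∫ y in Sset m,
          (∑ s : Fin (m+1), (fun s : Fin (m+1) => if h : (s : ℕ) < m then y ⟨s, h⟩
              else 1 - ∑ i, y i) s / ((s : ℕ) + 1)) ^ n
          * ((Nat.factorial ((m+1) * r - 1) : ℝ) / (Nat.factorial (r - 1) : ℝ) ^ (m+1) *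
             ∏ s : Fin (m+1), (fun s : Fin (m+1) => if h : (s : ℕ) < m then y ⟨s, h⟩
              else 1 - ∑ i, y i) s ^ (r - 1)) := rfl
  have hext1 : ∀ (y : Fin m → ℝ) (i : Fin m),
      (if h : ((Fin.castSucc i : Fin (m+1)) : ℕ) < m then y ⟨(Fin.castSucc i : Fin (m+1)), h⟩
        else 1 - ∑ i, y i) = y i := by
    intro y i
    have hlt : ((Fin.castSucc i : Fin (m+1)) : ℕ) < m := i.is_lt
    rw [dif_pos hlt]
    exact congrArg y (Fin.ext rfl)
  have hext2 : ∀ (y : Fin m → ℝ),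
      (if h : ((Fin.last m : Fin (m+1)) : ℕ) < m then y ⟨(Fin.last m : Fin (m+1)), h⟩
        else 1 - ∑ i, y i) = 1 - ∑ i, y i := by
    intro y
    rw [dif_neg]
    simp
  have hprod : ∀ y : Fin m → ℝ,
      (∏ s : Fin (m+1), (if h : (s : ℕ) < m then y ⟨s, h⟩ else 1 - ∑ i, y i) ^ (r-1)) = w y := by
    intro y
    rw [Fin.prod_univ_castSucc]
    rw [hw]
    simp only []
    congr 1
    · exact Finset.prod_congr rfl fun i _ => by rw [hext1 y i]
    · rw [hext2 y]
  have hsump : ∀ y : Fin m → ℝ,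
      (∑ s : Fin (m+1), (if h : (s : ℕ) < m then y ⟨s, h⟩ else 1 - ∑ i, y i) / ((s : ℕ) + 1))
        = φ y := by
    intro y
    rw [Fin.sum_univ_castSucc]
    rw [hφ]
    simp only []
    congr 1
    · refine Finset.sum_congr rfl fun i _ => ?_
      rw [hext1 y i]
      norm_num [Fin.coe_castSucc]
    · rw [hext2 y]
      norm_num [Fin.val_last]
  have hCfact : (Nat.factorial ((m+1) * r - 1) : ℝ) / (Nat.factorial (r - 1) : ℝ) ^ (m+1)
      = C := by rw [hC, hQ, hK]
  have hnu : nuIntegral (m+1) r (fun x => (∑ s, x s / ((s : ℕ) + 1)) ^ n)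
      = ∫ y in Sset m, (φ y) ^ n * (C * w y) := by
    rw [hnu0]
    congr 1
    funext y
    rw [hsump y, hprod y, hCfact]
  -- value of ∫ w
  have hWJ : (∫ y in Sset m, w y) = J m (fun _ => r-1) (r-1) := rfl
  have hWval : (∫ y in Sset m, w y) = Q / ((K-1).factorial : ℝ) := by
    rw [hWJ, J_eq]
    have h1 : (∏ _i : Fin m, (((r-1).factorial : ℝ))) = ((r-1).factorial : ℝ)^m := by
      simp
    have h2 : (∑ _i : Fin m, (r-1)) = m * (r-1) := by
      simp [mul_comm]
    rw [h1, h2]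
    have h3 : m + (r-1) + m * (r-1) = K - 1 := by
      rw [hK]
      cases r with
      | zero => omega
      | succ r' =>
        simp only [Nat.add_sub_cancel]
        rw [show (m+1)*(r'+1) = (m + r' + m*r') + 1 from by ring, Nat.add_sub_cancel]
    rw [h3, hQ, pow_succ]
  -- value of ∫ y i * w y
  have hMi : ∀ i : Fin m, (∫ y in Sset m, y i * w y) = M := by
    intro i
    have hpt : ∀ y : Fin m → ℝ, y i * w y
        = (∏ j, y j ^ (if j = i then r else r - 1)) * (1 - ∑ j, y j)^(r-1) := by
      intro y
      rw [hw]
      simp only []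
      rw [← mul_assoc]
      congr 1
      have herase : (∏ j ∈ Finset.univ.erase i, y j ^ (if j = i then r else r-1))
          = ∏ j ∈ Finset.univ.erase i, y j ^ (r-1) :=
        Finset.prod_congr rfl fun j hj => by rw [if_neg (Finset.ne_of_mem_erase hj)]
      rw [← Finset.mul_prod_erase Finset.univ (fun j => y j ^ (r-1)) (Finset.mem_univ i),
          ← Finset.mul_prod_erase Finset.univ (fun j => y j ^ (if j = i then r else r-1))
            (Finset.mem_univ i), herase, if_pos rfl, ← mul_assoc, ← pow_succ']
      have hre : r - 1 + 1 = r := by omega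
      rw [hre]
    have : (∫ y in Sset m, y i * w y)
        = J m (fun j => if j = i then r else r - 1) (r-1) := by
      rw [J]
      congr 1
      funext y
      exact hpt y
    rw [this, J_eq]
    have h1 : (∏ j : Fin m, (((if j = i then r else r-1).factorial : ℝ)))
        = (r:ℝ) * ((r-1).factorial : ℝ)^m := by
      have he : ∀ j : Fin m, (((if j = i then r else r-1).factorial : ℝ))
          = ((r-1).factorial : ℝ) * (if j = i then (r:ℝ) else 1) := by
        intro j
        split
        · have h5 : r.factorial = r * (r-1).factorial := by
            cases r with
            | zero => omega
            | succ r' => rw [Nat.succ_sub_one, Nat.factorial_succ]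
          rw [h5]
          push_cast
          ring
        · ring
      rw [Finset.prod_congr rfl fun j _ => he j, Finset.prod_mul_distrib]
      rw [Finset.prod_const, Finset.prod_ite_eq' Finset.univ i (fun _ => (r:ℝ))]
      simp [mul_comm]
    have h2 : (∑ j : Fin m, (if j = i then r else r-1)) = m * (r-1) + 1 := by
      have he : ∀ j : Fin m, (if j = i then r else r-1) = (r-1) + (if j = i then 1 else 0) := by
        intro j; split <;> omega
      rw [Finset.sum_congr rfl fun j _ => he j, Finset.sum_add_distrib]
      rw [Finset.sum_ite_eq' Finset.univ i (fun _ => 1)]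
      simp [mul_comm]
    rw [h1, h2]
    have h3 : m + (r-1) + (m * (r-1) + 1) = K := by
      rw [hK]
      cases r with
      | zero => omega
      | succ r' =>
        simp only [Nat.add_sub_cancel]
        ring
    rw [h3, hM, hQ, pow_succ]
    ring
  -- value of ∫ (1 - ∑) * w
  have hMlast : (∫ y in Sset m, (1 - ∑ i, y i) * w y) = M := by
    have hpt : ∀ y : Fin m → ℝ, (1 - ∑ i, y i) * w y
        = (∏ j, y j ^ (r-1)) * (1 - ∑ j, y j)^((r-1)+1) := by
      intro y
      rw [hw]
      simp only []
      rw [pow_succ]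
      ring
    have : (∫ y in Sset m, (1 - ∑ i, y i) * w y) = J m (fun _ => r - 1) ((r-1)+1) := by
      rw [J]
      congr 1
      funext y
      exact hpt y
    rw [this, J_eq]
    have h1 : (∏ _i : Fin m, (((r-1).factorial : ℝ))) = ((r-1).factorial : ℝ)^m := by simp
    have h2 : (∑ _i : Fin m, (r-1)) = m * (r-1) := by simp [mul_comm]
    rw [h1, h2]
    have h3 : m + ((r-1)+1) + m * (r-1) = K := by
      rw [hK]
      cases r with
      | zero => omega
      | succ r' =>
        simp only [Nat.add_sub_cancel]
        ring
    have h4 : (((r-1)+1).factorial : ℝ) = (r : ℝ) * ((r-1).factorial : ℝ) := by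
      rw [Nat.factorial_succ]
      have : (r - 1 + 1) = r := by omega
      rw [this]
      push_cast
      ring
    rw [h3, h4, hM, hQ, pow_succ]
    ring
  -- mean value
  have hF1 : (∫ y in Sset m, φ y * w y) = H * M := by
    have hpt : ∀ y : Fin m → ℝ, φ y * w y
        = (∑ i : Fin m, (1/((i:ℕ)+1:ℝ)) * (y i * w y)) + (1/((m:ℝ)+1)) * ((1 - ∑ i, y i) * w y) := by
      intro y
      rw [hφ]
      simp only []
      rw [add_mul, Finset.sum_mul,
        Finset.sum_congr rfl fun (i : Fin m) _ =>
          (by ring : y i / ((i:ℕ)+1:ℝ) * w y = 1/((i:ℕ)+1:ℝ) * (y i * w y))]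
      ring
    have hint1 : ∀ i : Fin m, IntegrableOn (fun y : Fin m → ℝ => (1/((i:ℕ)+1:ℝ)) * (y i * w y))
        (Sset m) := fun i =>
      integrableOn_Sset (continuous_const.mul ((continuous_apply i).mul hwcont))
    have hint2 : IntegrableOn (fun y : Fin m → ℝ => (1/((m:ℝ)+1)) * ((1 - ∑ i, y i) * w y))
        (Sset m) :=
      integrableOn_Sset (continuous_const.mul ((continuous_const.sub hsumcont).mul hwcont))
    calc (∫ y in Sset m, φ y * w y)
        = ∫ y in Sset m, ((∑ i : Fin m, (1/((i:ℕ)+1:ℝ)) * (y i * w y))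
            + (1/((m:ℝ)+1)) * ((1 - ∑ i, y i) * w y)) := by
          congr 1; funext y; exact hpt y
      _ = (∑ i : Fin m, ∫ y in Sset m, (1/((i:ℕ)+1:ℝ)) * (y i * w y))
            + ∫ y in Sset m, (1/((m:ℝ)+1)) * ((1 - ∑ i, y i) * w y) := by
          rw [integral_add (integrable_finset_sum _ fun i _ => hint1 i) hint2,
            integral_finset_sum _ fun i _ => hint1 i]
      _ = (∑ i : Fin m, (1/((i:ℕ)+1:ℝ)) * M) + (1/((m:ℝ)+1)) * M := by
          congr 1
          · exact Finset.sum_congr rfl fun i _ => by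
              rw [MeasureTheory.integral_const_mul, hMi i]
          · rw [MeasureTheory.integral_const_mul, hMlast]
      _ = H * M := by
          rw [hH, Finset.sum_range_succ, add_mul, Finset.sum_mul,
            ← Fin.sum_univ_eq_sum_range (fun s => 1/((s:ℝ)+1) * M) m]
  -- nonnegativity on the set
  have hφ0 : ∀ y ∈ Sset m, 0 ≤ φ y := by
    intro y hy
    rw [hφ]
    have h1 : (0:ℝ) ≤ ∑ i, y i / ((i:ℕ)+1) :=
      Finset.sum_nonneg fun i _ => div_nonneg (hy.1 i) (by positivity)
    have h2 : (0:ℝ) ≤ (1 - ∑ i, y i)/((m:ℝ)+1) :=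
      div_nonneg (by have := hy.2; linarith) (by positivity)
    exact add_nonneg h1 h2
  have hw0 : ∀ y ∈ Sset m, 0 ≤ w y := by
    intro y hy
    rw [hw]
    have h1 : (0:ℝ) ≤ ∏ i, y i ^ (r-1) :=
      Finset.prod_nonneg fun i _ => pow_nonneg (hy.1 i) _
    have h2 : (0:ℝ) ≤ (1 - ∑ i, y i)^(r-1) := pow_nonneg (by have := hy.2; linarith) _
    exact mul_nonneg h1 h2
  have hH0 : 0 ≤ H := Finset.sum_nonneg fun s _ => by positivity
  have hA0 : 0 ≤ A := div_nonneg hH0 (by positivity)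
  have hApow : A^(n-1) * A = A^n := by
    rw [← pow_succ]
    congr 1
    omega
  -- tangent line bound
  have hmono : (∫ y in Sset m, ((A^n - n*A^n) * w y + ((n:ℝ)*A^(n-1)) * (φ y * w y)))
      ≤ ∫ y in Sset m, (φ y)^n * w y := by
    refine setIntegral_mono_on ?_ ?_ (measurableSet_Sset m) ?_
    · exact integrableOn_Sset ((continuous_const.mul hwcont).add
        (continuous_const.mul (hφcont.mul hwcont)))
    · exact integrableOn_Sset ((hφcont.pow n).mul hwcont)
    · intro y hy
      have ht := tangent_pow n (hφ0 y hy) hA0 hn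
      have hmul := mul_le_mul_of_nonneg_right ht (hw0 y hy)
      calc (A^n - n*A^n) * w y + ((n:ℝ)*A^(n-1)) * (φ y * w y)
          = (A^n + n * A^(n-1) * (φ y - A)) * w y := by
            linear_combination ((n:ℝ) * w y) * hApow
        _ ≤ (φ y)^n * w y := hmul
  -- compute LHS of hmono
  have hLHS : (∫ y in Sset m, ((A^n - n*A^n) * w y + ((n:ℝ)*A^(n-1)) * (φ y * w y)))
      = (A^n - n*A^n) * (Q / ((K-1).factorial : ℝ)) + ((n:ℝ)*A^(n-1)) * (H * M) := by
    rw [integral_add (integrableOn_Sset (g := fun y => (A^n - n*A^n) * w y) (continuous_const.mul hwcont))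
        (integrableOn_Sset (g := fun y => ((n:ℝ)*A^(n-1)) * (φ y * w y)) (continuous_const.mul (hφcont.mul hwcont))),
      MeasureTheory.integral_const_mul, MeasureTheory.integral_const_mul, hWval, hF1]
  -- key numeric identities
  have hKfact : (K.factorial : ℝ) = (K : ℝ) * ((K-1).factorial : ℝ) := by
    have : K = (K - 1) + 1 := by omega
    rw [this, Nat.factorial_succ]
    push_cast
    ring
  have hKfacpos : (0:ℝ) < ((K-1).factorial : ℝ) := by positivity
  have hKpos : (0:ℝ) < (K:ℝ) := by positivity
  have hCW : C * (Q / ((K-1).factorial : ℝ)) = 1 := by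
    rw [hC]
    field_simp
  have hCM : C * (H * M) = A := by
    rw [hC, hM, hA, hKfact, hK]
    have hrpos : (0:ℝ) < (r:ℝ) := by positivity
    have hmpos : (0:ℝ) < (m:ℝ)+1 := by positivity
    field_simp
    push_cast
    ring
  -- final chain
  have hfinal : A^n ≤ nuIntegral (m+1) r (fun x => (∑ s, x s / ((s : ℕ) + 1)) ^ n) := by
    rw [hnu]
    have hpull : (∫ y in Sset m, (φ y)^n * (C * w y)) = C * ∫ y in Sset m, (φ y)^n * w y := by
      rw [← MeasureTheory.integral_const_mul]
      congr 1
      funext y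
      ring
    rw [hpull]
    have := mul_le_mul_of_nonneg_left (hLHS ▸ hmono) hCpos.le
    calc A^n = C * ((A^n - n*A^n) * (Q / ((K-1).factorial : ℝ)) + ((n:ℝ)*A^(n-1)) * (H * M)) := by
          have expand : C * ((A^n - n*A^n) * (Q / ((K-1).factorial : ℝ))
              + ((n:ℝ)*A^(n-1)) * (H * M))
              = (A^n - n*A^n) * (C * (Q / ((K-1).factorial : ℝ)))
                + ((n:ℝ)*A^(n-1)) * (C * (H * M)) := by ring
          rw [expand, hCW, hCM]
          linear_combination (-(n:ℝ)) * hApow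
      _ ≤ C * ∫ y in Sset m, (φ y)^n * w y := this
  -- compare target with A^n
  refine le_trans ?_ hfinal
  have hprodK : ((K:ℝ))^n ≤ ∏ i ∈ Finset.range n, ((K:ℝ) + (i:ℝ)) := by
    calc ((K:ℝ))^n = ∏ _i ∈ Finset.range n, (K:ℝ) := by
          rw [Finset.prod_const, Finset.card_range]
      _ ≤ _ := by
          refine Finset.prod_le_prod (fun i _ => hKpos.le) (fun i _ => ?_)
          have : (0:ℝ) ≤ (i:ℝ) := Nat.cast_nonneg i
          linarith
  have hnum : (0:ℝ) ≤ (r:ℝ)^n * H^n := mul_nonneg (pow_nonneg (Nat.cast_nonneg r) n) (pow_nonneg hH0 n)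
  calc (r : ℝ) ^ n * H ^ n / (∏ i ∈ Finset.range n, ((K:ℝ) + (i:ℝ)))
      ≤ (r : ℝ) ^ n * H ^ n / ((K:ℝ))^n := by
        apply div_le_div_of_nonneg_left hnum (pow_pos hKpos n) hprodK
    _ = A^n := by
        rw [hA, div_pow, hK]
        have hrpos : (0:ℝ) < (r:ℝ) := by positivity
        have hmpos : (0:ℝ) < (m:ℝ)+1 := by positivity
        push_cast
        rw [mul_pow]
        field_simp
end
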